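/- arXiv:1304.6277 — 7 statements merged into one kernel-verified Lean document; each statement's English description precedes it below -/
import Mathlib

section
/- Let l > 0, ε > 0, x* ∈ ℝ with |x*| < l − 3ε, p* ∈ ℝ, ħ > 0, and let ψ_β be the truncated-Gaussian state with normalization constant B_β > 0. Then, as β → 0⁺, B_β = 1 + O(e^{−(l−|x*|−3ε)²/(2β²)}). -/
open Real MeasureTheory Filter Asymptotics Topology

lemma aux_exp_Ioi {b : ℝ} (hb : 0 < b) (m : ℝ) :
    ∫ x in Set.Ioi m, Real.exp (-(b * x)) = b⁻¹ * Real.exp (-(b * m)) := by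
  have h := MeasureTheory.integral_comp_mul_left_Ioi (fun u => Real.exp (-u)) m hb
  simpa [integral_exp_neg_Ioi, integral_exp_Iic, smul_eq_mul] using h

lemma aux_tail {β δ c m : ℝ} (hβ : 0 < β) (hδ : 0 < δ) (hm : c + δ ≤ m) :
    ∫ x in Set.Ioi m, Real.exp (-(x - c) ^ 2 / (2 * β ^ 2)) ≤
      (β ^ 2 / δ) * Real.exp (-δ ^ 2 / (2 * β ^ 2)) := by
  have hβ2 : (0:ℝ) < β ^ 2 := by positivity
  have h2β : (0:ℝ) < 2 * β ^ 2 := by positivity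
  have hb : 0 < δ / β ^ 2 := by positivity
  set K : ℝ := Real.exp (-δ ^ 2 / (2 * β ^ 2) + δ * (c + δ) / β ^ 2) with hK
  have hpt : ∀ x ∈ Set.Ioi m,
      Real.exp (-(x - c) ^ 2 / (2 * β ^ 2)) ≤ K * Real.exp (-(δ / β ^ 2 * x)) := by
    intro x _
    rw [hK, ← Real.exp_add]
    apply Real.exp_le_exp.2
    have hkey : (-δ ^ 2 / (2 * β ^ 2) + δ * (c + δ) / β ^ 2 + -(δ / β ^ 2 * x))
        - (-(x - c) ^ 2 / (2 * β ^ 2)) = (x - c - δ) ^ 2 / (2 * β ^ 2) := by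
      field_simp
      ring
    have h2 : 0 ≤ (x - c - δ) ^ 2 / (2 * β ^ 2) := by positivity
    linarith [hkey]
  have hint : IntegrableOn (fun x => K * Real.exp (-(δ / β ^ 2 * x))) (Set.Ioi m) := by
    have h := (exp_neg_integrableOn_Ioi m hb).const_mul K
    simpa [neg_mul, IntegrableOn] using h
  have hcmp : ∫ x in Set.Ioi m, Real.exp (-(x - c) ^ 2 / (2 * β ^ 2)) ≤
      ∫ x in Set.Ioi m, K * Real.exp (-(δ / β ^ 2 * x)) := by
    refine integral_mono_of_nonneg (ae_of_all _ fun x => (Real.exp_pos _).le) hint ?_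
    exact (ae_restrict_iff' measurableSet_Ioi).mpr (ae_of_all _ hpt)
  have hval : ∫ x in Set.Ioi m, K * Real.exp (-(δ / β ^ 2 * x))
      = K * ((δ / β ^ 2)⁻¹ * Real.exp (-(δ / β ^ 2 * m))) := by
    rw [MeasureTheory.integral_const_mul, aux_exp_Ioi hb]
  have hfin : K * Real.exp (-(δ / β ^ 2 * m)) ≤ Real.exp (-δ ^ 2 / (2 * β ^ 2)) := by
    rw [hK, ← Real.exp_add]
    apply Real.exp_le_exp.2
    have h1 : δ * (c + δ) / β ^ 2 + -(δ / β ^ 2 * m) = δ * ((c + δ) - m) / β ^ 2 := by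
      ring
    have h2 : δ * ((c + δ) - m) ≤ 0 :=
      mul_nonpos_of_nonneg_of_nonpos hδ.le (by linarith)
    have h3 : δ * ((c + δ) - m) / β ^ 2 ≤ 0 := div_nonpos_of_nonpos_of_nonneg h2 hβ2.le
    linarith
  have hKpos : 0 < K := Real.exp_pos _
  calc ∫ x in Set.Ioi m, Real.exp (-(x - c) ^ 2 / (2 * β ^ 2))
      ≤ K * ((δ / β ^ 2)⁻¹ * Real.exp (-(δ / β ^ 2 * m))) := hcmp.trans_eq hval
    _ = (β ^ 2 / δ) * (K * Real.exp (-(δ / β ^ 2 * m))) := by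
        rw [inv_div]
        ring
    _ ≤ (β ^ 2 / δ) * Real.exp (-δ ^ 2 / (2 * β ^ 2)) := by
        apply mul_le_mul_of_nonneg_left hfin (by positivity)

set_option maxHeartbeats 2000000 in
/-- Normalization constant of the truncated-Gaussian state:
`B_β = 1 + O(exp(-(l-|x*|-3ε)²/(2β²)))` as `β → 0⁺`. -/
theorem truncated_gaussian_normalization
    (l ε xs ps hbar : ℝ) (hl : 0 < l) (hε : 0 < ε)
    (hxs : |xs| < l - 3 * ε) (hhbar : 0 < hbar)
    (C : ℝ) (hC : 0 < C) (ω : ℝ → ℝ)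
    (hω : ω = fun x => if |x| < ε then C * Real.exp (-ε / (ε - |x|)) else 0)
    (hωint : ∫ x : ℝ, ω x = 1)
    (η : ℝ → ℝ)
    (hη : η = fun x => ∫ y in Set.Icc (-l + 2 * ε) (l - 2 * ε), ω (x - y))
    (B : ℝ → ℝ) (hB : ∀ β : ℝ, 0 < β → 0 < B β)
    (ψ : ℝ → ℝ → ℂ)
    (hψ : ∀ β : ℝ, 0 < β → ψ β = fun x : ℝ =>
      (B β : ℂ) * (((2 * π * β ^ 2) ^ (-(1/4 : ℝ)) : ℝ) : ℂ) *
        Complex.exp (-(((x - xs) ^ 2 / (4 * β ^ 2) : ℝ) : ℂ) +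
          Complex.I * (x : ℂ) * (ps : ℂ) / (hbar : ℂ)) * ((η x : ℝ) : ℂ))
    (hnorm : ∀ β : ℝ, 0 < β → ∫ x in Set.Icc (-l) l, ‖ψ β x‖ ^ 2 = 1) :
    (fun β : ℝ => B β - 1) =O[𝓝[>] (0:ℝ)]
      (fun β : ℝ => Real.exp (-(l - |xs| - 3 * ε) ^ 2 / (2 * β ^ 2))) := by
  set δ : ℝ := l - |xs| - 3 * ε with hδdef
  have hδ : 0 < δ := by
    have := abs_nonneg xs
    simp only [hδdef]
    linarith
  set m : ℝ := l - 3 * ε with hmdef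
  have hm0 : 0 < m := lt_of_le_of_lt (abs_nonneg xs) hxs
  have hml : m ≤ l := by simp only [hmdef]; linarith
  -- facts about ω
  have hωmeas : Measurable ω := by
    rw [hω]
    refine Measurable.ite (measurableSet_lt (measurable_abs) measurable_const) ?_ measurable_const
    exact measurable_const.mul
      (Real.measurable_exp.comp (Measurable.div measurable_const
        (measurable_const.sub measurable_abs)))
  have hω0 : ∀ x, 0 ≤ ω x := by
    intro x
    rw [hω]
    dsimp only
    split
    · positivity
    · exact le_refl 0
  have hωz : ∀ x, ε ≤ |x| → ω x = 0 := by
    intro x hx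
    rw [hω]
    dsimp only
    rw [if_neg (not_lt.2 hx)]
  have hωle : ∀ x, ω x ≤ C := by
    intro x
    rw [hω]
    dsimp only
    split
    · rename_i h
      have h1 : -ε / (ε - |x|) ≤ 0 :=
        div_nonpos_of_nonpos_of_nonneg (by linarith) (by linarith)
      have := Real.exp_le_one_iff.2 h1
      nlinarith
    · exact hC.le
  have hωInt : Integrable ω := by
    have hind : Integrable (Set.indicator (Set.Icc (-ε) ε) fun _ => C) :=
      (integrable_indicator_iff measurableSet_Icc).2
        (integrableOn_const measure_Icc_lt_top.ne)
    refine MeasureTheory.Integrable.mono' hind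
      hωmeas.aestronglyMeasurable (ae_of_all _ fun x => ?_)
    rw [Real.norm_eq_abs, abs_of_nonneg (hω0 x)]
    by_cases h : |x| < ε
    · have hx : x ∈ Set.Icc (-ε) ε := by
        rcases abs_le.1 h.le with ⟨h1, h2⟩
        exact ⟨h1, h2⟩
      rw [Set.indicator_of_mem hx]
      exact hωle x
    · rw [hωz x (not_lt.1 h)]
      exact Set.indicator_nonneg (fun _ _ => hC.le) x
  -- facts about η
  have hη0 : ∀ x, 0 ≤ η x := by
    intro x
    rw [hη]
    exact setIntegral_nonneg measurableSet_Icc (fun y _ => hω0 _)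
  have hη1 : ∀ x, η x ≤ 1 := by
    intro x
    rw [hη]
    dsimp only
    calc ∫ y in Set.Icc (-l + 2 * ε) (l - 2 * ε), ω (x - y)
        ≤ ∫ y, ω (x - y) :=
          setIntegral_le_integral (hωInt.comp_sub_left x) (ae_of_all _ fun y => hω0 _)
      _ = 1 := by rw [integral_sub_left_eq_self ω volume x]; exact hωint
  have hηcore : ∀ x, |x| ≤ m → η x = 1 := by
    intro x hx
    rcases abs_le.1 hx with ⟨hx1, hx2⟩
    rw [hη]
    dsimp only
    rw [MeasureTheory.setIntegral_eq_integral_of_forall_compl_eq_zero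
      (fun y hy => ?_), integral_sub_left_eq_self ω volume x]
    · exact hωint
    · apply hωz
      have hy' : y < -l + 2 * ε ∨ l - 2 * ε < y := by
        by_contra hcon
        push_neg at hcon
        exact hy (Set.mem_Icc.2 ⟨hcon.1, hcon.2⟩)
      rcases hy' with h | h
      · have : ε ≤ x - y := by simp only [hmdef] at hx1; linarith
        exact this.trans (le_abs_self _)
      · have : ε ≤ -(x - y) := by simp only [hmdef] at hx2; linarith
        exact this.trans (neg_le_abs _)
  have hηmeas : Measurable η := by
    have h : StronglyMeasurable fun x : ℝ =>
        ∫ y in Set.Icc (-l + 2 * ε) (l - 2 * ε), ω (x - y) := by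
      apply MeasureTheory.StronglyMeasurable.integral_prod_right'
        (f := fun p : ℝ × ℝ => ω (p.1 - p.2))
      exact (hωmeas.comp (measurable_fst.sub measurable_snd)).stronglyMeasurable
    rw [hη]
    exact h.measurable
  -- key bound
  set r : ℝ := min 1 (δ / 8) with hrdef
  have hr : 0 < r := lt_min one_pos (by positivity)
  have key : ∀ β : ℝ, 0 < β → β ≤ r →
      |B β - 1| ≤ (4 / δ) * Real.exp (-δ ^ 2 / (2 * β ^ 2)) := by
    intro β hβ hβr
    have hβ1 : β ≤ 1 := hβr.trans (min_le_left _ _)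
    have hβδ : β ≤ δ / 8 := hβr.trans (min_le_right _ _)
    have hβ2 : (0:ℝ) < β ^ 2 := by positivity
    have h2πβ : (0:ℝ) < 2 * π * β ^ 2 := by positivity
    set c2 : ℝ := (2 * π * β ^ 2) ^ (-(1/2 : ℝ)) with hc2def
    have hc2 : 0 < c2 := Real.rpow_pos_of_pos h2πβ _
    set G : ℝ → ℝ := fun x => Real.exp (-(x - xs) ^ 2 / (2 * β ^ 2)) with hGdef
    have hGpos : ∀ x, 0 < G x := fun x => Real.exp_pos _
    have hGint : Integrable G := by
      have h := (integrable_exp_neg_mul_sq (b := (2 * β ^ 2)⁻¹) (by positivity)).comp_sub_right xs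
      refine h.congr (ae_of_all _ fun x => ?_)
      simp only [hGdef]
      congr 1
      ring
    have hGval : ∫ x, G x = Real.sqrt (2 * π * β ^ 2) := by
      have h1 : ∀ x : ℝ, G x = (fun t => Real.exp (-(2 * β ^ 2)⁻¹ * t ^ 2)) (x - xs) := by
        intro x
        simp only [hGdef]
        congr 1
        ring
      calc ∫ x, G x = ∫ x, (fun t => Real.exp (-(2 * β ^ 2)⁻¹ * t ^ 2)) (x - xs) := by
            simp only [h1]
        _ = ∫ t, Real.exp (-(2 * β ^ 2)⁻¹ * t ^ 2) :=
            integral_sub_right_eq_self (fun t => Real.exp (-(2 * β ^ 2)⁻¹ * t ^ 2)) xs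
        _ = Real.sqrt (π / (2 * β ^ 2)⁻¹) := integral_gaussian _
        _ = Real.sqrt (2 * π * β ^ 2) := by
            congr 1
            field_simp
    have hc2G : c2 * Real.sqrt (2 * π * β ^ 2) = 1 := by
      rw [hc2def, Real.sqrt_eq_rpow, ← Real.rpow_add h2πβ]
      norm_num
    -- pointwise norm
    have hψnorm : ∀ x, ‖ψ β x‖ ^ 2 = (B β) ^ 2 * (c2 * G x * (η x) ^ 2) := by
      intro x
      rw [hψ β hβ]
      dsimp only
      have hw : (-(((x - xs) ^ 2 / (4 * β ^ 2) : ℝ) : ℂ) +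
          Complex.I * (x : ℂ) * (ps : ℂ) / (hbar : ℂ))
          = ((-((x - xs) ^ 2 / (4 * β ^ 2)) : ℝ) : ℂ) +
            ((x * ps / hbar : ℝ) : ℂ) * Complex.I := by
        push_cast
        ring
      have hre : (-(((x - xs) ^ 2 / (4 * β ^ 2) : ℝ) : ℂ) +
          Complex.I * (x : ℂ) * (ps : ℂ) / (hbar : ℂ)).re
          = -((x - xs) ^ 2 / (4 * β ^ 2)) := by
        rw [hw]
        simp only [Complex.add_re, Complex.ofReal_re, Complex.re_ofReal_mul,
          Complex.I_re, mul_zero, add_zero]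
      have hc4 : (0:ℝ) < (2 * π * β ^ 2) ^ (-(1/4 : ℝ)) := Real.rpow_pos_of_pos h2πβ _
      rw [norm_mul, norm_mul, norm_mul, Complex.norm_real, Complex.norm_real,
        Complex.norm_real, Complex.norm_exp, hre,
        Real.norm_eq_abs, Real.norm_eq_abs, Real.norm_eq_abs,
        abs_of_pos (hB β hβ), abs_of_pos hc4, abs_of_nonneg (hη0 x)]
      have hexp2 : Real.exp (-((x - xs) ^ 2 / (4 * β ^ 2))) ^ 2 = G x := by
        rw [← Real.exp_nat_mul]
        simp only [hGdef]
        congr 1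
        field_simp
        ring
      have hc42 : ((2 * π * β ^ 2) ^ (-(1/4 : ℝ))) ^ 2 = c2 := by
        rw [hc2def, ← Real.rpow_natCast ((2 * π * β ^ 2) ^ (-(1/4 : ℝ))) 2,
          ← Real.rpow_mul h2πβ.le]
        norm_num
      calc (B β * (2 * π * β ^ 2) ^ (-(1/4 : ℝ)) *
            Real.exp (-((x - xs) ^ 2 / (4 * β ^ 2))) * η x) ^ 2
          = (B β) ^ 2 * (((2 * π * β ^ 2) ^ (-(1/4 : ℝ))) ^ 2 *
            Real.exp (-((x - xs) ^ 2 / (4 * β ^ 2))) ^ 2 * (η x) ^ 2) := by ring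
        _ = (B β) ^ 2 * (c2 * G x * (η x) ^ 2) := by rw [hexp2, hc42]
    -- the reduced integral J
    set J : ℝ := ∫ x in Set.Icc (-l) l, c2 * G x * (η x) ^ 2 with hJdef
    have hBJ : (B β) ^ 2 * J = 1 := by
      calc (B β) ^ 2 * J = ∫ x in Set.Icc (-l) l, (B β) ^ 2 * (c2 * G x * (η x) ^ 2) := by
            rw [hJdef, MeasureTheory.integral_const_mul]
        _ = ∫ x in Set.Icc (-l) l, ‖ψ β x‖ ^ 2 :=
            setIntegral_congr_fun measurableSet_Icc (fun x _ => (hψnorm x).symm)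
        _ = 1 := hnorm β hβ
    have hGmeas : Measurable G := by
      simp only [hGdef]
      exact Real.measurable_exp.comp
        ((((measurable_id.sub measurable_const).pow_const 2).neg).div_const _)
    have hfmeas : Measurable fun x => c2 * G x * (η x) ^ 2 :=
      (measurable_const.mul hGmeas).mul (hηmeas.pow_const 2)
    have hfnonneg : ∀ x, 0 ≤ c2 * G x * (η x) ^ 2 := fun x =>
      mul_nonneg (mul_nonneg hc2.le (hGpos x).le) (sq_nonneg _)
    have hfleG : ∀ x, c2 * G x * (η x) ^ 2 ≤ c2 * G x := by
      intro x
      have hsq : (η x) ^ 2 ≤ 1 := pow_le_one₀ (hη0 x) (hη1 x)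
      exact mul_le_of_le_one_right (mul_nonneg hc2.le (hGpos x).le) hsq
    have hc2Gint : Integrable (fun x => c2 * G x) := hGint.const_mul c2
    have hfint : Integrable (fun x => c2 * G x * (η x) ^ 2) := by
      refine hc2Gint.mono' hfmeas.aestronglyMeasurable (ae_of_all _ fun x => ?_)
      rw [Real.norm_eq_abs, abs_of_nonneg (hfnonneg x)]
      exact hfleG x
    have hintc2G : ∫ x, c2 * G x = 1 := by
      rw [MeasureTheory.integral_const_mul, hGval, hc2G]
    have hJ1 : J ≤ 1 := by
      rw [hJdef]
      calc ∫ x in Set.Icc (-l) l, c2 * G x * (η x) ^ 2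
          ≤ ∫ x, c2 * G x * (η x) ^ 2 :=
            setIntegral_le_integral hfint (ae_of_all _ hfnonneg)
        _ ≤ ∫ x, c2 * G x :=
            integral_mono_of_nonneg (ae_of_all _ hfnonneg) hc2Gint (ae_of_all _ hfleG)
        _ = 1 := hintc2G
    -- lower bound on J
    have hcoresub : Set.Icc (-m) m ⊆ Set.Icc (-l) l :=
      Set.Icc_subset_Icc (by linarith) (by linarith)
    have hJlow : ∫ x in Set.Icc (-m) m, c2 * G x ≤ J := by
      rw [hJdef]
      have h1 : ∫ x in Set.Icc (-m) m, c2 * G x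
          = ∫ x in Set.Icc (-m) m, c2 * G x * (η x) ^ 2 := by
        refine setIntegral_congr_fun measurableSet_Icc (fun x hx => ?_)
        rw [hηcore x (abs_le.2 ⟨hx.1, hx.2⟩)]
        ring
      rw [h1]
      exact setIntegral_mono_set hfint.integrableOn (ae_of_all _ hfnonneg)
        (HasSubset.Subset.eventuallyLE hcoresub)
    have hsplit : (1:ℝ) - ∫ x in Set.Icc (-m) m, c2 * G x
        = ∫ x in (Set.Icc (-m) m)ᶜ, c2 * G x := by
      have h := integral_add_compl (measurableSet_Icc : MeasurableSet (Set.Icc (-m) m)) hc2Gint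
      rw [hintc2G] at h
      linarith
    have hcompl : (Set.Icc (-m) m)ᶜ = Set.Iio (-m) ∪ Set.Ioi m := by
      ext x
      simp only [Set.mem_compl_iff, Set.mem_Icc, Set.mem_union, Set.mem_Iio, Set.mem_Ioi,
        not_and_or, not_le]
    have htail1 : ∫ x in Set.Ioi m, G x ≤ (β ^ 2 / δ) * Real.exp (-δ ^ 2 / (2 * β ^ 2)) := by
      simp only [hGdef]
      exact aux_tail hβ hδ (by
        have := le_abs_self xs
        simp only [hδdef, hmdef]
        linarith)
    have htail2 : ∫ x in Set.Iio (-m), G x ≤ (β ^ 2 / δ) * Real.exp (-δ ^ 2 / (2 * β ^ 2)) := by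
      calc ∫ x in Set.Iio (-m), G x
          = ∫ x in Set.Iic (-m), G x := setIntegral_congr_set Iio_ae_eq_Iic
        _ = ∫ x in Set.Ioi m, G (-x) := (integral_comp_neg_Ioi m G).symm
        _ = ∫ x in Set.Ioi m, Real.exp (-(x - (-xs)) ^ 2 / (2 * β ^ 2)) := by
            refine setIntegral_congr_fun measurableSet_Ioi (fun x _ => ?_)
            simp only [hGdef]
            congr 1
            ring
        _ ≤ (β ^ 2 / δ) * Real.exp (-δ ^ 2 / (2 * β ^ 2)) := by
            exact aux_tail hβ hδ (by
              have := neg_abs_le xs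
              simp only [hδdef, hmdef]
              linarith)
    have hunion : ∫ x in (Set.Icc (-m) m)ᶜ, c2 * G x
        = (∫ x in Set.Iio (-m), c2 * G x) + ∫ x in Set.Ioi m, c2 * G x := by
      rw [hcompl]
      refine setIntegral_union ?_ measurableSet_Ioi hc2Gint.integrableOn hc2Gint.integrableOn
      exact Set.disjoint_left.2 fun x hx hx' => by
        simp only [Set.mem_Iio] at hx
        simp only [Set.mem_Ioi] at hx'
        linarith
    set E : ℝ := Real.exp (-δ ^ 2 / (2 * β ^ 2)) with hEdef
    have hEpos : 0 < E := Real.exp_pos _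
    have hE1 : E ≤ 1 := Real.exp_le_one_iff.2
      (div_nonpos_of_nonpos_of_nonneg (neg_nonpos.2 (sq_nonneg δ)) (by positivity))
    have hc2β : c2 * β ^ 2 ≤ β := by
      have h1 : Real.sqrt (β ^ 2) ≤ Real.sqrt (2 * π * β ^ 2) :=
        Real.sqrt_le_sqrt (by nlinarith [Real.pi_gt_three])
      have h2 : β ≤ Real.sqrt (2 * π * β ^ 2) := by
        rwa [Real.sqrt_sq hβ.le] at h1
      have hspos : 0 < Real.sqrt (2 * π * β ^ 2) := lt_of_lt_of_le hβ h2
      have h3 : c2 = (Real.sqrt (2 * π * β ^ 2))⁻¹ := by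
        rw [hc2def, Real.sqrt_eq_rpow, ← Real.rpow_neg h2πβ.le]
      rw [h3]
      rw [inv_mul_le_iff₀ hspos]
      nlinarith
    have h1J : 1 - J ≤ 2 * β / δ * E := by
      have hstep1 : 1 - J ≤ ∫ x in (Set.Icc (-m) m)ᶜ, c2 * G x := by
        rw [← hsplit]
        linarith [hJlow]
      have hstep2 : ∫ x in (Set.Icc (-m) m)ᶜ, c2 * G x
          ≤ c2 * ((β ^ 2 / δ) * E) + c2 * ((β ^ 2 / δ) * E) := by
        rw [hunion]
        refine add_le_add ?_ ?_
        · rw [MeasureTheory.integral_const_mul]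
          exact mul_le_mul_of_nonneg_left htail2 hc2.le
        · rw [MeasureTheory.integral_const_mul]
          exact mul_le_mul_of_nonneg_left htail1 hc2.le
      have hstep3 : c2 * ((β ^ 2 / δ) * E) + c2 * ((β ^ 2 / δ) * E)
          = 2 * (c2 * β ^ 2) * (E / δ) := by ring
      have hstep4 : 2 * (c2 * β ^ 2) * (E / δ) ≤ 2 * β * (E / δ) := by
        apply mul_le_mul_of_nonneg_right (by linarith) (by positivity)
      have hstep5 : 2 * β * (E / δ) = 2 * β / δ * E := by ring
      linarith
    have hJhalf : (1:ℝ)/2 ≤ J := by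
      have h1 : 2 * β / δ * E ≤ 2 * β / δ :=
        mul_le_of_le_one_right (by positivity) hE1
      have h2 : 2 * β / δ ≤ 1/4 := by
        rw [div_le_iff₀ hδ]
        nlinarith
      linarith
    have hJpos : 0 < J := by linarith
    have hBpos := hB β hβ
    have hB2 : (B β) ^ 2 = 1 / J := by
      rw [eq_div_iff hJpos.ne']
      linarith [hBJ]
    have hB2ge : 1 ≤ (B β) ^ 2 := by
      rw [hB2, le_div_iff₀ hJpos]
      linarith
    have hB1 : 1 ≤ B β := by nlinarith
    have hfinal : B β - 1 ≤ 2 * (1 - J) := by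
      have h1 : B β - 1 ≤ (B β) ^ 2 - 1 := by nlinarith
      have h2 : (B β) ^ 2 - 1 = (1 - J) / J := by
        rw [hB2]
        field_simp
      have h3 : (1 - J) / J ≤ 2 * (1 - J) := by
        rw [div_le_iff₀ hJpos]
        nlinarith
      linarith
    rw [abs_of_nonneg (by linarith : (0:ℝ) ≤ B β - 1)]
    have hlast : 2 * (2 * β / δ * E) ≤ 4 / δ * E := by
      have h1 : 2 * (2 * β / δ * E) = 4 * β / δ * E := by ring
      rw [h1]
      gcongr
      linarith
    calc B β - 1 ≤ 2 * (1 - J) := hfinal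
      _ ≤ 2 * (2 * β / δ * E) := by linarith
      _ ≤ 4 / δ * E := hlast
  -- conclude the big-O statement
  rw [Asymptotics.isBigO_iff]
  refine ⟨4 / δ, ?_⟩
  filter_upwards [Ioc_mem_nhdsGT hr] with β hβ
  have h := key β hβ.1 hβ.2
  rw [Real.norm_eq_abs, Real.norm_eq_abs, abs_of_pos (Real.exp_pos _)]
  exact h
end

section
/- Let l > 0, ε > 0, x* ∈ ℝ with |x*| < l − 3ε, p* ∈ ℝ, ħ > 0, and let ψ_β be the truncated-Gaussian state. Then the mean momentum satisfies p̄_β = p* exactly for every β > 0, and the mean position satisfies x̄_β = x* + O(β·e^{−(l−|x*|−3ε)²/(2β²)}) as β → 0⁺. -/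
open Real MeasureTheory Filter Asymptotics Topology

section aux
variable {l ε C : ℝ} {ω η : ℝ → ℝ}

lemma bump_g_cont (ε : ℝ) (hε : 0 < ε) :
    Continuous (fun t : ℝ => if 0 < t then Real.exp (-ε / t) else 0) := by
  set g : ℝ → ℝ := fun t => if 0 < t then Real.exp (-ε / t) else 0 with hgdef
  have hbound : ∀ t : ℝ, 0 ≤ g t ∧ g t ≤ |t| / ε := by
    intro t
    by_cases ht : 0 < t
    · refine ⟨by simp [hgdef, ht, (Real.exp_pos _).le], ?_⟩
      simp only [hgdef, if_pos ht]
      have h1 : ε / t ≤ Real.exp (ε / t) := by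
        linarith [Real.add_one_le_exp (ε / t)]
      have h2 : (0:ℝ) < ε / t := div_pos hε ht
      rw [neg_div, Real.exp_neg]
      calc (Real.exp (ε / t))⁻¹ ≤ (ε / t)⁻¹ := inv_anti₀ h2 h1
        _ = t / ε := by rw [inv_div]
        _ ≤ |t| / ε := by gcongr; exact le_abs_self t
    · exact ⟨by simp [hgdef, ht], by simp [hgdef, ht]; positivity⟩
  rw [continuous_iff_continuousAt]
  intro t
  rcases lt_trichotomy t 0 with ht | rfl | ht
  · have : g =ᶠ[𝓝 t] fun _ => 0 := by
      filter_upwards [Iio_mem_nhds ht] with s hs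
      have : ¬ (0 < s) := not_lt.mpr (le_of_lt (Set.mem_Iio.mp hs))
      simp [hgdef, this]
    exact ContinuousAt.congr continuousAt_const this.symm
  · have h0 : g 0 = 0 := by simp [hgdef]
    rw [ContinuousAt, h0]
    apply squeeze_zero (fun t => (hbound t).1) (fun t => (hbound t).2)
    have : Tendsto (fun t : ℝ => |t| / ε) (𝓝 0) (𝓝 (|(0:ℝ)| / ε)) := by
      exact (continuous_abs.div_const ε).tendsto 0
    simpa using this
  · have : g =ᶠ[𝓝 t] fun s => Real.exp (-ε / s) := by
      filter_upwards [Ioi_mem_nhds ht] with s hs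
      simp [hgdef, Set.mem_Ioi.mp hs]
    refine ContinuousAt.congr ?_ this.symm
    exact (Real.continuous_exp.continuousAt).comp
      ((continuousAt_const.div continuousAt_id (ne_of_gt ht)))

lemma bump_cont (ε C : ℝ) (hε : 0 < ε) :
    Continuous (fun x : ℝ => if |x| < ε then C * Real.exp (-ε / (ε - |x|)) else 0) := by
  have hg := bump_g_cont ε hε
  have heq : (fun x : ℝ => if |x| < ε then C * Real.exp (-ε / (ε - |x|)) else 0)
      = fun x : ℝ => C * (if 0 < ε - |x| then Real.exp (-ε / (ε - |x|)) else 0) := by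
    funext x
    by_cases hx : |x| < ε
    · simp [hx, sub_pos.mpr hx]
    · simp [hx, sub_pos, mul_zero]
  rw [heq]
  exact continuous_const.mul (hg.comp (continuous_const.sub continuous_abs))


lemma omega_zero (hω : ω = fun x => if |x| < ε then C * Real.exp (-ε / (ε - |x|)) else 0)
    {t : ℝ} (ht : ε ≤ |t|) : ω t = 0 := by
  rw [hω]; simp [not_lt.mpr ht]

lemma omega_nonneg (hω : ω = fun x => if |x| < ε then C * Real.exp (-ε / (ε - |x|)) else 0)
    (hC : 0 ≤ C) (t : ℝ) : 0 ≤ ω t := by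
  rw [hω]; dsimp only
  split
  · positivity
  · exact le_refl 0

lemma eta_repr (hε : 0 < ε) (hη : η = fun x => ∫ y in Set.Icc (-l + 2 * ε) (l - 2 * ε), ω (x - y))
    (hεl : 3 * ε < l) (x : ℝ) :
    η x = ∫ t in (x - (l - 2*ε))..(x + (l - 2*ε)), ω t := by
  rw [hη]
  dsimp only
  rw [show -l + 2*ε = -(l-2*ε) by ring]
  rw [MeasureTheory.integral_Icc_eq_integral_Ioc]
  rw [← intervalIntegral.integral_of_le (by linarith : -(l-2*ε) ≤ l - 2*ε)]
  rw [intervalIntegral.integral_comp_sub_left (fun t => ω t) x]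
  ring_nf

lemma omega_integrable (hε : 0 < ε) (hωc : Continuous ω)
    (hω : ω = fun x => if |x| < ε then C * Real.exp (-ε / (ε - |x|)) else 0) :
    Integrable ω := by
  apply Continuous.integrable_of_hasCompactSupport hωc
  apply HasCompactSupport.intro (isCompact_Icc (a := -ε) (b := ε))
  intro t ht
  apply omega_zero hω
  simp only [Set.mem_Icc, not_and_or, not_le] at ht
  rcases ht with h | h
  · rw [abs_of_nonpos (by linarith : t ≤ 0)]; linarith
  · exact le_of_lt (lt_of_lt_of_le h (le_abs_self t))

lemma eta_hasDeriv (hε : 0 < ε) (hωc : Continuous ω)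
    (hη : η = fun x => ∫ y in Set.Icc (-l + 2 * ε) (l - 2 * ε), ω (x - y))
    (hεl : 3 * ε < l) (x : ℝ) :
    HasDerivAt η (ω (x + (l - 2*ε)) - ω (x - (l - 2*ε))) x := by
  set a := l - 2*ε with ha
  set F : ℝ → ℝ := fun u => ∫ t in (0:ℝ)..u, ω t with hF
  have hFd : ∀ u : ℝ, HasDerivAt F (ω u) u := fun u =>
    intervalIntegral.integral_hasDerivAt_right (hωc.intervalIntegrable _ _)
      (hωc.stronglyMeasurableAtFilter _ _) hωc.continuousAt
  have heq : η = fun x => F (x + a) - F (x - a) := by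
    funext y
    rw [eta_repr hε hη hεl y, hF]
    dsimp only
    rw [← intervalIntegral.integral_interval_sub_left (hωc.intervalIntegrable _ _)
      (hωc.intervalIntegrable _ _)]
  rw [heq]
  have h1 : HasDerivAt (fun x : ℝ => F (x + a)) (ω (x + a)) x := by
    simpa [Function.comp_def] using (hFd (x + a)).comp x ((hasDerivAt_id x).add_const a)
  have h2 : HasDerivAt (fun x : ℝ => F (x - a)) (ω (x - a)) x := by
    simpa [Function.comp_def] using (hFd (x - a)).comp x ((hasDerivAt_id x).sub_const a)
  exact h1.sub h2

lemma eta_eq_one (hε : 0 < ε)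
    (hω : ω = fun x => if |x| < ε then C * Real.exp (-ε / (ε - |x|)) else 0)
    (hωint : ∫ x : ℝ, ω x = 1)
    (hη : η = fun x => ∫ y in Set.Icc (-l + 2 * ε) (l - 2 * ε), ω (x - y))
    (hεl : 3 * ε < l) {x : ℝ} (hx : |x| ≤ l - 3*ε) : η x = 1 := by
  rw [eta_repr hε hη hεl x]
  have h1 : x - (l - 2*ε) ≤ -ε := by
    have := le_abs_self x; linarith
  have h2 : ε ≤ x + (l - 2*ε) := by
    have := neg_abs_le x; linarith
  rw [intervalIntegral.integral_of_le (by linarith)]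
  rw [MeasureTheory.setIntegral_eq_integral_of_forall_compl_eq_zero, hωint]
  intro t ht
  simp only [Set.mem_Ioc, not_and_or, not_lt, not_le] at ht
  apply omega_zero hω
  rcases ht with h | h
  · rw [abs_of_nonpos (by linarith)]; linarith
  · rw [abs_of_pos (by linarith)]; linarith

lemma eta_nonneg (hε : 0 < ε)
    (hω : ω = fun x => if |x| < ε then C * Real.exp (-ε / (ε - |x|)) else 0)
    (hC : 0 ≤ C)
    (hη : η = fun x => ∫ y in Set.Icc (-l + 2 * ε) (l - 2 * ε), ω (x - y))
    (hεl : 3 * ε < l) (x : ℝ) : 0 ≤ η x := by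
  rw [eta_repr hε hη hεl x]
  apply intervalIntegral.integral_nonneg (by linarith)
  exact fun t _ => omega_nonneg hω hC t

lemma eta_le_one (hε : 0 < ε) (hωc : Continuous ω)
    (hω : ω = fun x => if |x| < ε then C * Real.exp (-ε / (ε - |x|)) else 0)
    (hC : 0 ≤ C) (hωint : ∫ x : ℝ, ω x = 1)
    (hη : η = fun x => ∫ y in Set.Icc (-l + 2 * ε) (l - 2 * ε), ω (x - y))
    (hεl : 3 * ε < l) (x : ℝ) : η x ≤ 1 := by
  rw [eta_repr hε hη hεl x, intervalIntegral.integral_of_le (by linarith), ← hωint]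
  apply MeasureTheory.setIntegral_le_integral (omega_integrable hε hωc hω)
  filter_upwards with t using omega_nonneg hω hC t

lemma eta_zero (hε : 0 < ε)
    (hω : ω = fun x => if |x| < ε then C * Real.exp (-ε / (ε - |x|)) else 0)
    (hη : η = fun x => ∫ y in Set.Icc (-l + 2 * ε) (l - 2 * ε), ω (x - y))
    (hεl : 3 * ε < l) {x : ℝ} (hx : l - ε ≤ |x|) : η x = 0 := by
  rw [eta_repr hε hη hεl x, intervalIntegral.integral_of_le (by linarith)]
  apply MeasureTheory.setIntegral_eq_zero_of_forall_eq_zero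
  intro t ht
  simp only [Set.mem_Ioc] at ht
  apply omega_zero hω
  rcases abs_cases x with ⟨hx1, _⟩ | ⟨hx1, _⟩
  · rw [abs_of_pos (by nlinarith)]; nlinarith
  · rw [abs_of_neg (by nlinarith)]; nlinarith

lemma integrand_ident (g g' ps hbar : ℝ) (hhbar : hbar ≠ 0) (P : ℂ)
    (hPP : (starRingEnd ℂ) P * P = 1) :
    (starRingEnd ℂ) (((g:ℝ):ℂ) * P) * (-Complex.I * (hbar:ℂ)) *
      (((g':ℝ):ℂ) * P + ((g:ℝ):ℂ) * (Complex.I * (ps:ℂ) / (hbar:ℂ)) * P)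
    = (-Complex.I * (hbar:ℂ)) * ((g * g' : ℝ):ℂ) + ((ps * g^2 : ℝ):ℂ) := by
  have hb : (hbar:ℂ) ≠ 0 := Complex.ofReal_ne_zero.mpr hhbar
  have key : (starRingEnd ℂ) (((g:ℝ):ℂ) * P) * (-Complex.I * (hbar:ℂ)) *
      (((g':ℝ):ℂ) * P + ((g:ℝ):ℂ) * (Complex.I * (ps:ℂ) / (hbar:ℂ)) * P)
      = ((-Complex.I * (hbar:ℂ)) * ((g * g' : ℝ):ℂ) + ((ps * g^2 : ℝ):ℂ)) *
        ((starRingEnd ℂ) P * P) := by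
    rw [map_mul, Complex.conj_ofReal]
    push_cast
    field_simp
    linear_combination (-(g:ℂ)^2*(ps:ℂ)*((starRingEnd ℂ) P * P)) * Complex.I_sq
  rw [key, hPP, mul_one]


lemma psi_form (Bβ c r ps hbar ηx x : ℝ) :
    (Bβ:ℂ) * ((c:ℝ):ℂ) * Complex.exp (-((r:ℝ):ℂ) + Complex.I * (x:ℂ) * (ps:ℂ) / (hbar:ℂ)) * ((ηx:ℝ):ℂ)
    = ((Bβ * c * Real.exp (-r) * ηx : ℝ) : ℂ) * Complex.exp (Complex.I * (x:ℂ) * (ps:ℂ) / (hbar:ℂ)) := by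
  rw [Complex.exp_add, ← Complex.ofReal_neg, ← Complex.ofReal_exp]
  push_cast
  ring

end aux

lemma part1 (l ε xs ps hbar : ℝ) (hε : 0 < ε)
    (hxs : |xs| < l - 3 * ε) (hhbar : 0 < hbar)
    (C : ℝ) (hC : 0 < C) (ω : ℝ → ℝ)
    (hω : ω = fun x => if |x| < ε then C * Real.exp (-ε / (ε - |x|)) else 0)
    (η : ℝ → ℝ)
    (hη : η = fun x => ∫ y in Set.Icc (-l + 2 * ε) (l - 2 * ε), ω (x - y))
    (B : ℝ → ℝ)
    (ψ : ℝ → ℝ → ℂ)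
    (hψ : ∀ β : ℝ, 0 < β → ψ β = fun x : ℝ =>
      (B β : ℂ) * (((2 * π * β ^ 2) ^ (-(1/4 : ℝ)) : ℝ) : ℂ) *
        Complex.exp (-(((x - xs) ^ 2 / (4 * β ^ 2) : ℝ) : ℂ) +
          Complex.I * (x : ℂ) * (ps : ℂ) / (hbar : ℂ)) * ((η x : ℝ) : ℂ))
    (hnorm : ∀ β : ℝ, 0 < β → ∫ x in Set.Icc (-l) l, ‖ψ β x‖ ^ 2 = 1)
    (β : ℝ) (hβ : 0 < β) :
    ∫ x in Set.Icc (-l) l,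
        (starRingEnd ℂ) (ψ β x) * (-Complex.I * (hbar : ℂ)) * deriv (ψ β) x = (ps : ℂ) := by
  have hεl : 3 * ε < l := by linarith [abs_nonneg xs]
  have hωc : Continuous ω := by rw [hω]; exact bump_cont ε C hε
  set a : ℝ := l - 2 * ε with ha
  set η' : ℝ → ℝ := fun x => ω (x + a) - ω (x - a) with hη'
  have hηd : ∀ x, HasDerivAt η (η' x) x := fun x => eta_hasDeriv hε hωc hη hεl x
  have hηc : Continuous η := continuous_iff_continuousAt.mpr fun x => (hηd x).continuousAt
  have hη'c : Continuous η' :=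
    (hωc.comp (continuous_id.add continuous_const)).sub
      (hωc.comp (continuous_id.sub continuous_const))
  obtain ⟨A, hA⟩ : ∃ A : ℝ, A = B β * (2 * π * β ^ 2) ^ (-(1/4 : ℝ)) := ⟨_, rfl⟩
  obtain ⟨E, hE⟩ : ∃ E : ℝ → ℝ, E = fun x => Real.exp (-((x - xs) ^ 2 / (4 * β ^ 2))) := ⟨_, rfl⟩
  obtain ⟨E', hE'd⟩ : ∃ E' : ℝ → ℝ, E' = fun x => (-(2 * (x - xs)) / (4 * β ^ 2)) * E x := ⟨_, rfl⟩
  obtain ⟨G, hG⟩ : ∃ G : ℝ → ℝ, G = fun x => A * E x * η x := ⟨_, rfl⟩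
  obtain ⟨G', hG'⟩ : ∃ G' : ℝ → ℝ, G' = fun x => A * (E' x * η x + E x * η' x) := ⟨_, rfl⟩
  obtain ⟨P, hP⟩ : ∃ P : ℝ → ℂ, P = fun x : ℝ => Complex.exp (Complex.I * (x:ℂ) * (ps:ℂ) / (hbar:ℂ)) := ⟨_, rfl⟩
  have hEc : Continuous E := by rw [hE]; fun_prop
  have hE'c : Continuous E' := by
    rw [hE'd]
    apply Continuous.mul ?_ hEc
    fun_prop
  have hGc : Continuous G := by rw [hG]; fun_prop
  have hG'c : Continuous G' := by rw [hG']; fun_prop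
  have hEd : ∀ x, HasDerivAt E (E' x) x := by
    intro x
    have h1 : HasDerivAt (fun x : ℝ => -((x - xs) ^ 2 / (4 * β ^ 2)))
        (-(2 * (x - xs) / (4 * β ^ 2))) x := by
      have := (((hasDerivAt_id x).sub_const xs).pow 2).div_const (4 * β ^ 2)
      simpa [Pi.neg_def] using this.neg
    have := h1.exp
    simp only [hE, hE'd]
    convert this using 1
    ring
  have hGd : ∀ x, HasDerivAt G (G' x) x := by
    intro x
    have h2 := ((hEd x).const_mul A).mul (hηd x)
    have h3 : HasDerivAt G (A * E' x * η x + A * E x * η' x) x := by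
      rw [hG]
      exact h2.congr_deriv (by ring)
    rw [hG']
    simpa using h3.congr_deriv (by ring)
  have hψeq : ∀ x : ℝ, ψ β x = ((G x : ℝ) : ℂ) * P x := by
    intro x
    rw [hψ β hβ]
    simp only [hG, hE, hA, hP]
    exact psi_form (B β) ((2 * π * β ^ 2) ^ (-(1/4 : ℝ))) ((x - xs) ^ 2 / (4 * β ^ 2)) ps hbar (η x) x
  have hPd : ∀ x : ℝ, HasDerivAt P (Complex.I * (ps:ℂ) / (hbar:ℂ) * P x) x := by
    intro x
    have h0 : HasDerivAt (fun x : ℝ => Complex.I * (x:ℂ) * (ps:ℂ) / (hbar:ℂ))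
        (Complex.I * (ps:ℂ) / (hbar:ℂ)) x := by
      have h1 : HasDerivAt (fun x : ℝ => (x:ℂ)) 1 x := Complex.ofRealCLM.hasDerivAt
      have h2 := h1.const_mul Complex.I
      have h3 := (h2.mul_const (ps:ℂ)).div_const (hbar:ℂ)
      exact h3.congr_deriv (by ring)
    have h4 := h0.cexp
    rw [hP]
    exact h4.congr_deriv (by ring)
  have hψd : ∀ x : ℝ, HasDerivAt (ψ β)
      (((G' x : ℝ):ℂ) * P x + ((G x : ℝ):ℂ) * (Complex.I * (ps:ℂ) / (hbar:ℂ) * P x)) x := by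
    intro x
    have hfun : ψ β = fun x => ((G x : ℝ) : ℂ) * P x := funext hψeq
    rw [hfun]
    have hGC : HasDerivAt (fun x : ℝ => ((G x : ℝ):ℂ)) ((G' x : ℝ):ℂ) x := by
      exact (hGd x).ofReal_comp
    exact hGC.mul (hPd x)
  have hPP : ∀ x : ℝ, (starRingEnd ℂ) (P x) * P x = 1 := by
    intro x
    rw [hP]
    dsimp only
    rw [← Complex.exp_conj, ← Complex.exp_add]
    simp only [map_div₀, map_mul, Complex.conj_I, Complex.conj_ofReal]
    rw [show -Complex.I * (x:ℂ) * (ps:ℂ) / (hbar:ℂ) + Complex.I * (x:ℂ) * (ps:ℂ) / (hbar:ℂ) = 0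
      by ring]
    exact Complex.exp_zero
  have hnormβ := hnorm β hβ
  have hnG : ∀ x : ℝ, ‖ψ β x‖ ^ 2 = G x ^ 2 := by
    intro x
    rw [hψeq x, norm_mul, Complex.norm_real]
    rw [hP]
    dsimp only
    rw [Complex.norm_exp]
    rw [show (Complex.I * (x:ℂ) * (ps:ℂ) / (hbar:ℂ)).re = 0 by simp [Complex.div_re]]
    rw [Real.exp_zero, mul_one, Real.norm_eq_abs, sq_abs]
  have hnormG : ∫ x in Set.Icc (-l) l, G x ^ 2 = 1 := by
    rw [← hnormβ]
    exact setIntegral_congr_fun measurableSet_Icc (fun x _ => (hnG x).symm)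
  -- boundary values
  have hGl : G l = 0 := by
    rw [hG]
    dsimp only
    rw [eta_zero hε hω hη hεl (by rw [abs_of_pos (by linarith)]; linarith), mul_zero]
  have hGnl : G (-l) = 0 := by
    rw [hG]
    dsimp only
    rw [eta_zero hε hω hη hεl (by rw [abs_of_neg (by linarith)]; linarith), mul_zero]
  -- FTC: ∫ G G' = 0
  have hGG' : ∫ x in Set.Icc (-l) l, G x * G' x = 0 := by
    rw [integral_Icc_eq_integral_Ioc,
      ← intervalIntegral.integral_of_le (by linarith : -l ≤ l)]
    have hd : ∀ x ∈ Set.uIcc (-l) l, HasDerivAt (fun x => G x ^ 2 / 2) (G x * G' x) x := by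
      intro x _
      have := ((hGd x).pow 2).div_const 2
      exact this.congr_deriv (by ring)
    rw [intervalIntegral.integral_eq_sub_of_hasDerivAt hd
      ((hGc.mul hG'c).intervalIntegrable _ _)]
    rw [hGl, hGnl]
    ring
  -- assemble
  have hint : (fun x => (starRingEnd ℂ) (ψ β x) * (-Complex.I * (hbar : ℂ)) * deriv (ψ β) x)
      = fun x => (-Complex.I * (hbar:ℂ)) * ((G x * G' x : ℝ):ℂ) + (ps:ℂ) * ((G x ^2 : ℝ):ℂ) := by
    funext x
    rw [(hψd x).deriv, hψeq x]
    have := integrand_ident (G x) (G' x) ps hbar (ne_of_gt hhbar) (P x) (hPP x)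
    rw [show ((G x : ℝ):ℂ) * (Complex.I * (ps:ℂ) / (hbar:ℂ) * P x)
      = ((G x : ℝ):ℂ) * (Complex.I * (ps:ℂ) / (hbar:ℂ)) * P x by ring]
    rw [this]
    push_cast
    ring
  rw [hint]
  rw [MeasureTheory.integral_add]
  · rw [MeasureTheory.integral_const_mul, MeasureTheory.integral_const_mul]
    rw [show (∫ a in Set.Icc (-l) l, ((G a * G' a : ℝ):ℂ)) = ((∫ a in Set.Icc (-l) l, G a * G' a : ℝ):ℂ) from integral_ofReal,
      show (∫ a in Set.Icc (-l) l, ((G a ^ 2 : ℝ):ℂ)) = ((∫ a in Set.Icc (-l) l, G a ^ 2 : ℝ):ℂ) from integral_ofReal]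
    rw [hGG', hnormG]
    simp
  · apply Integrable.const_mul
    apply Continuous.integrableOn_Icc
    exact Complex.continuous_ofReal.comp (hGc.mul hG'c)
  · apply Integrable.const_mul
    apply Continuous.integrableOn_Icc
    exact Complex.continuous_ofReal.comp (hGc.pow 2)

set_option maxHeartbeats 1000000 in
lemma part2 (l ε xs ps hbar : ℝ) (hε : 0 < ε)
    (hxs : |xs| < l - 3 * ε)
    (C : ℝ) (hC : 0 < C) (ω : ℝ → ℝ)
    (hω : ω = fun x => if |x| < ε then C * Real.exp (-ε / (ε - |x|)) else 0)
    (hωint : ∫ x : ℝ, ω x = 1)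
    (η : ℝ → ℝ)
    (hη : η = fun x => ∫ y in Set.Icc (-l + 2 * ε) (l - 2 * ε), ω (x - y))
    (B : ℝ → ℝ)
    (ψ : ℝ → ℝ → ℂ)
    (hψ : ∀ β : ℝ, 0 < β → ψ β = fun x : ℝ =>
      (B β : ℂ) * (((2 * π * β ^ 2) ^ (-(1/4 : ℝ)) : ℝ) : ℂ) *
        Complex.exp (-(((x - xs) ^ 2 / (4 * β ^ 2) : ℝ) : ℂ) +
          Complex.I * (x : ℂ) * (ps : ℂ) / (hbar : ℂ)) * ((η x : ℝ) : ℂ))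
    (hnorm : ∀ β : ℝ, 0 < β → ∫ x in Set.Icc (-l) l, ‖ψ β x‖ ^ 2 = 1) :
    (fun β : ℝ => (∫ x in Set.Icc (-l) l, x * ‖ψ β x‖ ^ 2) - xs) =O[𝓝[>] (0:ℝ)]
      (fun β : ℝ => β * Real.exp (-(l - |xs| - 3 * ε) ^ 2 / (2 * β ^ 2))) := by
  have hεl : 3 * ε < l := by linarith [abs_nonneg xs]
  have hωc : Continuous ω := by rw [hω]; exact bump_cont ε C hε
  have hηc : Continuous η := continuous_iff_continuousAt.mpr
    fun x => (eta_hasDeriv hε hωc hη hεl x).continuousAt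
  have hη0 : ∀ x, 0 ≤ η x := eta_nonneg hε hω hC.le hη hεl
  have hη1 : ∀ x, η x ≤ 1 := eta_le_one hε hωc hω hC.le hωint hη hεl
  set d : ℝ := l - |xs| - 3 * ε with hdd
  have hd : 0 < d := by rw [hdd]; linarith
  rw [Asymptotics.isBigO_iff]
  refine ⟨Real.exp (1/2 : ℝ), ?_⟩
  filter_upwards [Ioo_mem_nhdsGT_of_mem
    (show (0:ℝ) ∈ Set.Ico (0:ℝ) d from ⟨le_rfl, hd⟩)] with β hβmem
  obtain ⟨hβ0, hβd⟩ := hβmem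
  have hβne : β ≠ 0 := ne_of_gt hβ0
  obtain ⟨A2, hA2⟩ : ∃ A2 : ℝ, A2 = (B β * (2 * π * β ^ 2) ^ (-(1/4 : ℝ)))^2 := ⟨_, rfl⟩
  have hA2nn : 0 ≤ A2 := hA2 ▸ sq_nonneg _
  obtain ⟨E2, hE2⟩ : ∃ E2 : ℝ → ℝ, E2 = fun x => Real.exp (-((x - xs)^2/(2*β^2))) := ⟨_, rfl⟩
  have hE2c : Continuous E2 := by rw [hE2]; fun_prop
  have hE2pos : ∀ x, 0 < E2 x := by intro x; rw [hE2]; exact Real.exp_pos _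
  -- closed form for the probability density
  have hN : ∀ x : ℝ, ‖ψ β x‖^2 = A2 * E2 x * (η x)^2 := by
    intro x
    rw [hψ β hβ0]
    dsimp only
    rw [psi_form (B β) ((2 * π * β ^ 2) ^ (-(1/4 : ℝ))) ((x - xs)^2/(4*β^2)) ps hbar (η x) x]
    rw [norm_mul, Complex.norm_real, Complex.norm_exp]
    rw [show (Complex.I * (x:ℂ) * (ps:ℂ) / (hbar:ℂ)).re = 0 by simp [Complex.div_re]]
    rw [Real.exp_zero, mul_one, Real.norm_eq_abs, sq_abs]
    have hexp : Real.exp (-((x - xs)^2/(4*β^2)))^2 = E2 x := by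
      rw [hE2, sq, ← Real.exp_add]
      congr 1
      field_simp
      ring
    rw [mul_pow, mul_pow, hexp, hA2]
  have hNc : Continuous (fun x : ℝ => A2 * E2 x * (η x)^2) := by fun_prop
  have hnorm1 : ∫ x in Set.Icc (-l) l, A2 * E2 x * (η x)^2 = 1 := by
    rw [← hnorm β hβ0]
    exact setIntegral_congr_fun measurableSet_Icc fun x _ => (hN x).symm
  have hNnn : ∀ x, 0 ≤ A2 * E2 x * (η x)^2 := fun x =>
    mul_nonneg (mul_nonneg hA2nn (hE2pos x).le) (sq_nonneg _)
  -- normalization lower bound (⋆)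
  have hstar : A2 * Real.exp (-(1/2 : ℝ)) * (2*β) ≤ 1 := by
    have hsub : Set.Icc (xs - β) (xs + β) ⊆ Set.Icc (-l) l := by
      apply Set.Icc_subset_Icc
      · have := neg_abs_le xs; rw [hdd] at hβd; linarith
      · have := le_abs_self xs; rw [hdd] at hβd; linarith
    have h1 : (A2 * Real.exp (-(1/2 : ℝ))) * (volume (Set.Icc (xs - β) (xs + β))).toReal
        ≤ ∫ x in Set.Icc (xs - β) (xs + β), A2 * E2 x * (η x)^2 := by
      apply setIntegral_ge_of_const_le_real measurableSet_Icc
        (by rw [Real.volume_Icc]; exact ENNReal.ofReal_ne_top)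
      · intro x hx
        obtain ⟨hx1, hx2⟩ := hx
        have hxd : |x - xs| ≤ β := abs_le.mpr ⟨by linarith, by linarith⟩
        have hη1x : η x = 1 := by
          apply eta_eq_one hε hω hωint hη hεl
          calc |x| = |xs + (x - xs)| := by ring_nf
            _ ≤ |xs| + |x - xs| := abs_add_le _ _
            _ ≤ l - 3*ε := by rw [hdd] at hβd; linarith
        have hsq : (x - xs)^2 ≤ β^2 := by
          rw [← sq_abs]; exact pow_le_pow_left₀ (abs_nonneg _) hxd 2
        have hE2b : Real.exp (-(1/2 : ℝ)) ≤ E2 x := by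
          rw [hE2]
          apply Real.exp_le_exp.mpr
          rw [neg_le_neg_iff, div_le_iff₀ (by positivity)]
          nlinarith
        rw [hη1x, one_pow, mul_one]
        exact mul_le_mul_of_nonneg_left hE2b hA2nn
      · exact hNc.integrableOn_Icc
    have h2 : ∫ x in Set.Icc (xs - β) (xs + β), A2 * E2 x * (η x)^2
        ≤ ∫ x in Set.Icc (-l) l, A2 * E2 x * (η x)^2 := by
      apply setIntegral_mono_set hNc.integrableOn_Icc
        (Filter.Eventually.of_forall hNnn) (HasSubset.Subset.eventuallyLE hsub)
    rw [Real.volume_Icc, ENNReal.toReal_ofReal (by linarith)] at h1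
    calc A2 * Real.exp (-(1/2 : ℝ)) * (2*β)
        = (A2 * Real.exp (-(1/2 : ℝ))) * (xs + β - (xs - β)) := by ring
      _ ≤ ∫ x in Set.Icc (xs - β) (xs + β), A2 * E2 x * (η x)^2 := h1
      _ ≤ ∫ x in Set.Icc (-l) l, A2 * E2 x * (η x)^2 := h2
      _ = 1 := hnorm1
  -- rewrite the mean-deviation as one integral
  obtain ⟨f, hf⟩ : ∃ f : ℝ → ℝ, f = fun x => (x - xs) * (A2 * E2 x * (η x)^2) := ⟨_, rfl⟩
  have hfc : Continuous f := by rw [hf]; fun_prop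
  have hmean : (∫ x in Set.Icc (-l) l, x * ‖ψ β x‖ ^ 2) - xs = ∫ x in Set.Icc (-l) l, f x := by
    have e1 : ∫ x in Set.Icc (-l) l, x * ‖ψ β x‖ ^ 2
        = ∫ x in Set.Icc (-l) l, x * (A2 * E2 x * (η x)^2) :=
      setIntegral_congr_fun measurableSet_Icc fun x _ => by rw [hN x]
    have e2 : ∫ x in Set.Icc (-l) l, f x
        = (∫ x in Set.Icc (-l) l, x * (A2 * E2 x * (η x)^2))
          - ∫ x in Set.Icc (-l) l, xs * (A2 * E2 x * (η x)^2) := by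
      rw [← MeasureTheory.integral_sub
        (Continuous.integrableOn_Icc (by fun_prop : Continuous (fun x : ℝ => x * (A2 * E2 x * (η x)^2))))
        (Continuous.integrableOn_Icc (by fun_prop : Continuous (fun x : ℝ => xs * (A2 * E2 x * (η x)^2))))]
      apply setIntegral_congr_fun measurableSet_Icc
      intro x _
      rw [hf]; ring
    rw [e1, e2, MeasureTheory.integral_const_mul, hnorm1, mul_one]
  -- antiderivatives
  have hW : ∀ x : ℝ, HasDerivAt (fun x => -(β^2) * Real.exp (-((x - xs)^2/(2*β^2))))
      ((x - xs) * E2 x) x := by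
    intro x
    have h1 := (((hasDerivAt_id x).sub_const xs).pow 2).div_const (2*β^2)
    have h2 := (h1.neg).exp
    have h3 := h2.const_mul (-(β^2))
    apply h3.congr_deriv
    rw [hE2]
    dsimp only
    simp only [Pi.neg_apply, Pi.pow_apply, id]
    field_simp
    ring
  have hWE : ∀ x : ℝ, -(β^2) * Real.exp (-((x - xs)^2/(2*β^2))) = -(β^2) * E2 x := by
    intro x; rw [hE2]
  -- middle integral is zero
  have hmid : ∫ x in (xs - d)..(xs + d), f x = 0 := by
    have hcongr : ∫ x in (xs - d)..(xs + d), f x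
        = ∫ x in (xs - d)..(xs + d), A2 * ((x - xs) * E2 x) := by
      apply intervalIntegral.integral_congr
      intro x hx
      rw [Set.uIcc_of_le (by linarith)] at hx
      obtain ⟨hx1, hx2⟩ := hx
      have hη1x : η x = 1 := by
        apply eta_eq_one hε hω hωint hη hεl
        calc |x| = |xs + (x - xs)| := by ring_nf
          _ ≤ |xs| + |x - xs| := abs_add_le _ _
          _ ≤ l - 3*ε := by
              have : |x - xs| ≤ d := abs_le.mpr ⟨by linarith, by linarith⟩
              rw [hdd] at this; linarith
      rw [hf]; dsimp only; rw [hη1x]; ring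
    rw [hcongr, intervalIntegral.integral_const_mul]
    rw [intervalIntegral.integral_eq_sub_of_hasDerivAt (fun x _ => hW x)
      (((continuous_id.sub continuous_const).mul hE2c).intervalIntegrable _ _)]
    rw [show (xs + d - xs)^2 = (xs - d - xs)^2 by ring]
    ring
  -- right tail
  have hexp_d : Real.exp (-((xs + d - xs)^2/(2*β^2))) = Real.exp (-(d^2/(2*β^2))) := by
    rw [show xs + d - xs = d by ring]
  have htailR : |∫ x in (xs + d)..l, f x| ≤ A2 * β^2 * Real.exp (-(d^2/(2*β^2))) := by
    have hle : xs + d ≤ l := by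
      have := le_abs_self xs; rw [hdd]; linarith
    have hptw : ∀ x ∈ Set.Icc (xs + d) l, |f x| ≤ A2 * ((x - xs) * E2 x) := by
      intro x hx
      obtain ⟨hx1, hx2⟩ := hx
      have hxd : 0 ≤ x - xs := by linarith
      rw [hf]; dsimp only
      rw [abs_mul, abs_of_nonneg hxd, abs_of_nonneg (hNnn x)]
      have hη2 : (η x)^2 ≤ 1 := pow_le_one₀ (hη0 x) (hη1 x)
      have key : 0 ≤ A2 * E2 x * (x - xs) * (1 - (η x)^2) :=
        mul_nonneg (mul_nonneg (mul_nonneg hA2nn (hE2pos x).le) hxd) (by linarith)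
      nlinarith [key]
    have hftc : ∫ x in (xs + d)..l, (x - xs) * E2 x
        = (-(β^2) * Real.exp (-((l - xs)^2/(2*β^2))))
          - (-(β^2) * Real.exp (-((xs + d - xs)^2/(2*β^2)))) :=
      intervalIntegral.integral_eq_sub_of_hasDerivAt (fun x _ => hW x)
        (((continuous_id.sub continuous_const).mul hE2c).intervalIntegrable _ _)
    calc |∫ x in (xs + d)..l, f x| ≤ ∫ x in (xs + d)..l, |f x| :=
          intervalIntegral.abs_integral_le_integral_abs hle
      _ ≤ ∫ x in (xs + d)..l, A2 * ((x - xs) * E2 x) := by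
          apply intervalIntegral.integral_mono_on hle
            (hfc.abs.intervalIntegrable _ _)
            ((continuous_const.mul ((continuous_id.sub continuous_const).mul hE2c)).intervalIntegrable _ _)
            hptw
      _ = A2 * ((-(β^2) * Real.exp (-((l - xs)^2/(2*β^2))))
          - (-(β^2) * Real.exp (-((xs + d - xs)^2/(2*β^2))))) := by
          rw [intervalIntegral.integral_const_mul, hftc]
      _ ≤ A2 * β^2 * Real.exp (-(d^2/(2*β^2))) := by
          rw [hexp_d]
          nlinarith [mul_nonneg (mul_nonneg hA2nn (sq_nonneg β)) (Real.exp_pos (-((l - xs)^2/(2*β^2)))).le]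
  -- left tail
  have hV : ∀ x : ℝ, HasDerivAt (fun x => β^2 * Real.exp (-((x - xs)^2/(2*β^2))))
      ((xs - x) * E2 x) x := by
    intro x
    have := (hW x).neg
    simp only [Pi.neg_def] at this
    rw [show (fun x => -(-(β^2) * Real.exp (-((x - xs)^2/(2*β^2)))))
      = (fun x => β^2 * Real.exp (-((x - xs)^2/(2*β^2)))) from funext fun x => by ring] at this
    apply this.congr_deriv
    ring
  have htailL : |∫ x in (-l)..(xs - d), f x| ≤ A2 * β^2 * Real.exp (-(d^2/(2*β^2))) := by
    have hle : -l ≤ xs - d := by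
      have := neg_abs_le xs; rw [hdd]; linarith
    have hptw : ∀ x ∈ Set.Icc (-l) (xs - d), |f x| ≤ A2 * ((xs - x) * E2 x) := by
      intro x hx
      obtain ⟨hx1, hx2⟩ := hx
      have hxd : 0 ≤ xs - x := by linarith
      rw [hf]; dsimp only
      rw [abs_mul, abs_of_nonpos (by linarith : x - xs ≤ 0), abs_of_nonneg (hNnn x)]
      have hη2 : (η x)^2 ≤ 1 := pow_le_one₀ (hη0 x) (hη1 x)
      have key : 0 ≤ A2 * E2 x * (xs - x) * (1 - (η x)^2) :=
        mul_nonneg (mul_nonneg (mul_nonneg hA2nn (hE2pos x).le) hxd) (by linarith)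
      nlinarith [key]
    have hftc : ∫ x in (-l)..(xs - d), (xs - x) * E2 x
        = (β^2 * Real.exp (-((xs - d - xs)^2/(2*β^2))))
          - (β^2 * Real.exp (-((-l - xs)^2/(2*β^2)))) :=
      intervalIntegral.integral_eq_sub_of_hasDerivAt (fun x _ => hV x)
        (((continuous_const.sub continuous_id).mul hE2c).intervalIntegrable _ _)
    calc |∫ x in (-l)..(xs - d), f x| ≤ ∫ x in (-l)..(xs - d), |f x| :=
          intervalIntegral.abs_integral_le_integral_abs hle
      _ ≤ ∫ x in (-l)..(xs - d), A2 * ((xs - x) * E2 x) := by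
          apply intervalIntegral.integral_mono_on hle
            (hfc.abs.intervalIntegrable _ _)
            ((continuous_const.mul ((continuous_const.sub continuous_id).mul hE2c)).intervalIntegrable _ _)
            hptw
      _ = A2 * ((β^2 * Real.exp (-((xs - d - xs)^2/(2*β^2))))
          - (β^2 * Real.exp (-((-l - xs)^2/(2*β^2))))) := by
          rw [intervalIntegral.integral_const_mul, hftc]
      _ ≤ A2 * β^2 * Real.exp (-(d^2/(2*β^2))) := by
          rw [show (xs - d - xs)^2 = d^2 by ring]
          nlinarith [mul_nonneg (mul_nonneg hA2nn (sq_nonneg β)) (Real.exp_pos (-((-l - xs)^2/(2*β^2)))).le]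
  -- splitting
  have hIcc : ∫ x in Set.Icc (-l) l, f x = ∫ x in (-l)..l, f x := by
    rw [intervalIntegral.integral_of_le (by linarith : -l ≤ l), integral_Icc_eq_integral_Ioc]
  have hs1 : (∫ x in (-l)..(xs - d), f x) + ∫ x in (xs - d)..(xs + d), f x
      = ∫ x in (-l)..(xs + d), f x :=
    intervalIntegral.integral_add_adjacent_intervals (μ := volume) (a := -l) (b := xs - d) (c := xs + d)
      (hfc.intervalIntegrable _ _) (hfc.intervalIntegrable _ _)
  have hs2 : (∫ x in (-l)..(xs + d), f x) + ∫ x in (xs + d)..l, f x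
      = ∫ x in (-l)..l, f x :=
    intervalIntegral.integral_add_adjacent_intervals (μ := volume) (a := -l) (b := xs + d) (c := l)
      (hfc.intervalIntegrable _ _) (hfc.intervalIntegrable _ _)
  have htot : |∫ x in Set.Icc (-l) l, f x| ≤ 2 * (A2 * β^2 * Real.exp (-(d^2/(2*β^2)))) := by
    rw [hIcc, ← hs2, ← hs1, hmid, add_zero]
    calc |(∫ x in (-l)..(xs - d), f x) + ∫ x in (xs + d)..l, f x|
        ≤ |∫ x in (-l)..(xs - d), f x| + |∫ x in (xs + d)..l, f x| := abs_add_le _ _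
      _ ≤ 2 * (A2 * β^2 * Real.exp (-(d^2/(2*β^2)))) := by linarith
  -- conclude
  rw [Real.norm_eq_abs, Real.norm_eq_abs, hmean]
  have hrhs : |β * Real.exp (-d^2 / (2*β^2))| = β * Real.exp (-(d^2/(2*β^2))) := by
    rw [abs_of_pos (by positivity), neg_div]
  rw [hrhs]
  have hkey : 2 * A2 * β ≤ Real.exp (1/2 : ℝ) := by
    have he : Real.exp (-(1/2 : ℝ)) * Real.exp (1/2 : ℝ) = 1 := by
      rw [← Real.exp_add]; norm_num
    nlinarith [Real.exp_pos (1/2 : ℝ), Real.exp_pos (-(1/2 : ℝ))]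
  calc |∫ x in Set.Icc (-l) l, f x| ≤ 2 * (A2 * β^2 * Real.exp (-(d^2/(2*β^2)))) := htot
    _ ≤ Real.exp (1/2 : ℝ) * (β * Real.exp (-(d^2/(2*β^2)))) := by
        have h := mul_le_mul_of_nonneg_right hkey
          (mul_nonneg hβ0.le (Real.exp_pos (-(d^2/(2*β^2)))).le)
        nlinarith [h]

/-- For the truncated-Gaussian states, the mean momentum equals `p*`
exactly for every `β > 0`, and the mean position satisfies
`x̄_β = x* + O(β·exp(-(l-|x*|-3ε)²/(2β²)))` as `β → 0⁺`. -/
theorem truncated_gaussian_means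
    (l ε xs ps hbar : ℝ) (hl : 0 < l) (hε : 0 < ε)
    (hxs : |xs| < l - 3 * ε) (hhbar : 0 < hbar)
    (C : ℝ) (hC : 0 < C) (ω : ℝ → ℝ)
    (hω : ω = fun x => if |x| < ε then C * Real.exp (-ε / (ε - |x|)) else 0)
    (hωint : ∫ x : ℝ, ω x = 1)
    (η : ℝ → ℝ)
    (hη : η = fun x => ∫ y in Set.Icc (-l + 2 * ε) (l - 2 * ε), ω (x - y))
    (B : ℝ → ℝ) (hB : ∀ β : ℝ, 0 < β → 0 < B β)
    (ψ : ℝ → ℝ → ℂ)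
    (hψ : ∀ β : ℝ, 0 < β → ψ β = fun x : ℝ =>
      (B β : ℂ) * (((2 * π * β ^ 2) ^ (-(1/4 : ℝ)) : ℝ) : ℂ) *
        Complex.exp (-(((x - xs) ^ 2 / (4 * β ^ 2) : ℝ) : ℂ) +
          Complex.I * (x : ℂ) * (ps : ℂ) / (hbar : ℂ)) * ((η x : ℝ) : ℂ))
    (hnorm : ∀ β : ℝ, 0 < β → ∫ x in Set.Icc (-l) l, ‖ψ β x‖ ^ 2 = 1)
    :
    (∀ β : ℝ, 0 < β →
      ∫ x in Set.Icc (-l) l,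
        (starRingEnd ℂ) (ψ β x) * (-Complex.I * (hbar : ℂ)) * deriv (ψ β) x = (ps : ℂ)) ∧
    (fun β : ℝ => (∫ x in Set.Icc (-l) l, x * ‖ψ β x‖ ^ 2) - xs) =O[𝓝[>] (0:ℝ)]
      (fun β : ℝ => β * Real.exp (-(l - |xs| - 3 * ε) ^ 2 / (2 * β ^ 2))) := by
  constructor
  · intro β hβ
    exact part1 l ε xs ps hbar hε hxs hhbar C hC ω hω η hη B ψ hψ hnorm β hβ
  · exact part2 l ε xs ps hbar hε hxs C hC ω hω hωint η hη B ψ hψ hnorm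
end

section
/- Let l > 0, ε > 0, x* ∈ ℝ with |x*| < l − 3ε, p* ∈ ℝ, ħ > 0, and let ψ_β be the truncated-Gaussian state. Then the second position moment satisfies Δ*x_β² = β² + O(β·e^{−(l−|x*|−3ε)²/(2β²)}) as β → 0⁺. -/
open Real MeasureTheory Filter Asymptotics Topology

private lemma gauss_hasDerivAt (β xs : ℝ) (hβ : β ≠ 0) (x : ℝ) :
    HasDerivAt (fun x : ℝ => -β^2 * (x - xs) * Real.exp (-(x - xs)^2 / (2*β^2)))
      (((x - xs)^2 - β^2) * Real.exp (-(x - xs)^2 / (2*β^2))) x := by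
  have h1 : HasDerivAt (fun x : ℝ => -(x - xs)^2 / (2*β^2))
      (-(2*(x-xs)) / (2*β^2)) x := by
    have h := ((hasDerivAt_id x).sub_const xs).pow 2
    have h3 := h.neg.div_const (2*β^2)
    simp only [id_eq] at h3
    refine h3.congr_deriv ?_
    push_cast
    ring
  have h4 := h1.exp
  have h5 : HasDerivAt (fun x : ℝ => -β^2 * (x - xs)) (-β^2) x := by
    simpa using ((hasDerivAt_id x).sub_const xs).const_mul (-β^2)
  have h6 := h5.mul h4
  refine h6.congr_deriv ?_
  field_simp
  ring

private lemma gauss_cont (β xs : ℝ) :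
    Continuous (fun x : ℝ => Real.exp (-(x - xs)^2 / (2*β^2))) :=
  Real.continuous_exp.comp (((continuous_id.sub continuous_const).pow 2).neg.div_const _)

private lemma norm_aux (Bv c r s x ps hbar : ℝ) (hB : 0 < Bv) (hc : 0 ≤ c) :
    ‖(Bv : ℂ) * (c : ℂ) *
        Complex.exp (-((r : ℝ) : ℂ) + Complex.I * (x:ℂ) * (ps:ℂ) / (hbar:ℂ)) * ((s:ℝ):ℂ)‖
      = Bv * c * Real.exp (-r) * |s| := by
  have hz : (-((r : ℝ) : ℂ) + Complex.I * (x:ℂ) * (ps:ℂ) / (hbar:ℂ)) =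
      Complex.ofReal (-r) + Complex.ofReal (x * ps / hbar) * Complex.I := by
    push_cast
    ring
  rw [hz]
  simp only [norm_mul, Complex.norm_real, Complex.norm_exp]
  simp [Complex.norm_real, abs_of_pos hB, abs_of_nonneg hc]

set_option maxHeartbeats 1000000 in
/-- Bound on the error integral `J`. -/
private lemma Jbound (β xs d l : ℝ) (η : ℝ → ℝ) (hβ0 : 0 < β) (hβd : β < d)
    (hηcont : Continuous η) (hηnn : ∀ x, 0 ≤ η x) (hηle : ∀ x, η x ≤ 1)
    (hηone : ∀ x, |x| ≤ |xs| + d → η x = 1) (hll : |xs| + d < l) :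
    |∫ x in Set.Icc (-l) l,
        ((x - xs)^2 - β^2) * (Real.exp (-(x - xs)^2 / (2*β^2)) * (η x)^2)|
      ≤ 4 * β^2 * d * Real.exp (-d^2 / (2*β^2)) := by
  have hd : 0 < d := hβ0.trans hβd
  have hxs1 := le_abs_self xs
  have hxs2 := neg_abs_le xs
  set G : ℝ → ℝ := fun x => -β^2 * (x - xs) * Real.exp (-(x - xs)^2 / (2*β^2)) with hG_def
  set g : ℝ → ℝ := fun x =>
    ((x - xs)^2 - β^2) * (Real.exp (-(x - xs)^2 / (2*β^2)) * (η x)^2) with hg_def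
  set g0 : ℝ → ℝ := fun x => ((x - xs)^2 - β^2) * Real.exp (-(x - xs)^2 / (2*β^2)) with hg0_def
  have hgcont : Continuous g := by
    apply Continuous.mul
    · exact (continuous_id.sub continuous_const).pow 2 |>.sub continuous_const
    · exact (gauss_cont β xs).mul (hηcont.pow 2)
  have hg0cont : Continuous g0 := by
    apply Continuous.mul
    · exact (continuous_id.sub continuous_const).pow 2 |>.sub continuous_const
    · exact gauss_cont β xs
  have hgii : ∀ u v : ℝ, IntervalIntegrable g volume u v := fun u v =>
    hgcont.intervalIntegrable u v
  have hg0ii : ∀ u v : ℝ, IntervalIntegrable g0 volume u v := fun u v =>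
    hg0cont.intervalIntegrable u v
  have h1 : -l < xs - d := by linarith
  have h2 : xs - d < xs + d := by linarith
  have h3 : xs + d < l := by linarith
  have hEpos : 0 < Real.exp (-d^2 / (2*β^2)) := Real.exp_pos _
  -- pointwise nonnegativity of g and g ≤ g0 outside the middle
  have hg0nn : ∀ x : ℝ, β^2 ≤ (x - xs)^2 → 0 ≤ g0 x := by
    intro x hx
    exact mul_nonneg (by linarith) (Real.exp_pos _).le
  have hgg : ∀ x : ℝ, β^2 ≤ (x - xs)^2 → 0 ≤ g x ∧ g x ≤ g0 x := by
    intro x hx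
    have hη2 : (η x)^2 ≤ 1 := by
      have h := hηle x; have h' := hηnn x; nlinarith
    have hexp := (Real.exp_pos (-(x - xs)^2 / (2*β^2))).le
    constructor
    · exact mul_nonneg (by linarith) (mul_nonneg hexp (sq_nonneg _))
    · simp only [hg_def, hg0_def]
      have : Real.exp (-(x - xs)^2 / (2*β^2)) * (η x)^2
          ≤ Real.exp (-(x - xs)^2 / (2*β^2)) := by nlinarith [sq_nonneg (η x)]
      exact mul_le_mul_of_nonneg_left this (by linarith)
  -- rewrite as interval integral and split
  have hIcc : (∫ x in Set.Icc (-l) l, g x) = ∫ x in (-l)..l, g x := by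
    rw [MeasureTheory.integral_Icc_eq_integral_Ioc, ← intervalIntegral.integral_of_le (by linarith)]
  have hsplit : (∫ x in (-l)..l, g x) =
      (∫ x in (-l)..(xs - d), g x) + (∫ x in (xs - d)..(xs + d), g x)
        + (∫ x in (xs + d)..l, g x) := by
    have e1 := intervalIntegral.integral_add_adjacent_intervals
      (hgii (-l) (xs - d)) (hgii (xs - d) (xs + d))
    have e2 := intervalIntegral.integral_add_adjacent_intervals
      (hgii (-l) (xs + d)) (hgii (xs + d) l)
    linarith
  -- FTC evaluations
  have hFTC : ∀ u v : ℝ, (∫ x in u..v, g0 x) = G v - G u := by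
    intro u v
    exact intervalIntegral.integral_eq_sub_of_hasDerivAt
      (fun x _ => gauss_hasDerivAt β xs hβ0.ne' x) (hg0ii u v)
  -- middle piece
  have hmid : (∫ x in (xs - d)..(xs + d), g x)
      = -(2 * β^2 * d * Real.exp (-d^2 / (2*β^2))) := by
    have hcong : (∫ x in (xs - d)..(xs + d), g x) = ∫ x in (xs - d)..(xs + d), g0 x := by
      apply intervalIntegral.integral_congr
      intro x hx
      rw [Set.uIcc_of_le h2.le] at hx
      obtain ⟨hx1, hx2⟩ := hx
      have hone : η x = 1 := hηone x (by rw [abs_le]; constructor <;> linarith)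
      simp only [hg_def, hg0_def, hone]
      ring
    rw [hcong, hFTC]
    simp only [hG_def]
    rw [show xs + d - xs = d by ring, show xs - d - xs = -d by ring,
      show ((-d : ℝ))^2 = d^2 by ring]
    ring
  -- right piece
  have hrlow : 0 ≤ ∫ x in (xs + d)..l, g x := by
    apply intervalIntegral.integral_nonneg h3.le
    intro x hx
    have hsq : β^2 ≤ (x - xs)^2 := by
      have hβx : β ≤ x - xs := by
        have := hx.1; linarith
      nlinarith
    exact (hgg x hsq).1
  have hrup : (∫ x in (xs + d)..l, g x) ≤ β^2 * d * Real.exp (-d^2 / (2*β^2)) := by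
    have step1 : (∫ x in (xs + d)..l, g x) ≤ ∫ x in (xs + d)..l, g0 x := by
      apply intervalIntegral.integral_mono_on h3.le (hgii _ _) (hg0ii _ _)
      intro x hx
      have hsq : β^2 ≤ (x - xs)^2 := by
        have := hx.1; nlinarith
      exact (hgg x hsq).2
    have step2 : (∫ x in (xs + d)..l, g0 x) = G l - G (xs + d) := hFTC _ _
    have hGl : G l ≤ 0 := by
      simp only [hG_def]
      have h0 : (0:ℝ) ≤ l - xs := by linarith
      nlinarith [mul_nonneg (mul_nonneg (sq_nonneg β) h0)
        (Real.exp_pos (-(l - xs)^2 / (2*β^2))).le]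
    have hGb : G (xs + d) = -(β^2 * d * Real.exp (-d^2 / (2*β^2))) := by
      simp only [hG_def]
      rw [show xs + d - xs = d by ring]
      ring
    rw [step2, hGb] at step1
    linarith
  -- left piece
  have hllow : 0 ≤ ∫ x in (-l)..(xs - d), g x := by
    apply intervalIntegral.integral_nonneg h1.le
    intro x hx
    have hsq : β^2 ≤ (x - xs)^2 := by
      have hβx : β ≤ xs - x := by have := hx.2; linarith
      nlinarith
    exact (hgg x hsq).1
  have hlup : (∫ x in (-l)..(xs - d), g x) ≤ β^2 * d * Real.exp (-d^2 / (2*β^2)) := by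
    have step1 : (∫ x in (-l)..(xs - d), g x) ≤ ∫ x in (-l)..(xs - d), g0 x := by
      apply intervalIntegral.integral_mono_on h1.le (hgii _ _) (hg0ii _ _)
      intro x hx
      have hsq : β^2 ≤ (x - xs)^2 := by
        have := hx.2; nlinarith
      exact (hgg x hsq).2
    have step2 : (∫ x in (-l)..(xs - d), g0 x) = G (xs - d) - G (-l) := hFTC _ _
    have hGl : 0 ≤ G (-l) := by
      simp only [hG_def]
      have h0 : (0:ℝ) ≤ l + xs := by linarith
      nlinarith [mul_nonneg (mul_nonneg (sq_nonneg β) h0)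
        (Real.exp_pos (-(-l - xs)^2 / (2*β^2))).le]
    have hGa : G (xs - d) = β^2 * d * Real.exp (-d^2 / (2*β^2)) := by
      simp only [hG_def]
      rw [show xs - d - xs = -d by ring, show ((-d : ℝ))^2 = d^2 by ring]
      ring
    rw [step2, hGa] at step1
    linarith
  rw [hIcc, hsplit, abs_le]
  constructor <;> nlinarith

/-- Lower bound on the normalization integral. -/
private lemma Ibound (β xs d l : ℝ) (η : ℝ → ℝ) (hβ0 : 0 < β) (hβd : β < d)
    (hηcont : Continuous η) (hηnn : ∀ x, 0 ≤ η x)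
    (hηone : ∀ x, |x| ≤ |xs| + d → η x = 1) (hll : |xs| + d < l) :
    Real.exp (-(1/2 : ℝ)) * (2*β)
      ≤ ∫ x in Set.Icc (-l) l, Real.exp (-(x - xs)^2 / (2*β^2)) * (η x)^2 := by
  have hxs1 := le_abs_self xs
  have hxs2 := neg_abs_le xs
  have h2β : (0:ℝ) < 2*β^2 := by positivity
  set f : ℝ → ℝ := fun x => Real.exp (-(x - xs)^2 / (2*β^2)) * (η x)^2 with hf_def
  have hfcont : Continuous f := (gauss_cont β xs).mul (hηcont.pow 2)
  have hfnn : ∀ x, 0 ≤ f x := fun x => mul_nonneg (Real.exp_pos _).le (sq_nonneg _)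
  have hsub : Set.Icc (xs - β) (xs + β) ⊆ Set.Icc (-l) l := by
    intro x hx
    obtain ⟨hx1, hx2⟩ := hx
    constructor <;> linarith
  have s1 : (∫ x in Set.Icc (xs - β) (xs + β), f x) ≤ ∫ x in Set.Icc (-l) l, f x :=
    MeasureTheory.setIntegral_mono_set (hfcont.integrableOn_Icc)
      (Filter.Eventually.of_forall hfnn) hsub.eventuallyLE
  have s2 : (∫ _x in Set.Icc (xs - β) (xs + β), Real.exp (-(1/2 : ℝ)))
      ≤ ∫ x in Set.Icc (xs - β) (xs + β), f x := by
    apply MeasureTheory.setIntegral_mono_on (integrableOn_const (by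
      rw [Real.volume_Icc]; exact ENNReal.ofReal_ne_top))
      hfcont.integrableOn_Icc measurableSet_Icc
    intro x hx
    obtain ⟨hx1, hx2⟩ := hx
    have hone : η x = 1 := hηone x (by rw [abs_le]; constructor <;> linarith)
    have hsq : (x - xs)^2 ≤ β^2 := sq_le_sq' (by linarith) (by linarith)
    have hexp : Real.exp (-(1/2 : ℝ)) ≤ Real.exp (-(x - xs)^2 / (2*β^2)) := by
      apply Real.exp_le_exp.2
      rw [le_div_iff₀ h2β]
      nlinarith
    simp only [hf_def, hone]
    nlinarith
  have s3 : (∫ _x in Set.Icc (xs - β) (xs + β), Real.exp (-(1/2 : ℝ)))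
      = Real.exp (-(1/2 : ℝ)) * (2*β) := by
    rw [MeasureTheory.setIntegral_const, measureReal_def, Real.volume_Icc, smul_eq_mul,
      ENNReal.toReal_ofReal (by linarith)]
    ring
  linarith

set_option maxHeartbeats 1000000 in
/-- For the truncated-Gaussian states, the second position moment about `x*`
satisfies `Δ*x_β² = β² + O(β·exp(-(l-|x*|-3ε)²/(2β²)))` as `β → 0⁺`. -/
theorem truncated_gaussian_position_moment
    (l ε xs ps hbar : ℝ) (hl : 0 < l) (hε : 0 < ε)
    (hxs : |xs| < l - 3 * ε) (hhbar : 0 < hbar)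
    (C : ℝ) (hC : 0 < C) (ω : ℝ → ℝ)
    (hω : ω = fun x => if |x| < ε then C * Real.exp (-ε / (ε - |x|)) else 0)
    (hωint : ∫ x : ℝ, ω x = 1)
    (η : ℝ → ℝ)
    (hη : η = fun x => ∫ y in Set.Icc (-l + 2 * ε) (l - 2 * ε), ω (x - y))
    (B : ℝ → ℝ) (hB : ∀ β : ℝ, 0 < β → 0 < B β)
    (ψ : ℝ → ℝ → ℂ)
    (hψ : ∀ β : ℝ, 0 < β → ψ β = fun x : ℝ =>
      (B β : ℂ) * (((2 * π * β ^ 2) ^ (-(1/4 : ℝ)) : ℝ) : ℂ) *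
        Complex.exp (-(((x - xs) ^ 2 / (4 * β ^ 2) : ℝ) : ℂ) +
          Complex.I * (x : ℂ) * (ps : ℂ) / (hbar : ℂ)) * ((η x : ℝ) : ℂ))
    (hnorm : ∀ β : ℝ, 0 < β → ∫ x in Set.Icc (-l) l, ‖ψ β x‖ ^ 2 = 1)
    :
    (fun β : ℝ => (∫ x in Set.Icc (-l) l, (x - xs) ^ 2 * ‖ψ β x‖ ^ 2) - β ^ 2) =O[𝓝[>] (0:ℝ)]
      (fun β : ℝ => β * Real.exp (-(l - |xs| - 3 * ε) ^ 2 / (2 * β ^ 2))) := by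
  have habs := abs_nonneg xs
  have hxs1 := le_abs_self xs
  have hxs2 := neg_abs_le xs
  set d : ℝ := l - |xs| - 3 * ε with hd_def
  have hd : 0 < d := by simp only [hd_def]; linarith
  have hxld : |xs| + d = l - 3 * ε := by simp only [hd_def]; ring
  have hll : |xs| + d < l := by rw [hxld]; linarith
  -- basic facts about ω
  have hωnn : ∀ u, 0 ≤ ω u := by
    intro u; rw [hω]; dsimp only
    split
    · positivity
    · exact le_rfl
  have hωInt : Integrable ω := by
    by_contra h
    rw [MeasureTheory.integral_undef h] at hωint
    exact one_ne_zero hωint.symm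
  have hω0 : ∀ u : ℝ, ε ≤ |u| → ω u = 0 := by
    intro u hu; rw [hω]; dsimp only; rw [if_neg (not_lt.2 hu)]
  -- basic facts about η
  have hηnn : ∀ x, 0 ≤ η x := by
    intro x; rw [hη]
    exact MeasureTheory.setIntegral_nonneg measurableSet_Icc fun y _ => hωnn _
  have hηle : ∀ x, η x ≤ 1 := by
    intro x; rw [hη]; dsimp only
    calc (∫ y in Set.Icc (-l + 2*ε) (l - 2*ε), ω (x - y)) ≤ ∫ y, ω (x - y) :=
        MeasureTheory.setIntegral_le_integral
          ((MeasureTheory.integrable_comp_sub_left ω x).2 hωInt)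
          (Filter.Eventually.of_forall fun y => hωnn _)
      _ = 1 := by rw [MeasureTheory.integral_sub_left_eq_self ω volume x]; exact hωint
  have hηone : ∀ x : ℝ, |x| ≤ |xs| + d → η x = 1 := by
    intro x hx
    rw [hxld, abs_le] at hx
    obtain ⟨hx1, hx2⟩ := hx
    rw [hη]; dsimp only
    rw [MeasureTheory.setIntegral_eq_integral_of_forall_compl_eq_zero]
    · rw [MeasureTheory.integral_sub_left_eq_self ω volume x]; exact hωint
    · intro y hy
      apply hω0
      rcases not_and_or.1 (fun h => hy (Set.mem_Icc.2 h)) with h | h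
      · push_neg at h
        calc ε ≤ x - y := by linarith
          _ ≤ |x - y| := le_abs_self _
      · push_neg at h
        calc ε ≤ y - x := by linarith
          _ ≤ |y - x| := le_abs_self _
          _ = |x - y| := abs_sub_comm _ _
  have hAB : -l + 2*ε ≤ l - 2*ε := by linarith
  have hηcont : Continuous η := by
    have hF : Continuous (fun t : ℝ => ∫ u in (0:ℝ)..t, ω u) := hωInt.continuous_primitive 0
    have hrepr : η = fun x => (∫ u in (0:ℝ)..(x - (-l + 2*ε)), ω u)
        - ∫ u in (0:ℝ)..(x - (l - 2*ε)), ω u := by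
      funext x
      rw [hη]; dsimp only
      rw [MeasureTheory.integral_Icc_eq_integral_Ioc, ← intervalIntegral.integral_of_le hAB,
        intervalIntegral.integral_comp_sub_left ω x,
        ← intervalIntegral.integral_interval_sub_left
          hωInt.intervalIntegrable hωInt.intervalIntegrable]
    rw [hrepr]
    exact (hF.comp (continuous_id.sub continuous_const)).sub
      (hF.comp (continuous_id.sub continuous_const))
  -- the big-O estimate
  rw [Asymptotics.isBigO_iff]
  refine ⟨4 * d / (2 * Real.exp (-(1/2 : ℝ))), ?_⟩
  filter_upwards [Ioo_mem_nhdsGT_of_mem (Set.left_mem_Ico.2 hd)] with β hβ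
  obtain ⟨hβ0, hβd⟩ := hβ
  have hβne : β ≠ 0 := ne_of_gt hβ0
  have h2β : (0:ℝ) < 2*β^2 := by positivity
  have hA2 : (0:ℝ) < 2*π*β^2 := by positivity
  have hK : (0:ℝ) < (B β)^2 * ((2*π*β^2) ^ (-(1/2 : ℝ))) :=
    mul_pos (pow_pos (hB β hβ0) 2) (Real.rpow_pos_of_pos hA2 _)
  set K : ℝ := (B β)^2 * ((2*π*β^2) ^ (-(1/2 : ℝ))) with hK_def
  -- pointwise formula for the squared norm
  have hψsq : ∀ x : ℝ, ‖ψ β x‖^2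
      = K * (Real.exp (-(x - xs)^2 / (2*β^2)) * (η x)^2) := by
    intro x
    rw [hψ β hβ0]; dsimp only
    rw [norm_aux (B β) ((2 * π * β ^ 2) ^ (-(1/4 : ℝ))) ((x - xs) ^ 2 / (4 * β ^ 2))
      (η x) x ps hbar (hB β hβ0) (Real.rpow_pos_of_pos hA2 (-(1/4 : ℝ))).le]
    have hc2 : ((2*π*β^2) ^ (-(1/4 : ℝ)))^2 = (2*π*β^2) ^ (-(1/2 : ℝ)) := by
      rw [← Real.rpow_natCast ((2*π*β^2) ^ (-(1/4 : ℝ))) 2, ← Real.rpow_mul hA2.le]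
      norm_num
    have hexp2 : (Real.exp (-((x - xs)^2 / (4*β^2))))^2
        = Real.exp (-(x - xs)^2 / (2*β^2)) := by
      rw [sq, ← Real.exp_add]
      congr 1
      field_simp
      ring
    rw [mul_pow, mul_pow, mul_pow, hc2, hexp2, sq_abs, hK_def]
    ring
  -- the normalization integral
  have hfcont : Continuous (fun x : ℝ => Real.exp (-(x - xs)^2 / (2*β^2)) * (η x)^2) :=
    (gauss_cont β xs).mul (hηcont.pow 2)
  set I : ℝ := ∫ x in Set.Icc (-l) l, Real.exp (-(x - xs)^2 / (2*β^2)) * (η x)^2 with hI_def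
  have hKI : K * I = 1 := by
    rw [← hnorm β hβ0, hI_def, ← MeasureTheory.integral_const_mul]
    exact (MeasureTheory.setIntegral_congr_fun measurableSet_Icc fun x _ => hψsq x).symm
  have hIlow : Real.exp (-(1/2 : ℝ)) * (2*β) ≤ I :=
    Ibound β xs d l η hβ0 hβd hηcont hηnn hηone hll
  have hIpos : 0 < I := lt_of_lt_of_le (by positivity) hIlow
  -- the moment integral
  set J : ℝ := ∫ x in Set.Icc (-l) l,
    ((x - xs)^2 - β^2) * (Real.exp (-(x - xs)^2 / (2*β^2)) * (η x)^2) with hJ_def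
  have hmom : (∫ x in Set.Icc (-l) l, (x - xs)^2 * ‖ψ β x‖^2) - β^2 = K * J := by
    have e1 : (∫ x in Set.Icc (-l) l, (x - xs)^2 * ‖ψ β x‖^2)
        = K * ∫ x in Set.Icc (-l) l,
            (x - xs)^2 * (Real.exp (-(x - xs)^2 / (2*β^2)) * (η x)^2) := by
      rw [← MeasureTheory.integral_const_mul]
      apply MeasureTheory.setIntegral_congr_fun measurableSet_Icc
      intro x _
      dsimp only
      rw [hψsq x]; ring
    have e2 : J = (∫ x in Set.Icc (-l) l,
        (x - xs)^2 * (Real.exp (-(x - xs)^2 / (2*β^2)) * (η x)^2)) - β^2 * I := by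
      rw [hJ_def, hI_def, ← MeasureTheory.integral_const_mul, ← MeasureTheory.integral_sub]
      · apply MeasureTheory.setIntegral_congr_fun measurableSet_Icc
        intro x _
        dsimp only
        ring
      · exact (((continuous_id.sub continuous_const).pow 2).mul hfcont).integrableOn_Icc
      · exact (continuous_const.mul hfcont).integrableOn_Icc
    rw [e1, e2, mul_sub, show K * (β^2 * I) = β^2 * (K * I) by ring, hKI, mul_one]
  have hJb : |J| ≤ 4 * β^2 * d * Real.exp (-d^2 / (2*β^2)) :=
    Jbound β xs d l η hβ0 hβd hηcont hηnn hηle hηone hll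
  -- putting it together
  have hKinv : K = 1 / I := by
    rw [eq_div_iff (ne_of_gt hIpos)]; exact hKI
  have hbound : ‖(∫ x in Set.Icc (-l) l, (x - xs)^2 * ‖ψ β x‖^2) - β^2‖
      ≤ (4 * β^2 * d * Real.exp (-d^2 / (2*β^2))) / (Real.exp (-(1/2 : ℝ)) * (2*β)) := by
    rw [hmom, Real.norm_eq_abs, abs_mul, abs_of_pos hK, hKinv]
    rw [one_div, ← div_eq_inv_mul]
    apply div_le_div₀ (by positivity) hJb (by positivity) hIlow
  refine le_trans hbound (le_of_eq ?_)
  rw [Real.norm_eq_abs, abs_mul, abs_of_pos hβ0,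
    abs_of_pos (Real.exp_pos (-d^2 / (2*β^2)))]
  have hexpne : Real.exp (-(1/2 : ℝ)) ≠ 0 := (Real.exp_pos _).ne'
  field_simp
end

section
/- Let α > 0, k* ∈ ℤ, and let A_α > 0 be determined by A_α²·Σ_{k∈ℤ} e^{−(k−k*)²/(2α²)} = 1. Then, as α → ∞, A_α = (2πα²)^{−1/4} + O(α^{−1/2}·e^{−2(πα)²}). -/
open Real MeasureTheory Filter Asymptotics Topology

lemma summable_exp_neg_sq {c : ℝ} (hc : 0 < c) :
    Summable fun n : ℤ => Real.exp (-c * (n : ℝ) ^ 2) := by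
  apply Summable.of_nat_of_neg <;>
  · refine Summable.of_nonneg_of_le (fun n => (Real.exp_pos _).le) (fun n => ?_)
      (summable_geometric_of_lt_one (Real.exp_pos (-c)).le
        (Real.exp_lt_one_iff.mpr (by linarith)))
    rw [← Real.exp_nat_mul]
    apply Real.exp_le_exp.mpr
    push_cast
    nlinarith [mul_nonneg hc.le (show (0:ℝ) ≤ (n:ℝ)^2 - n by
      have : (n:ℝ) ≤ (n:ℝ)^2 := by exact_mod_cast Nat.le_self_pow two_ne_zero n
      linarith)]

set_option maxHeartbeats 1600000 in
/-- Normalization constant of the theta-type squeezed states: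
`A_α = (2πα²)^(-1/4) + O(α^(-1/2)·exp(-2(πα)²))` as `α → ∞`. -/
theorem theta_state_normalization
    (kstar : ℤ) (A : ℝ → ℝ)
    (hApos : ∀ α : ℝ, 0 < α → 0 < A α)
    (hAnorm : ∀ α : ℝ, 0 < α →
      (A α) ^ 2 * ∑' k : ℤ, Real.exp (-((k : ℝ) - (kstar : ℝ)) ^ 2 / (2 * α ^ 2)) = 1) :
    (fun α : ℝ => A α - (2 * π * α ^ 2) ^ (-(1/4 : ℝ))) =O[atTop]
      (fun α : ℝ => α ^ (-(1/2 : ℝ)) * Real.exp (-2 * (π * α) ^ 2)) := by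
  have hπ := Real.pi_pos
  set D : ℝ := ∑' n : ℤ, (if n = 0 then (0:ℝ) else Real.exp (-(2*π^2) * ((n:ℝ)^2 - 1)))
    with hD
  have hDsummable : Summable fun n : ℤ =>
      (if n = 0 then (0:ℝ) else Real.exp (-(2*π^2) * ((n:ℝ)^2 - 1))) := by
    refine Summable.of_nonneg_of_le
      (fun n => by by_cases h : n = 0 <;> simp [h, (Real.exp_pos _).le]) (fun n => ?_)
      ((summable_exp_neg_sq (show (0:ℝ) < 2*π^2 by positivity)).mul_left (Real.exp (2*π^2)))
    by_cases h : n = 0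
    · simp [h, (Real.exp_pos _).le]
    · simp only [h, if_false]
      rw [← Real.exp_add]
      exact le_of_eq (by congr 1; ring)
  have hD0 : 0 ≤ D := tsum_nonneg (fun n => by by_cases h : n = 0 <;>
    simp [h, (Real.exp_pos _).le])
  clear_value D
  rw [isBigO_iff]
  refine ⟨D, ?_⟩
  filter_upwards [eventually_ge_atTop 1] with α hα1
  have hα0 : (0:ℝ) < α := lt_of_lt_of_le one_pos hα1
  set c : ℝ := 2 * π^2 * α^2 with hc
  have hcpos : 0 < c := by positivity
  set T : ℝ := ∑' n : ℤ, Real.exp (-c * (n:ℝ)^2) with hTdef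
  have hTsum : Summable fun n : ℤ => Real.exp (-c * (n:ℝ)^2) := summable_exp_neg_sq hcpos
  clear_value c T
  -- Poisson summation step
  have hS : (∑' k : ℤ, Real.exp (-((k : ℝ) - (kstar : ℝ)) ^ 2 / (2 * α ^ 2)))
      = (2*π*α^2) ^ ((1:ℝ)/2) * T := by
    have h1 : (∑' k : ℤ, Real.exp (-((k : ℝ) - (kstar : ℝ)) ^ 2 / (2 * α ^ 2)))
        = ∑' j : ℤ, Real.exp (-π * (2*π*α^2)⁻¹ * (j:ℝ)^2) := by
      rw [← (Equiv.addRight kstar).tsum_eq]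
      refine tsum_congr fun j => ?_
      simp only [Equiv.coe_addRight]
      congr 1
      push_cast
      field_simp
      ring
    rw [h1, Real.tsum_exp_neg_mul_int_sq (by positivity)]
    congr 1
    · rw [Real.inv_rpow (by positivity), one_div, inv_inv]
    · rw [hTdef]
      refine tsum_congr fun n => ?_
      have hexp : -π / (2*π*α^2)⁻¹ = -c := by rw [hc]; field_simp
      rw [hexp]
  -- T = 1 + R with 0 ≤ R ≤ exp(-c) * D
  set R : ℝ := ∑' n : ℤ, (if n = 0 then (0:ℝ) else Real.exp (-c * (n:ℝ)^2)) with hR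
  clear_value R
  have hT1 : T = 1 + R := by
    rw [hTdef, hR, Summable.tsum_eq_add_tsum_ite hTsum 0]
    congr 1
    norm_num
  have hR0 : 0 ≤ R := hR ▸ tsum_nonneg (fun n : ℤ => by by_cases h : n = 0 <;>
    simp [h, (Real.exp_pos _).le])
  have hRle : R ≤ Real.exp (-c) * D := by
    rw [hR, hD, ← tsum_mul_left]
    refine Summable.tsum_le_tsum (fun n => ?_) ?_ (hDsummable.mul_left _)
    · by_cases h : n = 0
      · simp [h]
      · simp only [h, if_false]
        rw [← Real.exp_add]
        apply Real.exp_le_exp.mpr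
        have hn : (1:ℝ) ≤ (n:ℝ)^2 := by
          have : (1:ℤ) ≤ n^2 := by
            rcases lt_or_gt_of_ne h with h' | h' <;> nlinarith
          exact_mod_cast this
        have hfac : 0 ≤ 2*π^2 * ((α^2 - 1) * ((n:ℝ)^2 - 1)) :=
          mul_nonneg (by positivity)
            (mul_nonneg (by nlinarith) (by linarith))
        rw [hc]
        nlinarith [hfac]
    · refine Summable.of_nonneg_of_le (fun n => by by_cases h : n = 0 <;>
        simp [h, (Real.exp_pos _).le]) (fun n => ?_) hTsum
      by_cases h : n = 0 <;> simp [h, (Real.exp_pos _).le]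
  -- express A α
  set P : ℝ := (2*π*α^2) ^ ((1:ℝ)/4) with hP
  clear_value P
  have hPpos : 0 < P := by rw [hP]; positivity
  set s : ℝ := Real.sqrt T with hs
  clear_value s
  have hT1' : (1:ℝ) ≤ T := by rw [hT1]; linarith
  have hs1 : 1 ≤ s := by
    rw [hs, show (1:ℝ) = Real.sqrt 1 from (Real.sqrt_one).symm]
    exact Real.sqrt_le_sqrt hT1'
  have hspos : 0 < s := lt_of_lt_of_le one_pos hs1
  have hsq : s^2 = T := by rw [hs]; exact Real.sq_sqrt (by linarith)
  have hps : 0 < P * s := mul_pos hPpos hspos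
  have hA : A α = (P * s)⁻¹ := by
    have hnorm := hAnorm α hα0
    rw [hS] at hnorm
    have hQP : (2*π*α^2) ^ ((1:ℝ)/2) = P^2 := by
      rw [hP, ← Real.rpow_natCast ((2*π*α^2) ^ ((1:ℝ)/4)) 2, ← Real.rpow_mul (by positivity)]
      norm_num
    rw [hQP] at hnorm
    have h2 : A α ^ 2 * (P * s)^2 = 1 := by
      rw [mul_pow, hsq]; exact hnorm
    have h3 : (A α * (P*s) - 1) * (A α * (P*s) + 1) = 0 := by linear_combination h2
    rcases mul_eq_zero.mp h3 with h4 | h4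
    · have : A α * (P * s) = 1 := by linarith
      exact eq_inv_of_mul_eq_one_left this
    · nlinarith [mul_pos (hApos α hα0) hps]
  -- final bound
  have hsinv : s⁻¹ ≤ 1 := inv_le_one_of_one_le₀ hs1
  have hsinv0 : 0 < s⁻¹ := inv_pos.mpr hspos
  have h1s : 1 - s⁻¹ ≤ R := by
    have hss : s * s⁻¹ = 1 := mul_inv_cancel₀ (ne_of_gt hspos)
    nlinarith [mul_nonneg (sub_nonneg.2 hs1) (show (0:ℝ) ≤ s + 1 - s⁻¹ by linarith)]
  have hPα : α ^ ((1:ℝ)/2) ≤ P := by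
    rw [hP]
    calc α ^ ((1:ℝ)/2) = (α^2) ^ ((1:ℝ)/4) := by
          rw [← Real.rpow_natCast α 2, ← Real.rpow_mul hα0.le]; norm_num
      _ ≤ (2*π*α^2) ^ ((1:ℝ)/4) := by
          have hle : α^2 ≤ 2*π*α^2 := by nlinarith [Real.pi_gt_three, sq_nonneg α]
          exact Real.rpow_le_rpow (by positivity) hle (by norm_num)
  have hα12 : 0 < α ^ ((1:ℝ)/2) := Real.rpow_pos_of_pos hα0 _
  have hPinv : P⁻¹ ≤ α ^ (-(1/2:ℝ)) := by
    rw [show (-(1/2:ℝ)) = -((1:ℝ)/2) by norm_num, Real.rpow_neg hα0.le]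
    exact inv_anti₀ hα12 hPα
  have hPneg : (2*π*α^2) ^ (-(1/4:ℝ)) = P⁻¹ := by
    rw [hP, show (-(1/4:ℝ)) = -((1:ℝ)/4) by norm_num, Real.rpow_neg (by positivity)]
  have hexp : Real.exp (-c) = Real.exp (-2*(π*α)^2) := by rw [hc]; congr 1; ring
  have hEpos : 0 < α ^ (-(1/2:ℝ)) * Real.exp (-2*(π*α)^2) := by positivity
  rw [hA, hPneg, Real.norm_eq_abs, Real.norm_eq_abs, abs_of_pos hEpos]
  have hlhs : (P*s)⁻¹ - P⁻¹ = -(P⁻¹ * (1 - s⁻¹)) := by field_simp; ring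
  rw [hlhs, abs_neg, abs_of_nonneg (mul_nonneg (inv_nonneg.mpr hPpos.le) (by linarith))]
  calc P⁻¹ * (1 - s⁻¹) ≤ α ^ (-(1/2:ℝ)) * (Real.exp (-c) * D) :=
        mul_le_mul hPinv (le_trans h1s hRle) (by linarith)
          (le_of_lt (Real.rpow_pos_of_pos hα0 _))
    _ = D * (α ^ (-(1/2:ℝ)) * Real.exp (-2*(π*α)^2)) := by rw [hexp]; ring
end

section
/- Let l > 0, x* ∈ (−l, l), p* ∈ ℝ, ħ > 0, and let φ be an even probability density on ℝ, attaining its maximum at 0 and nonincreasing in |q|, with zero mean and finite nonzero second moment Δq² > 0. Let ψ_α be the wave packet built by discretizing φ. Then for every α > 0 the mean momentum equals p̄_α = (π/l)ħ·k̄ (so |p̄_α − p*| ≤ (π/l)ħ), and the limit lim_{α→∞} Δ*p_α/α exists and is a nonzero constant. -/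
open Real MeasureTheory Filter Asymptotics Topology

namespace DiscretizedPacketAux

open intervalIntegral

/-- The mass of the `j`-th unit cell for the scaled density `x ↦ α⁻¹ f (x/α)`. -/
noncomputable def cell (f : ℝ → ℝ) (α : ℝ) (j : ℤ) : ℝ :=
  ∫ x in ((j : ℝ) - 1/2)..((j : ℝ) + 1/2), α⁻¹ * f (x / α)

lemma hasSum_cellInt {F : ℝ → ℝ} (hF : Integrable F) :
    HasSum (fun j : ℤ => ∫ x in ((j : ℝ) - 1/2)..((j : ℝ) + 1/2), F x) (∫ x, F x) := by
  have h := hF.hasSum_intervalIntegral (μ := volume) (-(1/2))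
  have e : (fun j : ℤ => ∫ x in ((j : ℝ) - 1/2)..((j : ℝ) + 1/2), F x)
      = fun n : ℤ => ∫ x in (-(1/2) + (n : ℝ))..(-(1/2) + (n : ℝ) + 1), F x := by
    funext j
    congr 1 <;> ring
  rw [e]
  exact h

variable {f : ℝ → ℝ} {α : ℝ}

lemma cell_nonneg (hf0 : ∀ q, 0 ≤ f q) (hα : 0 < α) (j : ℤ) : 0 ≤ cell f α j := by
  apply intervalIntegral.integral_nonneg (by linarith : ((j:ℝ) - 1/2) ≤ (j:ℝ) + 1/2)
  intro x _
  exact mul_nonneg (inv_nonneg.2 hα.le) (hf0 _)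

lemma int_comp_div {g : ℝ → ℝ} (hg : Integrable g) (hα : 0 < α) :
    Integrable fun x => g (x / α) := by
  have e : (fun x : ℝ => g (x / α)) = fun x => g (α⁻¹ * x) := by
    funext x; rw [div_eq_inv_mul]
  rw [e]
  exact (integrable_comp_mul_left_iff g (inv_ne_zero hα.ne')).2 hg

lemma FInt (hf : Integrable f) (hα : 0 < α) : Integrable fun x => α⁻¹ * f (x / α) :=
  (int_comp_div hf hα).const_mul _

lemma FInt1 (hf : Integrable f) (h1 : ∫ q, f q = 1) (hα : 0 < α) :
    ∫ x, α⁻¹ * f (x / α) = 1 := by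
  rw [MeasureTheory.integral_const_mul, Measure.integral_comp_div f α, smul_eq_mul, h1, abs_of_pos hα]
  field_simp

lemma hasSum_cell (hf : Integrable f) (h1 : ∫ q, f q = 1) (hα : 0 < α) :
    HasSum (cell f α) 1 := by
  have h := hasSum_cellInt (FInt hf hα)
  rwa [FInt1 hf h1 hα] at h

lemma cell_neg (heven : ∀ q, f (-q) = f q) (j : ℤ) : cell f α (-j) = cell f α j := by
  unfold cell
  have h := intervalIntegral.integral_comp_neg (a := (j:ℝ) - 1/2) (b := (j:ℝ) + 1/2)
      (f := fun x => α⁻¹ * f (x / α))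
  have e : (fun x : ℝ => α⁻¹ * f (-x / α)) = fun x => α⁻¹ * f (x / α) := by
    funext x; rw [neg_div, heven]
  rw [show ((-j : ℤ) : ℝ) - 1/2 = -((j:ℝ) + 1/2) by push_cast; ring,
    show ((-j : ℤ) : ℝ) + 1/2 = -((j:ℝ) - 1/2) by push_cast; ring, ← h]
  simp only [neg_div, heven]

lemma integrable_absmul (hf0 : ∀ q, 0 ≤ f q) (hf : Integrable f)
    (hf2 : Integrable fun q => q ^ 2 * f q) : Integrable fun q => |q| * f q := by
  refine (hf.add hf2).mono' (continuous_abs.aestronglyMeasurable.mul hf.1)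
    (ae_of_all _ fun q => ?_)
  have h0 := hf0 q
  rw [Real.norm_eq_abs, abs_of_nonneg (mul_nonneg (abs_nonneg q) h0)]
  have h1 : |q| ≤ 1 + q ^ 2 := by nlinarith [sq_abs q, abs_nonneg q]
  simp only [Pi.add_apply]
  nlinarith


set_option maxHeartbeats 1000000 in
lemma cell_moment (hf0 : ∀ q, 0 ≤ f q) (hf : Integrable f) (h1 : ∫ q, f q = 1)
    (hf2 : Integrable fun q => q ^ 2 * f q) (hα : 0 < α) :
    Summable (fun j : ℤ => ((j : ℝ)) ^ 2 * cell f α j) ∧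
    |(∑' j : ℤ, ((j : ℝ)) ^ 2 * cell f α j) - α ^ 2 * ∫ q, q ^ 2 * f q|
      ≤ α * (∫ q, |q| * f q) + 1 := by
  have hab : ∀ j : ℤ, ((j:ℝ) - 1/2) ≤ (j:ℝ) + 1/2 := fun j => by linarith
  set F : ℝ → ℝ := fun x => α⁻¹ * f (x / α) with hFdef
  have hFInt : Integrable F := FInt hf hα
  have hF0 : ∀ x, 0 ≤ F x := fun x => mul_nonneg (inv_nonneg.2 hα.le) (hf0 _)
  -- x^2 * F
  have hq2F_eq : (fun x : ℝ => x ^ 2 * F x) = fun x => α * ((x / α) ^ 2 * f (x / α)) := by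
    funext x
    simp only [hFdef]
    field_simp
  have hq2F : Integrable fun x => x ^ 2 * F x := by
    rw [hq2F_eq]
    exact (int_comp_div (g := fun u => u ^ 2 * f u) hf2 hα).const_mul α
  have hq2F_int : ∫ x, x ^ 2 * F x = α ^ 2 * ∫ q, q ^ 2 * f q := by
    rw [hq2F_eq, MeasureTheory.integral_const_mul,
      Measure.integral_comp_div (fun u => u ^ 2 * f u) α, smul_eq_mul, abs_of_pos hα]
    ring
  -- (|x|+1) * F
  have habsF_eq : (fun x : ℝ => (|x| + 1) * F x)
      = fun x => |x / α| * f (x / α) + F x := by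
    funext x
    have hx : |x| * α⁻¹ = |x / α| := by
      rw [abs_div, abs_of_pos hα, div_eq_mul_inv]
    calc (|x| + 1) * F x = |x| * α⁻¹ * f (x / α) + F x := by simp only [hFdef]; ring
      _ = |x / α| * f (x / α) + F x := by rw [hx]
  have habsF : Integrable fun x => (|x| + 1) * F x := by
    rw [habsF_eq]
    exact (int_comp_div (g := fun u => |u| * f u) (integrable_absmul hf0 hf hf2) hα).add hFInt
  have habsF_int : ∫ x, (|x| + 1) * F x = α * (∫ q, |q| * f q) + 1 := by
    rw [habsF_eq, integral_add (int_comp_div (g := fun u => |u| * f u)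
        (integrable_absmul hf0 hf hf2) hα) hFInt,
      Measure.integral_comp_div (fun u => |u| * f u) α, smul_eq_mul, abs_of_pos hα,
      FInt1 hf h1 hα]
  -- cell sums
  have hcell_eq : ∀ j : ℤ, cell f α j = ∫ x in ((j:ℝ) - 1/2)..((j:ℝ) + 1/2), F x := fun j => rfl
  have scell : Summable (cell f α) := (hasSum_cell hf h1 hα).summable
  have hd2 : HasSum (fun j : ℤ => ∫ x in ((j:ℝ) - 1/2)..((j:ℝ) + 1/2), x ^ 2 * F x)
      (α ^ 2 * ∫ q, q ^ 2 * f q) := by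
    have h := hasSum_cellInt hq2F
    rwa [hq2F_int] at h
  have hdA : HasSum (fun j : ℤ => ∫ x in ((j:ℝ) - 1/2)..((j:ℝ) + 1/2), (|x| + 1) * F x)
      (α * (∫ q, |q| * f q) + 1) := by
    have h := hasSum_cellInt habsF
    rwa [habsF_int] at h
  -- pointwise j² bound
  have key1 : ∀ j : ℤ, ((j:ℝ)) ^ 2 * cell f α j
      = ∫ x in ((j:ℝ) - 1/2)..((j:ℝ) + 1/2), ((j:ℝ)) ^ 2 * F x := by
    intro j
    rw [intervalIntegral.integral_const_mul, hcell_eq]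
  have hpt : ∀ (j : ℤ) (x : ℝ), x ∈ Set.Icc ((j:ℝ) - 1/2) ((j:ℝ) + 1/2) →
      |((j:ℝ)) ^ 2 - x ^ 2| ≤ |x| + 1 := by
    intro j x hx
    obtain ⟨h1x, h2x⟩ := hx
    have hd : |(j:ℝ) - x| ≤ 1/2 := abs_le.2 ⟨by linarith, by linarith⟩
    have h2 : |(j:ℝ)| ≤ |x| + 1/2 := by
      have h := abs_sub_abs_le_abs_sub (j:ℝ) x
      linarith
    have h3 : |x| ≤ |(j:ℝ)| + 1/2 := by
      have h := abs_sub_abs_le_abs_sub x (j:ℝ)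
      rw [abs_sub_comm] at h
      linarith
    rw [abs_le]
    constructor
    · nlinarith [sq_abs x, sq_abs ((j:ℝ)), abs_nonneg x, abs_nonneg ((j:ℝ))]
    · nlinarith [sq_abs x, sq_abs ((j:ℝ)), abs_nonneg x, abs_nonneg ((j:ℝ))]
  have hptle : ∀ (j : ℤ) (x : ℝ), x ∈ Set.Icc ((j:ℝ) - 1/2) ((j:ℝ) + 1/2) →
      ((j:ℝ)) ^ 2 * F x ≤ x ^ 2 * F x + (|x| + 1) * F x := by
    intro j x hx
    have h := (abs_le.1 (hpt j x hx)).2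
    nlinarith [hF0 x, mul_le_mul_of_nonneg_right h (hF0 x)]
  -- summability of j² * cell
  have hsum2 : Summable fun j : ℤ => ((j:ℝ)) ^ 2 * cell f α j := by
    refine Summable.of_nonneg_of_le
      (f := fun j : ℤ => (∫ x in ((j:ℝ) - 1/2)..((j:ℝ) + 1/2), x ^ 2 * F x)
        + (∫ x in ((j:ℝ) - 1/2)..((j:ℝ) + 1/2), (|x| + 1) * F x))
      (fun j => mul_nonneg (sq_nonneg _) (cell_nonneg hf0 hα j))
      (fun j => ?_) (hd2.summable.add hdA.summable)
    rw [key1]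
    have hmono := intervalIntegral.integral_mono_on (hab j)
      (hFInt.intervalIntegrable.const_mul ((j:ℝ) ^ 2))
      (hq2F.intervalIntegrable.add habsF.intervalIntegrable) (hptle j)
    rwa [intervalIntegral.integral_add hq2F.intervalIntegrable
      habsF.intervalIntegrable] at hmono
  refine ⟨hsum2, ?_⟩
  -- difference of the tsum and the integral
  have hdiff_eq : ∀ j : ℤ, ((j:ℝ)) ^ 2 * cell f α j
        - (∫ x in ((j:ℝ) - 1/2)..((j:ℝ) + 1/2), x ^ 2 * F x)
      = ∫ x in ((j:ℝ) - 1/2)..((j:ℝ) + 1/2), (((j:ℝ)) ^ 2 - x ^ 2) * F x := by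
    intro j
    rw [key1, ← intervalIntegral.integral_sub
      (hFInt.intervalIntegrable.const_mul ((j:ℝ) ^ 2)) hq2F.intervalIntegrable]
    congr 1
    funext x
    ring
  have hdiff_bound : ∀ j : ℤ, |((j:ℝ)) ^ 2 * cell f α j
        - (∫ x in ((j:ℝ) - 1/2)..((j:ℝ) + 1/2), x ^ 2 * F x)|
      ≤ ∫ x in ((j:ℝ) - 1/2)..((j:ℝ) + 1/2), (|x| + 1) * F x := by
    intro j
    rw [hdiff_eq j, abs_le]
    have hiL : IntervalIntegrable (fun x => (((j:ℝ)) ^ 2 - x ^ 2) * F x) volume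
        ((j:ℝ) - 1/2) ((j:ℝ) + 1/2) := by
      have : (fun x => (((j:ℝ)) ^ 2 - x ^ 2) * F x)
          = fun x => ((j:ℝ)) ^ 2 * F x - x ^ 2 * F x := by funext x; ring
      rw [this]
      exact (hFInt.intervalIntegrable.const_mul _).sub hq2F.intervalIntegrable
    constructor
    · rw [← intervalIntegral.integral_neg]
      refine intervalIntegral.integral_mono_on (hab j)
        (habsF.intervalIntegrable.neg) hiL (fun x hx => ?_)
      have h := (abs_le.1 (hpt j x hx)).1
      have hm := mul_le_mul_of_nonneg_right h (hF0 x)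
      nlinarith [hF0 x]
    · refine intervalIntegral.integral_mono_on (hab j) hiL habsF.intervalIntegrable
        (fun x hx => ?_)
      exact mul_le_mul_of_nonneg_right (abs_le.1 (hpt j x hx)).2 (hF0 x)
  have hsplit : (∑' j : ℤ, ((j:ℝ)) ^ 2 * cell f α j) - α ^ 2 * ∫ q, q ^ 2 * f q
      = ∑' j : ℤ, (((j:ℝ)) ^ 2 * cell f α j
          - ∫ x in ((j:ℝ) - 1/2)..((j:ℝ) + 1/2), x ^ 2 * F x) := by
    rw [Summable.tsum_sub hsum2 hd2.summable, hd2.tsum_eq]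
  rw [hsplit, ← hdA.tsum_eq, abs_le]
  have hus : Summable (fun j : ℤ => ((j:ℝ)) ^ 2 * cell f α j
      - ∫ x in ((j:ℝ) - 1/2)..((j:ℝ) + 1/2), x ^ 2 * F x) := hsum2.sub hd2.summable
  constructor
  · have h := Summable.tsum_le_tsum (f := fun j : ℤ =>
        -(∫ x in ((j:ℝ) - 1/2)..((j:ℝ) + 1/2), (|x| + 1) * F x))
      (fun j => (abs_le.1 (hdiff_bound j)).1) hdA.summable.neg hus
    rwa [tsum_neg] at h
  · exact Summable.tsum_le_tsum (fun j => (abs_le.1 (hdiff_bound j)).2) hus hdA.summable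

end DiscretizedPacketAux
open DiscretizedPacketAux

set_option maxHeartbeats 1000000 in
/-- For the wave packets obtained by discretizing an even, unimodal
momentum density `φ` with nonzero second moment: the mean momentum equals `(π/l)ħ·k̄`
for every `α > 0` (so `|p̄_α - p*| ≤ (π/l)ħ`), and `Δ*p_α/α` tends to a nonzero constant
as `α → ∞`. -/
theorem discretized_packet_momentum
    (l xs ps hbar : ℝ) (hl : 0 < l) (hxs : xs ∈ Set.Ioo (-l) l) (hhbar : 0 < hbar)
    (φ : ℝ → ℝ) (hφ0 : ∀ q : ℝ, 0 ≤ φ q) (hφint : ∫ q : ℝ, φ q = 1)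
    (hφmean : ∫ q : ℝ, q * φ q = 0)
    (hφ2 : MeasureTheory.Integrable (fun q : ℝ => q ^ 2 * φ q))
    (hφeven : ∀ q : ℝ, φ (-q) = φ q)
    (hφmax : ∀ q : ℝ, φ q ≤ φ 0)
    (hφmono : ∀ q q' : ℝ, |q| ≤ |q'| → φ q' ≤ φ q)
    (hΔq : 0 < ∫ q : ℝ, q ^ 2 * φ q)
    (kbar : ℤ) (hkbar : kbar = round (l * ps / (π * hbar)))
    (a : ℝ → ℤ → ℝ)
    (ha : ∀ α : ℝ, 0 < α → ∀ k : ℤ, a α k =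
      Real.sqrt (∫ q in ((k : ℝ) - 1/2)..((k : ℝ) + 1/2),
        α⁻¹ * (π / l * φ (π / l * ((q - (kbar : ℝ)) / α)))))
    (pbar : ℝ → ℝ)
    (hpbar : ∀ α : ℝ, 0 < α → pbar α = ∑' k : ℤ, (π / l * hbar * (k : ℝ)) * (a α k) ^ 2) :
    (∀ α : ℝ, 0 < α → pbar α = π / l * hbar * (kbar : ℝ)) ∧
    |π / l * hbar * (kbar : ℝ) - ps| ≤ π / l * hbar ∧
    ∃ c : ℝ, c ≠ 0 ∧
      Tendsto (fun α : ℝ =>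
          Real.sqrt (∑' k : ℤ, (π / l * hbar * (k : ℝ) - pbar α) ^ 2 * (a α k) ^ 2) / α)
        atTop (𝓝 c) := by
  have hπ : (0:ℝ) < π := Real.pi_pos
  have hc0 : (0:ℝ) < π / l := div_pos hπ hl
  set C : ℝ := π / l * hbar with hCdef
  have hC : 0 < C := mul_pos hc0 hhbar
  have hφInt : Integrable φ := by
    by_contra h
    rw [integral_undef h] at hφint
    norm_num at hφint
  set f : ℝ → ℝ := fun q => π / l * φ (π / l * q) with hfdef
  have hf0 : ∀ q, 0 ≤ f q := fun q => mul_nonneg hc0.le (hφ0 _)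
  have hfInt : Integrable f :=
    ((integrable_comp_mul_left_iff φ hc0.ne').2 hφInt).const_mul _
  have hf1 : ∫ q, f q = 1 := by
    simp only [hfdef]
    rw [MeasureTheory.integral_const_mul, Measure.integral_comp_mul_left φ (π / l),
      smul_eq_mul, hφint, abs_of_pos (inv_pos.2 hc0)]
    field_simp
  have hfeven : ∀ q, f (-q) = f q := by
    intro q
    simp only [hfdef, mul_neg, hφeven]
  have hf2eq : (fun q : ℝ => q ^ 2 * f q)
      = fun q => (π / l)⁻¹ * ((π / l * q) ^ 2 * φ (π / l * q)) := by
    funext q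
    simp only [hfdef]
    field_simp
  have hf2Int : Integrable (fun q => q ^ 2 * f q) := by
    rw [hf2eq]
    exact ((integrable_comp_mul_left_iff (fun u => u ^ 2 * φ u) hc0.ne').2 hφ2).const_mul _
  have hfM2 : ∫ q, q ^ 2 * f q = (π / l)⁻¹ ^ 2 * ∫ q, q ^ 2 * φ q := by
    rw [hf2eq, MeasureTheory.integral_const_mul,
      Measure.integral_comp_mul_left (fun u => u ^ 2 * φ u) (π / l), smul_eq_mul,
      abs_of_pos (inv_pos.2 hc0)]
    ring
  have hM2pos : 0 < ∫ q, q ^ 2 * f q := by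
    rw [hfM2]
    exact mul_pos (pow_pos (inv_pos.2 hc0) 2) hΔq
  -- (a α k)² is the cell mass
  have haSq : ∀ α : ℝ, 0 < α → ∀ k : ℤ, (a α k) ^ 2 = cell f α (k - kbar) := by
    intro α hα k
    rw [ha α hα k, Real.sq_sqrt]
    · have e1 : (∫ q in ((k:ℝ) - 1/2)..((k:ℝ) + 1/2),
          α⁻¹ * (π / l * φ (π / l * ((q - (kbar:ℝ)) / α))))
          = ∫ q in ((k:ℝ) - 1/2)..((k:ℝ) + 1/2),
            (fun x : ℝ => α⁻¹ * f (x / α)) (q - (kbar:ℝ)) := by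
        simp only [hfdef]
      rw [e1, intervalIntegral.integral_comp_sub_right (fun x : ℝ => α⁻¹ * f (x / α)) (kbar:ℝ)]
      unfold cell
      congr 1 <;> push_cast <;> ring
    · apply intervalIntegral.integral_nonneg (by linarith : ((k:ℝ) - 1/2) ≤ (k:ℝ) + 1/2)
      intro x _
      exact mul_nonneg (inv_nonneg.2 hα.le) (mul_nonneg hc0.le (hφ0 _))
  have scellSummable : ∀ α : ℝ, 0 < α → Summable (cell f α) :=
    fun α hα => (hasSum_cell hfInt hf1 hα).summable
  have hjsum : ∀ α : ℝ, 0 < α → Summable (fun j : ℤ => (j:ℝ) * cell f α j) := by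
    intro α hα
    have h2 := (cell_moment hf0 hfInt hf1 hf2Int hα).1
    refine Summable.of_abs (Summable.of_nonneg_of_le (fun j => abs_nonneg _)
      (fun j => ?_) (h2.add (scellSummable α hα)))
    rw [abs_mul, abs_of_nonneg (cell_nonneg hf0 hα j)]
    have h3 : |(j:ℝ)| ≤ (j:ℝ) ^ 2 + 1 := by nlinarith [sq_abs ((j:ℝ)), abs_nonneg ((j:ℝ))]
    nlinarith [cell_nonneg hf0 hα j]
  have hodd : ∀ α : ℝ, 0 < α → ∑' j : ℤ, (j:ℝ) * cell f α j = 0 := by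
    intro α hα
    have h := (Equiv.neg ℤ).tsum_eq (fun j : ℤ => (j:ℝ) * cell f α j)
    simp only [Equiv.neg_apply, Int.cast_neg, cell_neg hfeven, neg_mul] at h
    rw [tsum_neg] at h
    linarith
  have part1 : ∀ α : ℝ, 0 < α → pbar α = C * (kbar:ℝ) := by
    intro α hα
    rw [hpbar α hα]
    calc (∑' k : ℤ, (C * (k : ℝ)) * (a α k) ^ 2)
        = ∑' k : ℤ, C * (k:ℝ) * cell f α (k - kbar) := by
          apply tsum_congr; intro k; rw [haSq α hα k]
      _ = ∑' j : ℤ, C * ((j:ℝ) + (kbar:ℝ)) * cell f α j := by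
          rw [← Equiv.tsum_eq (Equiv.addRight kbar)
            (fun k : ℤ => C * (k:ℝ) * cell f α (k - kbar))]
          apply tsum_congr; intro j
          simp only [Equiv.coe_addRight, add_sub_cancel_right]
          push_cast
          ring
      _ = ∑' j : ℤ, (C * (kbar:ℝ) * cell f α j + C * ((j:ℝ) * cell f α j)) := by
          apply tsum_congr; intro j; ring
      _ = (∑' j : ℤ, C * (kbar:ℝ) * cell f α j) + ∑' j : ℤ, C * ((j:ℝ) * cell f α j) :=
          Summable.tsum_add ((scellSummable α hα).mul_left _) ((hjsum α hα).mul_left _)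
      _ = C * (kbar:ℝ) := by
          rw [tsum_mul_left, tsum_mul_left, (hasSum_cell hfInt hf1 hα).tsum_eq, hodd α hα]
          ring
  have part2 : |C * (kbar:ℝ) - ps| ≤ C := by
    have hk : |l * ps / (π * hbar) - (kbar:ℝ)| ≤ 1/2 := by
      rw [hkbar]
      exact abs_sub_round _
    have hkey : C * (kbar:ℝ) - ps = C * ((kbar:ℝ) - l * ps / (π * hbar)) := by
      rw [hCdef]
      field_simp
    rw [hkey, abs_mul, abs_of_pos hC, abs_sub_comm]
    nlinarith [abs_nonneg (l * ps / (π * hbar) - (kbar:ℝ))]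
  set M2 : ℝ := ∫ q, q ^ 2 * f q with hM2def
  set M1 : ℝ := ∫ q, |q| * f q with hM1def
  set T : ℝ → ℝ := fun α => ∑' j : ℤ, (j:ℝ) ^ 2 * cell f α j with hTdef
  have hTub : ∀ α : ℝ, 0 < α → |T α - α ^ 2 * M2| ≤ α * M1 + 1 :=
    fun α hα => (cell_moment hf0 hfInt hf1 hf2Int hα).2
  have htend0 : Tendsto (fun α : ℝ => T α / α ^ 2 - M2) atTop (𝓝 0) := by
    apply squeeze_zero_norm' (a := fun α : ℝ => M1 / α + 1 / α ^ 2)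
    · filter_upwards [eventually_gt_atTop (0:ℝ)] with α hα
      have h := hTub α hα
      have hα2 : (0:ℝ) < α ^ 2 := by positivity
      rw [Real.norm_eq_abs]
      have e : T α / α ^ 2 - M2 = (T α - α ^ 2 * M2) / α ^ 2 := by field_simp
      rw [e, abs_div, abs_of_pos hα2]
      calc |T α - α ^ 2 * M2| / α ^ 2 ≤ (α * M1 + 1) / α ^ 2 :=
            (div_le_div_iff_of_pos_right hα2).2 h
        _ = M1 / α + 1 / α ^ 2 := by field_simp
    · have h1 : Tendsto (fun α : ℝ => M1 / α) atTop (𝓝 0) :=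
        tendsto_const_nhds.div_atTop tendsto_id
      have h2 : Tendsto (fun α : ℝ => 1 / α ^ 2) atTop (𝓝 0) :=
        tendsto_const_nhds.div_atTop (tendsto_pow_atTop two_ne_zero)
      simpa using h1.add h2
  have hTtend : Tendsto (fun α : ℝ => T α / α ^ 2) atTop (𝓝 M2) := by
    have h := htend0.add_const M2
    simpa using h
  have hsqrt : Tendsto (fun α : ℝ => C * Real.sqrt (T α / α ^ 2)) atTop
      (𝓝 (C * Real.sqrt M2)) := (hTtend.sqrt).const_mul C
  refine ⟨part1, part2, ⟨C * Real.sqrt M2,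
    ne_of_gt (mul_pos hC (Real.sqrt_pos.2 hM2pos)), ?_⟩⟩
  apply hsqrt.congr'
  filter_upwards [eventually_gt_atTop (0:ℝ)] with α hα
  have hT0 : 0 ≤ T α := tsum_nonneg fun j => mul_nonneg (sq_nonneg _) (cell_nonneg hf0 hα j)
  have hsum_eq : (∑' k : ℤ, (C * (k:ℝ) - pbar α) ^ 2 * (a α k) ^ 2) = C ^ 2 * T α := by
    rw [part1 α hα]
    have he := Equiv.tsum_eq (Equiv.subRight kbar)
      (fun j : ℤ => C ^ 2 * ((j:ℝ) ^ 2 * cell f α j))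
    simp only [Equiv.subRight_apply] at he
    calc (∑' k : ℤ, (C * (k:ℝ) - C * (kbar:ℝ)) ^ 2 * (a α k) ^ 2)
        = ∑' k : ℤ, C ^ 2 * ((((k - kbar : ℤ)):ℝ) ^ 2 * cell f α (k - kbar)) := by
          apply tsum_congr; intro k
          rw [haSq α hα k]
          push_cast
          ring
      _ = ∑' j : ℤ, C ^ 2 * ((j:ℝ) ^ 2 * cell f α j) := he
      _ = C ^ 2 * T α := by rw [tsum_mul_left]
  rw [hsum_eq]
  rw [Real.sqrt_mul (sq_nonneg C), Real.sqrt_sq hC.le]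
  have e2 : T α / α ^ 2 = (Real.sqrt (T α) / α) ^ 2 := by
    rw [div_pow, Real.sq_sqrt hT0]
  rw [e2, Real.sqrt_sq (div_nonneg (Real.sqrt_nonneg _) hα.le)]
  ring
end

section
/- Let l > 0, ħ > 0, and let φ be an even probability density on ℝ, attaining its maximum at 0 and nonincreasing in |q|, with zero mean and finite second moment Δq². With the discretized coefficients a_k^{(α)} as below, the mean momentum equals p̄_α = (π/l)ħ·k̄ for every α > 0, and the momentum moment satisfies for every α > 0: −(1/12)((π/l)ħ)²·(1 + (2/α)·φ_l(0)) ≤ Δ*p_α² − (αħΔq)² ≤ (1/6)((π/l)ħ)²·(1 + (2/α)·φ_l(0)). -/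
open Real MeasureTheory Filter Asymptotics Topology

set_option linter.unusedVariables false
set_option linter.unusedTactic false
set_option linter.unnecessarySeqFocus false

lemma pkt_hasSum_partition (f : ℝ → ℝ) (hf : Integrable f) :
    HasSum (fun m : ℤ => ∫ s in Set.Ioc ((m:ℝ)-1/2) ((m:ℝ)+1/2), f s) (∫ s, f s) := by
  have hU : (⋃ m : ℤ, Set.Ioc ((m:ℝ)-1/2) ((m:ℝ)+1/2)) = Set.univ := by
    ext x
    simp only [Set.mem_iUnion, Set.mem_Ioc, Set.mem_univ, iff_true]
    refine ⟨⌈x - 1/2⌉, ?_, ?_⟩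
    · have := Int.ceil_lt_add_one (x - 1/2); linarith
    · have := Int.le_ceil (x - 1/2); linarith
  have h := hasSum_integral_iUnion (μ := volume) (f := f)
    (s := fun m : ℤ => Set.Ioc ((m:ℝ)-1/2) ((m:ℝ)+1/2))
    (fun _ => measurableSet_Ioc)
    (fun m n hmn => by
      simp only [Function.onFun]
      rw [Set.Ioc_disjoint_Ioc]
      rcases lt_or_gt_of_ne hmn with h | h
      · have : (m:ℝ) + 1 ≤ n := by exact_mod_cast h
        exact min_le_of_left_le (le_max_of_le_right (by linarith))
      · have : (n:ℝ) + 1 ≤ m := by exact_mod_cast h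
        exact min_le_of_right_le (le_max_of_le_left (by linarith)))
    (by rw [hU]; exact integrableOn_univ.mpr hf)
  rwa [hU, setIntegral_univ] at h

lemma pkt_Ioi_half (g : ℝ → ℝ) (hgint : Integrable g)
    (hgeven : ∀ s : ℝ, g (-s) = g s) (hgone : ∫ s : ℝ, g s = 1) :
    ∫ s in Set.Ioi (0:ℝ), g s = 1/2 := by
  have h1 : (∫ s in Set.Iic (0:ℝ), g s) + ∫ s in Set.Ioi (0:ℝ), g s = 1 := by
    rw [← Set.compl_Iic]
    rw [integral_add_compl measurableSet_Iic hgint, hgone]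
  have h2 : (∫ s in Set.Iic (0:ℝ), g s) = ∫ s in Set.Ioi (0:ℝ), g s := by
    have := integral_comp_neg_Ioi (0:ℝ) g
    simp only [neg_zero] at this
    rw [← this]
    exact setIntegral_congr_fun measurableSet_Ioi (fun x _ => (hgeven x).symm) |>.symm
  linarith

lemma pkt_tail_sum (g : ℝ → ℝ) (hg0 : ∀ s : ℝ, 0 ≤ g s)
    (hgmono : ∀ s s' : ℝ, |s| ≤ |s'| → g s' ≤ g s) (hgint : Integrable g)
    (t : ℝ) (ht : 0 ≤ t) (M : ℕ) :
    ∑ j ∈ Finset.range M, g (t + 1 + (j:ℝ)) ≤ ∫ s in Set.Ioi (0:ℝ), g s := by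
  have hterm : ∀ j : ℕ, g (t + 1 + (j:ℝ)) ≤ ∫ s in (t+(j:ℝ))..(t+(j:ℝ)+1), g s := by
    intro j
    rw [intervalIntegral.integral_of_le (by linarith)]
    have hb := setIntegral_ge_of_const_le (μ := volume) (c := g (t + 1 + (j:ℝ)))
      (f := g) (s := Set.Ioc (t+(j:ℝ)) (t+(j:ℝ)+1)) measurableSet_Ioc
      (by rw [Real.volume_Ioc]; exact ENNReal.ofReal_ne_top)
      (fun x hx => by
        apply hgmono
        rw [abs_of_pos (lt_of_le_of_lt (by positivity) hx.1),
          abs_of_pos (by positivity : (0:ℝ) < t + 1 + (j:ℝ))]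
        have := hx.2; linarith)
      hgint.integrableOn
    rw [measureReal_def, Real.volume_Ioc] at hb
    have : ENNReal.toReal (ENNReal.ofReal (t+(j:ℝ)+1 - (t+(j:ℝ)))) = 1 := by
      rw [ENNReal.toReal_ofReal (by linarith)]; ring
    rw [this, one_smul] at hb
    exact hb
  calc ∑ j ∈ Finset.range M, g (t + 1 + (j:ℝ))
      ≤ ∑ j ∈ Finset.range M, ∫ s in (t+(j:ℝ))..(t+(j:ℝ)+1), g s :=
        Finset.sum_le_sum (fun j _ => hterm j)
    _ = ∫ s in t..(t+(M:ℝ)), g s := by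
        have := intervalIntegral.sum_integral_adjacent_intervals (μ := volume) (f := g)
          (a := fun k : ℕ => t + (k:ℝ)) (n := M)
          (fun k _ => hgint.intervalIntegrable)
        simp only [Nat.cast_zero, add_zero] at this
        rw [← this]
        apply Finset.sum_congr rfl
        intro j _
        congr 1 <;> push_cast <;> ring
    _ ≤ ∫ s in Set.Ioi (0:ℝ), g s := by
        rcases le_or_gt (t+(M:ℝ)) t with h | h
        · rw [intervalIntegral.integral_of_ge h]
          have : (0:ℝ) ≤ ∫ s in Set.Ioc (t+(M:ℝ)) t, g s :=
            setIntegral_nonneg measurableSet_Ioc (fun x _ => hg0 x)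
          have h2 : (0:ℝ) ≤ ∫ s in Set.Ioi (0:ℝ), g s :=
            setIntegral_nonneg measurableSet_Ioi (fun x _ => hg0 x)
          linarith
        · rw [intervalIntegral.integral_of_le h.le]
          apply setIntegral_mono_set hgint.integrableOn
            (Filter.Eventually.of_forall (fun x => hg0 x))
          apply Filter.Eventually.of_forall
          intro x hx
          exact lt_of_le_of_lt ht hx.1

lemma pkt_sum_le (g : ℝ → ℝ) (hg0 : ∀ s : ℝ, 0 ≤ g s)
    (hgmono : ∀ s s' : ℝ, |s| ≤ |s'| → g s' ≤ g s) (hgint : Integrable g)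
    (r : ℝ) (hr : 0 ≤ r) (M : ℕ) :
    ∑ j ∈ Finset.range M, g (r + (j:ℝ)) ≤ g 0 + ∫ s in Set.Ioi (0:ℝ), g s := by
  rcases M with _ | N
  · simp only [Finset.range_zero, Finset.sum_empty]
    have h2 : (0:ℝ) ≤ ∫ s in Set.Ioi (0:ℝ), g s :=
      setIntegral_nonneg measurableSet_Ioi (fun x _ => hg0 x)
    have := hg0 0; linarith
  · rw [Finset.sum_range_succ']
    have h1 : ∑ j ∈ Finset.range N, g (r + ((j:ℕ)+1:ℕ)) ≤ ∫ s in Set.Ioi (0:ℝ), g s := by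
      have := pkt_tail_sum g hg0 hgmono hgint r hr N
      refine le_trans (le_of_eq (Finset.sum_congr rfl fun j _ => ?_)) this
      congr 1; push_cast; ring
    have h2 : g (r + ((0:ℕ):ℝ)) ≤ g 0 := by
      apply hgmono
      simp [abs_nonneg]
    push_cast at h1 h2 ⊢
    linarith

lemma pkt_core_pointwise (g : ℝ → ℝ) (hg0 : ∀ s : ℝ, 0 ≤ g s)
    (hgmono : ∀ s s' : ℝ, |s| ≤ |s'| → g s' ≤ g s) (hgint : Integrable g)
    (hhalf : ∫ s in Set.Ioi (0:ℝ), g s = 1/2)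
    (t : ℝ) (ht0 : 0 ≤ t) (ht1 : t ≤ 1/2) (M : ℕ) :
    -t^2 * (1 + 2 * g 0) ≤ -t^2 * g t + ∑ j ∈ Finset.range M,
        ((((j:ℝ)+1)^2 - (((j:ℝ)+1)+t)^2) * g (((j:ℝ)+1)+t)
         + (((j:ℝ)+1)^2 - (((j:ℝ)+1)-t)^2) * g (((j:ℝ)+1)-t)) ∧
    -t^2 * g t + ∑ j ∈ Finset.range M,
        ((((j:ℝ)+1)^2 - (((j:ℝ)+1)+t)^2) * g (((j:ℝ)+1)+t)
         + (((j:ℝ)+1)^2 - (((j:ℝ)+1)-t)^2) * g (((j:ℝ)+1)-t))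
      ≤ (2*t - 2*t^2) * (g 0 + 1/2) := by
  set x : ℕ → ℝ := fun j => g (((j:ℝ)+1) - t) with hxdef
  set y : ℕ → ℝ := fun j => g (((j:ℝ)+1) + t) with hydef
  set Sx := ∑ j ∈ Finset.range M, x j with hSxdef
  set Sy := ∑ j ∈ Finset.range M, y j with hSydef
  set Sh := ∑ j ∈ Finset.range M, g ((j:ℝ) + 1/2) with hShdef
  set W := ∑ j ∈ Finset.range M, ((j:ℝ)+1) * (x j - y j) with hWdef
  have hxy : ∀ j : ℕ, y j ≤ x j := by
    intro j
    have hj : (0:ℝ) ≤ (j:ℝ) := Nat.cast_nonneg j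
    apply hgmono
    rw [abs_of_nonneg (by linarith), abs_of_nonneg (by linarith)]
    linarith
  have hx0 : ∀ j : ℕ, 0 ≤ x j := fun j => hg0 _
  have hy0 : ∀ j : ℕ, 0 ≤ y j := fun j => hg0 _
  have hyx : ∀ j : ℕ, x (j+1) ≤ y j := by
    intro j
    apply hgmono
    push_cast
    rw [abs_of_nonneg (by linarith), abs_of_nonneg (by linarith)]
    linarith
  have hW1 : 0 ≤ W := by
    apply Finset.sum_nonneg
    intro j _
    have := hxy j
    have : (0:ℝ) ≤ (j:ℝ)+1 := by positivity
    nlinarith [hxy j]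
  have claim : ∀ m : ℕ, ∑ j ∈ Finset.range m, ((j:ℝ)+1) * (x j - y j)
      ≤ (∑ j ∈ Finset.range m, x j) - (m:ℝ) * x m := by
    intro m
    induction m with
    | zero => simp
    | succ n ih =>
      rw [Finset.sum_range_succ, Finset.sum_range_succ]
      have h1 := hyx n
      have h2 := hxy n
      push_cast
      push_cast at ih
      nlinarith [hx0 (n+1), hy0 n]
  have hW2 : W ≤ Sx := by
    have := claim M
    have h0 : (0:ℝ) ≤ (M:ℝ) * x M := mul_nonneg (Nat.cast_nonneg M) (hx0 M)
    rw [hWdef, hSxdef]; linarith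
  have hSx : Sx ≤ g 0 + 1/2 := by
    have := pkt_sum_le g hg0 hgmono hgint (1 - t) (by linarith) M
    rw [hhalf] at this
    refine le_trans (le_of_eq ?_) this
    apply Finset.sum_congr rfl
    intro j _
    simp only [hxdef]
    congr 1
    ring
  have hSy : Sy ≤ 1/2 := by
    have := pkt_tail_sum g hg0 hgmono hgint t ht0 M
    rw [hhalf] at this
    refine le_trans (le_of_eq ?_) this
    apply Finset.sum_congr rfl
    intro j _
    simp only [hydef]
    congr 1
    ring
  have hSh : Sh ≤ g 0 + 1/2 := by
    have := pkt_sum_le g hg0 hgmono hgint (1/2) (by norm_num) M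
    rw [hhalf] at this
    refine le_trans (le_of_eq ?_) this
    apply Finset.sum_congr rfl
    intro j _
    congr 1
    ring
  have hSxSh : Sx ≤ Sh := by
    apply Finset.sum_le_sum
    intro j _
    apply hgmono
    rw [abs_of_nonneg (by positivity), abs_of_nonneg (by push_cast; linarith)]
    linarith
  have hShSy : Sh - g (1/2) ≤ Sy := by
    have hstep : ∀ j : ℕ, g (((j:ℝ)+1) + 1/2) ≤ y j := by
      intro j
      apply hgmono
      rw [abs_of_nonneg (by positivity), abs_of_nonneg (by positivity)]
      linarith
    have e1 : ∑ j ∈ Finset.range (M+1), g ((j:ℝ) + 1/2)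
        = (∑ j ∈ Finset.range M, g (((j:ℝ)+1) + 1/2)) + g (((0:ℕ):ℝ) + 1/2) := by
      rw [Finset.sum_range_succ']
      congr 1
      apply Finset.sum_congr rfl
      intro j _
      congr 1
      push_cast
      ring
    have e2 : ∑ j ∈ Finset.range (M+1), g ((j:ℝ) + 1/2)
        = Sh + g ((M:ℝ) + 1/2) := by rw [Finset.sum_range_succ]
    have e3 : (0:ℝ) ≤ g ((M:ℝ) + 1/2) := hg0 _
    have e4 : (∑ j ∈ Finset.range M, g (((j:ℝ)+1) + 1/2)) ≤ Sy :=
      Finset.sum_le_sum (fun j _ => hstep j)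
    simp only [Nat.cast_zero, zero_add] at e1
    linarith
  have hg12t : g (1/2) ≤ g t := by
    apply hgmono
    rw [abs_of_nonneg ht0, abs_of_nonneg (by norm_num : (0:ℝ) ≤ 1/2)]
    exact ht1
  have hgt0 : g t ≤ g 0 := by
    apply hgmono
    simp [abs_nonneg]
  have hsum : ∑ j ∈ Finset.range M,
        ((((j:ℝ)+1)^2 - (((j:ℝ)+1)+t)^2) * g (((j:ℝ)+1)+t)
         + (((j:ℝ)+1)^2 - (((j:ℝ)+1)-t)^2) * g (((j:ℝ)+1)-t))
      = 2*t*W - t^2*Sx - t^2*Sy := by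
    rw [hWdef, hSxdef, hSydef, Finset.mul_sum, Finset.mul_sum, Finset.mul_sum,
      ← Finset.sum_sub_distrib, ← Finset.sum_sub_distrib]
    apply Finset.sum_congr rfl
    intro j _
    simp only [hxdef, hydef]
    ring
  rw [hsum]
  have ht2 : (0:ℝ) ≤ t^2 := sq_nonneg t
  constructor
  · nlinarith [mul_le_mul_of_nonneg_left hgt0 ht2, mul_le_mul_of_nonneg_left hSx ht2,
      mul_le_mul_of_nonneg_left hSy ht2, mul_nonneg (by linarith : (0:ℝ) ≤ 2*t) hW1]
  · have c1 : 2*t*W ≤ 2*t*Sx := mul_le_mul_of_nonneg_left hW2 (by linarith)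
    have c2 : (2*t - t^2) * Sx ≤ (2*t - t^2) * Sh :=
      mul_le_mul_of_nonneg_left hSxSh (by nlinarith)
    have c3 : t^2 * (Sh - g (1/2)) ≤ t^2 * Sy := mul_le_mul_of_nonneg_left hShSy ht2
    have c4 : t^2 * g (1/2) ≤ t^2 * g t := mul_le_mul_of_nonneg_left hg12t ht2
    have c5 : (2*t - 2*t^2) * Sh ≤ (2*t - 2*t^2) * (g 0 + 1/2) :=
      mul_le_mul_of_nonneg_left hSh (by nlinarith)
    nlinarith

lemma pkt_Icc_sum (h : ℤ → ℝ) (M : ℕ) :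
    ∑ m ∈ Finset.Icc (-(M:ℤ)) (M:ℤ), h m
      = h 0 + ∑ j ∈ Finset.range M, (h ((j:ℤ)+1) + h (-((j:ℤ)+1))) := by
  induction M with
  | zero => simp
  | succ N ih =>
    have hset : Finset.Icc (-(N+1:ℕ):ℤ) ((N+1:ℕ):ℤ)
        = insert (-(N+1:ℕ):ℤ) (insert ((N+1:ℕ):ℤ) (Finset.Icc (-(N:ℕ):ℤ) (N:ℤ))) := by
      ext m
      simp only [Finset.mem_Icc, Finset.mem_insert]
      push_cast
      omega
    rw [hset, Finset.sum_insert (by simp only [Finset.mem_insert, Finset.mem_Icc]; push_cast; omega),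
      Finset.sum_insert (by simp only [Finset.mem_Icc]; push_cast; omega), ih,
      Finset.sum_range_succ]
    push_cast
    ring

set_option maxHeartbeats 1000000 in
lemma pkt_main (g : ℝ → ℝ) (hg0 : ∀ s : ℝ, 0 ≤ g s) (hgeven : ∀ s : ℝ, g (-s) = g s)
    (hgmono : ∀ s s' : ℝ, |s| ≤ |s'| → g s' ≤ g s)
    (hgint : Integrable g) (hgone : (∫ s : ℝ, g s) = 1)
    (hg2 : Integrable (fun s : ℝ => s^2 * g s)) :
    HasSum (fun m : ℤ => ∫ s in Set.Ioc ((m:ℝ)-1/2) ((m:ℝ)+1/2), g s) 1 ∧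
    Summable (fun m : ℤ => (m:ℝ)^2 * ∫ s in Set.Ioc ((m:ℝ)-1/2) ((m:ℝ)+1/2), g s) ∧
    Summable (fun m : ℤ => (m:ℝ) * ∫ s in Set.Ioc ((m:ℝ)-1/2) ((m:ℝ)+1/2), g s) ∧
    -(1/12) * (1 + 2 * g 0) ≤
      (∑' m : ℤ, (m:ℝ)^2 * ∫ s in Set.Ioc ((m:ℝ)-1/2) ((m:ℝ)+1/2), g s)
        - ∫ s : ℝ, s^2 * g s ∧
    (∑' m : ℤ, (m:ℝ)^2 * ∫ s in Set.Ioc ((m:ℝ)-1/2) ((m:ℝ)+1/2), g s)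
        - (∫ s : ℝ, s^2 * g s) ≤ (1/6) * (1 + 2 * g 0) := by
  have hβ1 : HasSum (fun m : ℤ => ∫ s in Set.Ioc ((m:ℝ)-1/2) ((m:ℝ)+1/2), g s) 1 := by
    have := pkt_hasSum_partition g hgint
    rwa [hgone] at this
  have hβnn : ∀ m : ℤ, 0 ≤ ∫ s in Set.Ioc ((m:ℝ)-1/2) ((m:ℝ)+1/2), g s :=
    fun m => setIntegral_nonneg measurableSet_Ioc (fun x _ => hg0 x)
  have hγint : Integrable (fun s : ℝ => (2*s^2 + 1/2) * g s) := by
    have : (fun s : ℝ => (2*s^2 + 1/2) * g s)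
        = fun s : ℝ => 2 * (s^2 * g s) + (1/2) * g s := by funext s; ring
    rw [this]
    exact ((hg2.const_mul 2).add (hgint.const_mul (1/2)))
  have hγ := pkt_hasSum_partition _ hγint
  have hdom : ∀ m : ℤ, (m:ℝ)^2 * (∫ s in Set.Ioc ((m:ℝ)-1/2) ((m:ℝ)+1/2), g s)
      ≤ ∫ s in Set.Ioc ((m:ℝ)-1/2) ((m:ℝ)+1/2), (2*s^2 + 1/2) * g s := by
    intro m
    rw [← MeasureTheory.integral_const_mul]
    apply setIntegral_mono_on ((hgint.const_mul _).integrableOn) (hγint.integrableOn)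
      measurableSet_Ioc
    intro s hs
    have habs : |(m:ℝ)| ≤ |s| + 1/2 := by
      have h1 : |(m:ℝ) - s| ≤ 1/2 := by
        rw [abs_le]; constructor <;> [linarith [hs.2]; linarith [hs.1]]
      calc |(m:ℝ)| = |((m:ℝ) - s) + s| := by ring_nf
        _ ≤ |(m:ℝ) - s| + |s| := abs_add_le _ _
        _ ≤ |s| + 1/2 := by linarith
    have hm2 : (m:ℝ)^2 ≤ 2*s^2 + 1/2 := by
      have h2 : (m:ℝ)^2 ≤ (|s| + 1/2)^2 := by
        rw [← sq_abs (m:ℝ)]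
        exact pow_le_pow_left₀ (abs_nonneg _) habs 2
      nlinarith [sq_nonneg (|s| - 1/2), sq_abs s]
    exact mul_le_mul_of_nonneg_right hm2 (hg0 s)
  have hsum2 : Summable (fun m : ℤ =>
      (m:ℝ)^2 * ∫ s in Set.Ioc ((m:ℝ)-1/2) ((m:ℝ)+1/2), g s) :=
    Summable.of_nonneg_of_le (fun m => mul_nonneg (sq_nonneg _) (hβnn m)) hdom hγ.summable
  have hsum1 : Summable (fun m : ℤ =>
      (m:ℝ) * ∫ s in Set.Ioc ((m:ℝ)-1/2) ((m:ℝ)+1/2), g s) := by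
    apply Summable.of_abs
    apply Summable.of_nonneg_of_le (fun m => abs_nonneg _)
      (f := fun m : ℤ => (m:ℝ)^2 * (∫ s in Set.Ioc ((m:ℝ)-1/2) ((m:ℝ)+1/2), g s)
        + ∫ s in Set.Ioc ((m:ℝ)-1/2) ((m:ℝ)+1/2), g s)
    · intro m
      rw [abs_mul, abs_of_nonneg (hβnn m)]
      have h1 : |(m:ℝ)| ≤ (m:ℝ)^2 + 1 := by
        nlinarith [sq_abs (m:ℝ), sq_nonneg (|(m:ℝ)| - 1), abs_nonneg (m:ℝ)]
      nlinarith [hβnn m]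
    · exact hsum2.add hβ1.summable
  have h2par := pkt_hasSum_partition _ hg2
  have hδsum : Summable (fun m : ℤ =>
      (m:ℝ)^2 * (∫ s in Set.Ioc ((m:ℝ)-1/2) ((m:ℝ)+1/2), g s)
        - ∫ s in Set.Ioc ((m:ℝ)-1/2) ((m:ℝ)+1/2), s^2 * g s) := hsum2.sub h2par.summable
  have htsum : (∑' m : ℤ, ((m:ℝ)^2 * (∫ s in Set.Ioc ((m:ℝ)-1/2) ((m:ℝ)+1/2), g s)
        - ∫ s in Set.Ioc ((m:ℝ)-1/2) ((m:ℝ)+1/2), s^2 * g s))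
      = (∑' m : ℤ, (m:ℝ)^2 * ∫ s in Set.Ioc ((m:ℝ)-1/2) ((m:ℝ)+1/2), g s)
        - ∫ s : ℝ, s^2 * g s := by
    rw [Summable.tsum_sub hsum2 h2par.summable, h2par.tsum_eq]
  have hint1 : ∀ m : ℤ, Integrable (fun s : ℝ => ((m:ℝ)^2 - s^2) * g s) := by
    intro m
    have : (fun s : ℝ => ((m:ℝ)^2 - s^2) * g s)
        = fun s : ℝ => (m:ℝ)^2 * g s - s^2 * g s := by funext s; ring
    rw [this]
    exact (hgint.const_mul _).sub hg2
  have hII : ∀ (m : ℤ) (a b : ℝ), IntervalIntegrable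
      (fun t : ℝ => ((m:ℝ)^2 - (t+(m:ℝ))^2) * g (t+(m:ℝ))) volume a b := by
    intro m a b
    have h := ((hint1 m).intervalIntegrable
      (a := a+(m:ℝ)) (b := b+(m:ℝ))).comp_add_right (m:ℝ)
    have e1 : a+(m:ℝ)-(m:ℝ) = a := by ring
    have e2 : b+(m:ℝ)-(m:ℝ) = b := by ring
    rwa [e1, e2] at h
  have hδeq : ∀ m : ℤ, (m:ℝ)^2 * (∫ s in Set.Ioc ((m:ℝ)-1/2) ((m:ℝ)+1/2), g s)
        - (∫ s in Set.Ioc ((m:ℝ)-1/2) ((m:ℝ)+1/2), s^2 * g s)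
      = ∫ t in (-(1/2:ℝ))..(1/2:ℝ), ((m:ℝ)^2 - (t+(m:ℝ))^2) * g (t+(m:ℝ)) := by
    intro m
    have hle : ((m:ℝ)-1/2 : ℝ) ≤ (m:ℝ)+1/2 := by linarith
    have e1 : (m:ℝ)^2 * (∫ s in Set.Ioc ((m:ℝ)-1/2) ((m:ℝ)+1/2), g s)
        - (∫ s in Set.Ioc ((m:ℝ)-1/2) ((m:ℝ)+1/2), s^2 * g s)
        = ∫ s in Set.Ioc ((m:ℝ)-1/2) ((m:ℝ)+1/2), ((m:ℝ)^2 - s^2) * g s := by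
      rw [← MeasureTheory.integral_const_mul, ← integral_sub
        (((hgint.const_mul _)).integrableOn) (hg2.integrableOn)]
      apply setIntegral_congr_fun measurableSet_Ioc
      intro s _
      ring
    rw [e1, ← intervalIntegral.integral_of_le hle]
    rw [intervalIntegral.integral_comp_add_right (fun s => ((m:ℝ)^2 - s^2) * g s) (m:ℝ)]
    congr 1 <;> ring
  have hpartial : ∀ M : ℕ,
      -(1/12) * (1 + 2 * g 0) ≤ (∑ m ∈ Finset.Icc (-(M:ℤ)) (M:ℤ),
        ((m:ℝ)^2 * (∫ s in Set.Ioc ((m:ℝ)-1/2) ((m:ℝ)+1/2), g s)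
          - ∫ s in Set.Ioc ((m:ℝ)-1/2) ((m:ℝ)+1/2), s^2 * g s)) ∧
      (∑ m ∈ Finset.Icc (-(M:ℤ)) (M:ℤ),
        ((m:ℝ)^2 * (∫ s in Set.Ioc ((m:ℝ)-1/2) ((m:ℝ)+1/2), g s)
          - ∫ s in Set.Ioc ((m:ℝ)-1/2) ((m:ℝ)+1/2), s^2 * g s))
        ≤ (1/6) * (1 + 2 * g 0) := by
    intro M
    have hΦint : ∀ a b : ℝ, IntervalIntegrable (fun u : ℝ => ∑ m ∈ Finset.Icc (-(M:ℤ)) (M:ℤ),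
        ((m:ℝ)^2 - (u+(m:ℝ))^2) * g (u+(m:ℝ))) volume a b := by
      intro a b
      exact ⟨integrable_finset_sum _ (fun m _ => (hII m a b).1),
        integrable_finset_sum _ (fun m _ => (hII m a b).2)⟩
    have hsplit : (∑ m ∈ Finset.Icc (-(M:ℤ)) (M:ℤ),
        ((m:ℝ)^2 * (∫ s in Set.Ioc ((m:ℝ)-1/2) ((m:ℝ)+1/2), g s)
          - ∫ s in Set.Ioc ((m:ℝ)-1/2) ((m:ℝ)+1/2), s^2 * g s))
        = ∫ t in (-(1/2:ℝ))..(1/2:ℝ), ∑ m ∈ Finset.Icc (-(M:ℤ)) (M:ℤ),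
            ((m:ℝ)^2 - (t+(m:ℝ))^2) * g (t+(m:ℝ)) := by
      rw [Finset.sum_congr rfl (fun m _ => hδeq m)]
      exact (intervalIntegral.integral_finset_sum (fun m _ => hII m _ _)).symm
    have hΦeven : ∀ u : ℝ, (∑ m ∈ Finset.Icc (-(M:ℤ)) (M:ℤ),
          ((m:ℝ)^2 - (-u+(m:ℝ))^2) * g (-u+(m:ℝ)))
        = ∑ m ∈ Finset.Icc (-(M:ℤ)) (M:ℤ), ((m:ℝ)^2 - (u+(m:ℝ))^2) * g (u+(m:ℝ)) := by
      intro u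
      apply Finset.sum_equiv (Equiv.neg ℤ)
      · intro m
        simp only [Finset.mem_Icc, Equiv.neg_apply]
        omega
      · intro m _
        simp only [Equiv.neg_apply, Int.cast_neg]
        have e1 : -u + (m:ℝ) = -(u + -(m:ℝ)) := by ring
        rw [e1, hgeven]
        ring
    have heq2 : (∫ t in (-(1/2:ℝ))..(1/2:ℝ), ∑ m ∈ Finset.Icc (-(M:ℤ)) (M:ℤ),
          ((m:ℝ)^2 - (t+(m:ℝ))^2) * g (t+(m:ℝ)))
        = 2 * ∫ t in (0:ℝ)..(1/2:ℝ), ∑ m ∈ Finset.Icc (-(M:ℤ)) (M:ℤ),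
            ((m:ℝ)^2 - (t+(m:ℝ))^2) * g (t+(m:ℝ)) := by
      have hadd := intervalIntegral.integral_add_adjacent_intervals
        (hΦint (-(1/2)) 0) (hΦint 0 (1/2))
      have hneg : (∫ t in (-(1/2:ℝ))..(0:ℝ), ∑ m ∈ Finset.Icc (-(M:ℤ)) (M:ℤ),
            ((m:ℝ)^2 - (t+(m:ℝ))^2) * g (t+(m:ℝ)))
          = ∫ t in (0:ℝ)..(1/2:ℝ), ∑ m ∈ Finset.Icc (-(M:ℤ)) (M:ℤ),
            ((m:ℝ)^2 - (t+(m:ℝ))^2) * g (t+(m:ℝ)) := by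
        have h := intervalIntegral.integral_comp_neg (a := (0:ℝ)) (b := (1/2:ℝ))
          (fun u : ℝ => ∑ m ∈ Finset.Icc (-(M:ℤ)) (M:ℤ),
            ((m:ℝ)^2 - (u+(m:ℝ))^2) * g (u+(m:ℝ)))
        simp only [neg_zero] at h
        rw [← h]
        apply intervalIntegral.integral_congr
        intro x _
        exact hΦeven x
      linarith
    have hhalf := pkt_Ioi_half g hgint hgeven hgone
    have hΦbound : ∀ u ∈ Set.Icc (0:ℝ) (1/2:ℝ),
        -u^2 * (1 + 2 * g 0) ≤ (∑ m ∈ Finset.Icc (-(M:ℤ)) (M:ℤ),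
            ((m:ℝ)^2 - (u+(m:ℝ))^2) * g (u+(m:ℝ))) ∧
        (∑ m ∈ Finset.Icc (-(M:ℤ)) (M:ℤ), ((m:ℝ)^2 - (u+(m:ℝ))^2) * g (u+(m:ℝ)))
          ≤ (2*u - 2*u^2) * (g 0 + 1/2) := by
      intro u hu
      have hcore := pkt_core_pointwise g hg0 hgmono hgint hhalf u hu.1 hu.2 M
      have hΦP : (∑ m ∈ Finset.Icc (-(M:ℤ)) (M:ℤ), ((m:ℝ)^2 - (u+(m:ℝ))^2) * g (u+(m:ℝ)))
          = -u^2 * g u + ∑ j ∈ Finset.range M,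
          ((((j:ℝ)+1)^2 - (((j:ℝ)+1)+u)^2) * g (((j:ℝ)+1)+u)
           + (((j:ℝ)+1)^2 - (((j:ℝ)+1)-u)^2) * g (((j:ℝ)+1)-u)) := by
        rw [pkt_Icc_sum (fun m : ℤ => ((m:ℝ)^2 - (u+(m:ℝ))^2) * g (u+(m:ℝ))) M]
        congr 1
        · norm_num
        · apply Finset.sum_congr rfl
          intro j _
          push_cast
          have e1 : u + ((j:ℝ)+1) = ((j:ℝ)+1) + u := by ring
          have e2 : u + -((j:ℝ)+1) = -((((j:ℝ)+1) - u)) := by ring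
          rw [e1, e2, hgeven]
          ring
      rw [hΦP]
      exact hcore
    have hc1 : IntervalIntegrable (fun u : ℝ => -u^2 * (1 + 2 * g 0)) volume 0 (1/2) :=
      (((continuous_pow 2).neg.mul continuous_const)).intervalIntegrable _ _
    have hc2 : IntervalIntegrable (fun u : ℝ => (2*u - 2*u^2) * (g 0 + 1/2)) volume 0 (1/2) :=
      ((((continuous_const.mul continuous_id).sub
        (continuous_const.mul (continuous_pow 2))).mul continuous_const)).intervalIntegrable _ _
    have hlow : ∫ u in (0:ℝ)..(1/2:ℝ), (-u^2 * (1 + 2 * g 0))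
        ≤ ∫ t in (0:ℝ)..(1/2:ℝ), ∑ m ∈ Finset.Icc (-(M:ℤ)) (M:ℤ),
            ((m:ℝ)^2 - (t+(m:ℝ))^2) * g (t+(m:ℝ)) := by
      apply intervalIntegral.integral_mono_on (by norm_num) hc1 (hΦint 0 (1/2))
      exact fun u hu => (hΦbound u hu).1
    have hhigh : (∫ t in (0:ℝ)..(1/2:ℝ), ∑ m ∈ Finset.Icc (-(M:ℤ)) (M:ℤ),
            ((m:ℝ)^2 - (t+(m:ℝ))^2) * g (t+(m:ℝ)))
        ≤ ∫ u in (0:ℝ)..(1/2:ℝ), ((2*u - 2*u^2) * (g 0 + 1/2)) := by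
      apply intervalIntegral.integral_mono_on (by norm_num) (hΦint 0 (1/2)) hc2
      exact fun u hu => (hΦbound u hu).2
    have hval1 : ∫ u in (0:ℝ)..(1/2:ℝ), (-u^2 * (1 + 2 * g 0))
        = -(1/24) * (1 + 2 * g 0) := by
      rw [intervalIntegral.integral_mul_const]
      have e : (fun u : ℝ => -u^2) = fun u : ℝ => (-1) * u^2 := by funext u; ring
      rw [e, intervalIntegral.integral_const_mul, integral_pow]
      norm_num
    have hval2 : ∫ u in (0:ℝ)..(1/2:ℝ), ((2*u - 2*u^2) * (g 0 + 1/2))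
        = (1/6) * (g 0 + 1/2) := by
      have e1 : (∫ u in (0:ℝ)..(1/2:ℝ), ((2*u - 2*u^2) * (g 0 + 1/2)))
          = (∫ u in (0:ℝ)..(1/2:ℝ), (2*u^1 - 2*u^2)) * (g 0 + 1/2) := by
        rw [← intervalIntegral.integral_mul_const]
        apply intervalIntegral.integral_congr
        intro x _
        ring
      rw [e1, intervalIntegral.integral_sub (f := fun u : ℝ => 2 * u^1) (g := fun u : ℝ => 2 * u^2)
        (((continuous_const.mul (continuous_pow 1))).intervalIntegrable _ _)
        (((continuous_const.mul (continuous_pow 2))).intervalIntegrable _ _),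
        intervalIntegral.integral_const_mul, intervalIntegral.integral_const_mul,
        integral_pow, integral_pow]
      norm_num
    rw [hsplit, heq2]
    rw [hval1] at hlow
    rw [hval2] at hhigh
    constructor
    · nlinarith
    · nlinarith
  have hT : Tendsto (fun M : ℕ => Finset.Icc (-(M:ℤ)) (M:ℤ)) atTop atTop := by
    apply tendsto_atTop_finset_of_monotone
    · intro a b hab
      apply Finset.Icc_subset_Icc
      · simp only [neg_le_neg_iff]; exact_mod_cast hab
      · exact_mod_cast hab
    · intro m
      exact ⟨m.natAbs, by simp only [Finset.mem_Icc]; omega⟩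
  have hten : Tendsto (fun M : ℕ => ∑ m ∈ Finset.Icc (-(M:ℤ)) (M:ℤ),
      ((m:ℝ)^2 * (∫ s in Set.Ioc ((m:ℝ)-1/2) ((m:ℝ)+1/2), g s)
        - ∫ s in Set.Ioc ((m:ℝ)-1/2) ((m:ℝ)+1/2), s^2 * g s))
      atTop (𝓝 (∑' m : ℤ, ((m:ℝ)^2 * (∫ s in Set.Ioc ((m:ℝ)-1/2) ((m:ℝ)+1/2), g s)
        - ∫ s in Set.Ioc ((m:ℝ)-1/2) ((m:ℝ)+1/2), s^2 * g s))) := hδsum.hasSum.comp hT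
  have hlo := ge_of_tendsto hten (Filter.Eventually.of_forall (fun M => (hpartial M).1))
  have hhi := le_of_tendsto hten (Filter.Eventually.of_forall (fun M => (hpartial M).2))
  rw [htsum] at hlo hhi
  exact ⟨hβ1, hsum2, hsum1, hlo, hhi⟩

set_option maxHeartbeats 1000000 in
/-- (Lemma 3 of the paper, parts 1 and 2a.) For the discretized
coefficients, the mean momentum equals `(π/l)ħ·k̄` for every `α > 0`, and
`-(1/12)((π/l)ħ)²(1+(2/α)φ_l(0)) ≤ Δ*p_α² - (αħΔq)² ≤ (1/6)((π/l)ħ)²(1+(2/α)φ_l(0))`,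
where `φ_l(0) = (π/l)φ(0)` and `(αħΔq)² = (αħ)²·∫q²φ(q)dq`. -/
theorem discretized_packet_momentum_moment_bounds
    (l hbar : ℝ) (hl : 0 < l) (hhbar : 0 < hbar)
    (φ : ℝ → ℝ) (hφ0 : ∀ q : ℝ, 0 ≤ φ q) (hφint : ∫ q : ℝ, φ q = 1)
    (hφmean : ∫ q : ℝ, q * φ q = 0)
    (hφ2 : MeasureTheory.Integrable (fun q : ℝ => q ^ 2 * φ q))
    (hφeven : ∀ q : ℝ, φ (-q) = φ q)
    (hφmax : ∀ q : ℝ, φ q ≤ φ 0)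
    (hφmono : ∀ q q' : ℝ, |q| ≤ |q'| → φ q' ≤ φ q)
    (kbar : ℤ)
    (a : ℝ → ℤ → ℝ)
    (ha : ∀ α : ℝ, 0 < α → ∀ k : ℤ, a α k =
      Real.sqrt (∫ q in ((k : ℝ) - 1/2)..((k : ℝ) + 1/2),
        α⁻¹ * (π / l * φ (π / l * ((q - (kbar : ℝ)) / α)))))
    (pbar : ℝ → ℝ)
    (hpbar : ∀ α : ℝ, 0 < α → pbar α = ∑' k : ℤ, (π / l * hbar * (k : ℝ)) * (a α k) ^ 2)
    (Δp2 : ℝ → ℝ)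
    (hΔp2 : ∀ α : ℝ, 0 < α →
      Δp2 α = ∑' k : ℤ, (π / l * hbar * (k : ℝ) - π / l * hbar * (kbar : ℝ)) ^ 2 * (a α k) ^ 2) :
    ∀ α : ℝ, 0 < α →
      pbar α = π / l * hbar * (kbar : ℝ) ∧
      -(1 / 12) * (π / l * hbar) ^ 2 * (1 + 2 / α * (π / l * φ 0)) ≤
        Δp2 α - (α * hbar) ^ 2 * (∫ q : ℝ, q ^ 2 * φ q) ∧
      Δp2 α - (α * hbar) ^ 2 * (∫ q : ℝ, q ^ 2 * φ q) ≤
        1 / 6 * (π / l * hbar) ^ 2 * (1 + 2 / α * (π / l * φ 0)) := by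
  intro α hα
  have hπ : (0:ℝ) < π := Real.pi_pos
  have hπl : (0:ℝ) < π / l := by positivity
  have hφInt : Integrable φ := by
    by_contra h
    rw [integral_undef h] at hφint
    norm_num at hφint
  set g : ℝ → ℝ := fun s => α⁻¹ * (π / l * φ (π / l * (s / α))) with hgdef
  set c0 : ℝ := π / (l * α) with hc0def
  have hc0 : 0 < c0 := by rw [hc0def]; positivity
  have hargeq : ∀ s : ℝ, π / l * (s / α) = c0 * s := by
    intro s
    rw [hc0def]
    field_simp
  have hgfun : ∀ s : ℝ, g s = c0 * φ (c0 * s) := by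
    intro s
    rw [hgdef]
    simp only
    rw [hargeq s, hc0def]
    field_simp
  have hgfun' : g = fun s => c0 * φ (c0 * s) := funext hgfun
  have hg0 : ∀ s : ℝ, 0 ≤ g s := by
    intro s
    rw [hgfun s]
    exact mul_nonneg hc0.le (hφ0 _)
  have hgeven : ∀ s : ℝ, g (-s) = g s := by
    intro s
    rw [hgfun, hgfun]
    have e : c0 * (-s) = -(c0 * s) := by ring
    rw [e, hφeven]
  have hgmono : ∀ s s' : ℝ, |s| ≤ |s'| → g s' ≤ g s := by
    intro s s' hss
    rw [hgfun, hgfun]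
    apply mul_le_mul_of_nonneg_left _ hc0.le
    apply hφmono
    rw [abs_mul, abs_mul, abs_of_pos hc0]
    exact mul_le_mul_of_nonneg_left hss hc0.le
  have hgint : Integrable g := by
    rw [hgfun']
    exact (hφInt.comp_mul_left' hc0.ne').const_mul c0
  have hgone : (∫ s : ℝ, g s) = 1 := by
    rw [hgfun']
    rw [MeasureTheory.integral_const_mul, Measure.integral_comp_mul_left φ c0, hφint]
    rw [smul_eq_mul, abs_of_pos (inv_pos.2 hc0)]
    field_simp
  set G : ℝ → ℝ := fun u => c0⁻¹ * (u^2 * φ u) with hGdef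
  have hGint : Integrable G := hφ2.const_mul c0⁻¹
  have hGcomp : ∀ s : ℝ, G (c0 * s) = s^2 * g s := by
    intro s
    rw [hGdef, hgfun s]
    simp only
    field_simp
  have hg2 : Integrable (fun s : ℝ => s^2 * g s) := by
    have h1 : Integrable (fun s : ℝ => G (c0 * s)) := hGint.comp_mul_left' hc0.ne'
    have h2 : (fun s : ℝ => G (c0 * s)) = fun s : ℝ => s^2 * g s := funext hGcomp
    rwa [h2] at h1
  have hint2 : (∫ s : ℝ, s^2 * g s) = c0⁻¹ * c0⁻¹ * ∫ q : ℝ, q^2 * φ q := by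
    have h2 : (fun s : ℝ => G (c0 * s)) = fun s : ℝ => s^2 * g s := funext hGcomp
    rw [← h2, Measure.integral_comp_mul_left G c0, hGdef, smul_eq_mul, abs_of_pos (inv_pos.2 hc0),
      MeasureTheory.integral_const_mul]
    ring
  obtain ⟨hβ1, hsum2, hsum1, hlo, hhi⟩ := pkt_main g hg0 hgeven hgmono hgint hgone hg2
  -- notation
  have hβe : ∀ m : ℤ, (∫ s in Set.Ioc (((-m:ℤ):ℝ)-1/2) (((-m:ℤ):ℝ)+1/2), g s)
      = ∫ s in Set.Ioc ((m:ℝ)-1/2) ((m:ℝ)+1/2), g s := by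
    intro m
    have h := intervalIntegral.integral_comp_neg (a := (m:ℝ)-1/2) (b := (m:ℝ)+1/2) g
    have h2 : (∫ x in ((m:ℝ)-1/2)..((m:ℝ)+1/2), g (-x)) = ∫ x in ((m:ℝ)-1/2)..((m:ℝ)+1/2), g x :=
      intervalIntegral.integral_congr (fun x _ => hgeven x)
    rw [h2] at h
    have e1 : (((-m:ℤ):ℝ)-1/2) = -((m:ℝ)+1/2) := by push_cast; ring
    have e2 : (((-m:ℤ):ℝ)+1/2) = -((m:ℝ)-1/2) := by push_cast; ring
    rw [e1, e2, ← intervalIntegral.integral_of_le (by linarith),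
      ← intervalIntegral.integral_of_le (by push_cast; linarith), ← h]
  -- (a α k)^2 = β (k - kbar)
  have hak : ∀ k : ℤ, (a α k)^2
      = ∫ s in Set.Ioc ((((k - kbar):ℤ):ℝ)-1/2) ((((k - kbar):ℤ):ℝ)+1/2), g s := by
    intro k
    rw [ha α hα k, Real.sq_sqrt]
    · have h1 : (∫ q in ((k:ℝ) - 1/2)..((k:ℝ) + 1/2),
          α⁻¹ * (π / l * φ (π / l * ((q - (kbar:ℝ)) / α))))
          = ∫ q in ((k:ℝ) - 1/2)..((k:ℝ) + 1/2), g (q - (kbar:ℝ)) := rfl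
      rw [h1, intervalIntegral.integral_comp_sub_right g (kbar:ℝ)]
      rw [intervalIntegral.integral_of_le (by push_cast; linarith)]
      congr 1 <;> push_cast <;> ring
    · apply intervalIntegral.integral_nonneg (by linarith)
      intro q _
      exact hg0 (q - (kbar:ℝ))
  -- sum of j * β j vanishes
  have hzero : (∑' j : ℤ, (j:ℝ) * ∫ s in Set.Ioc ((j:ℝ)-1/2) ((j:ℝ)+1/2), g s) = 0 := by
    set S := ∑' j : ℤ, (j:ℝ) * ∫ s in Set.Ioc ((j:ℝ)-1/2) ((j:ℝ)+1/2), g s with hSdef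
    have h1 := (Equiv.neg ℤ).tsum_eq (fun j : ℤ => (j:ℝ) * ∫ s in Set.Ioc ((j:ℝ)-1/2) ((j:ℝ)+1/2), g s)
    have h2 : (∑' j : ℤ, (((Equiv.neg ℤ) j : ℤ):ℝ)
          * ∫ s in Set.Ioc ((((Equiv.neg ℤ) j : ℤ):ℝ)-1/2) ((((Equiv.neg ℤ) j : ℤ):ℝ)+1/2), g s)
        = ∑' j : ℤ, -((j:ℝ) * ∫ s in Set.Ioc ((j:ℝ)-1/2) ((j:ℝ)+1/2), g s) := by
      apply tsum_congr
      intro j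
      simp only [Equiv.neg_apply]
      rw [hβe j]
      push_cast
      ring
    rw [h2, tsum_neg] at h1
    rw [hSdef] at *
    linarith
  -- pbar computation
  have hpb : pbar α = π / l * hbar * (kbar:ℝ) := by
    rw [hpbar α hα]
    have h1 : (∑' k : ℤ, (π / l * hbar * (k:ℝ)) * (a α k)^2)
        = ∑' k : ℤ, (π / l * hbar * (k:ℝ))
            * ∫ s in Set.Ioc ((((k - kbar):ℤ):ℝ)-1/2) ((((k - kbar):ℤ):ℝ)+1/2), g s :=
      tsum_congr (fun k => by rw [hak k])
    rw [h1]
    have h2 := (Equiv.addRight kbar).tsum_eq (fun k : ℤ => (π / l * hbar * (k:ℝ))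
        * ∫ s in Set.Ioc ((((k - kbar):ℤ):ℝ)-1/2) ((((k - kbar):ℤ):ℝ)+1/2), g s)
    rw [← h2]
    have h3 : (∑' j : ℤ, (π / l * hbar * ((((Equiv.addRight kbar) j : ℤ)):ℝ))
          * ∫ s in Set.Ioc (((((Equiv.addRight kbar) j - kbar):ℤ):ℝ)-1/2)
              (((((Equiv.addRight kbar) j - kbar):ℤ):ℝ)+1/2), g s)
        = ∑' j : ℤ, ((π / l * hbar) * ((j:ℝ) * ∫ s in Set.Ioc ((j:ℝ)-1/2) ((j:ℝ)+1/2), g s)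
            + (π / l * hbar * (kbar:ℝ)) * ∫ s in Set.Ioc ((j:ℝ)-1/2) ((j:ℝ)+1/2), g s) := by
      apply tsum_congr
      intro j
      simp only [Equiv.coe_addRight, add_sub_cancel_right]
      push_cast
      ring
    rw [h3, Summable.tsum_add ((hsum1.mul_left (π / l * hbar)))
      (hβ1.summable.mul_left (π / l * hbar * (kbar:ℝ))), tsum_mul_left, tsum_mul_left,
      hzero, hβ1.tsum_eq]
    ring
  -- Δp2 computation
  have hDp : Δp2 α = (π / l * hbar)^2
      * ∑' j : ℤ, (j:ℝ)^2 * ∫ s in Set.Ioc ((j:ℝ)-1/2) ((j:ℝ)+1/2), g s := by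
    rw [hΔp2 α hα]
    have h1 : (∑' k : ℤ, (π / l * hbar * (k:ℝ) - π / l * hbar * (kbar:ℝ))^2 * (a α k)^2)
        = ∑' k : ℤ, (π / l * hbar * (k:ℝ) - π / l * hbar * (kbar:ℝ))^2
            * ∫ s in Set.Ioc ((((k - kbar):ℤ):ℝ)-1/2) ((((k - kbar):ℤ):ℝ)+1/2), g s :=
      tsum_congr (fun k => by rw [hak k])
    rw [h1]
    have h2 := (Equiv.addRight kbar).tsum_eq (fun k : ℤ =>
      (π / l * hbar * (k:ℝ) - π / l * hbar * (kbar:ℝ))^2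
        * ∫ s in Set.Ioc ((((k - kbar):ℤ):ℝ)-1/2) ((((k - kbar):ℤ):ℝ)+1/2), g s)
    rw [← h2]
    have h3 : (∑' j : ℤ, (π / l * hbar * ((((Equiv.addRight kbar) j : ℤ)):ℝ)
            - π / l * hbar * (kbar:ℝ))^2
          * ∫ s in Set.Ioc (((((Equiv.addRight kbar) j - kbar):ℤ):ℝ)-1/2)
              (((((Equiv.addRight kbar) j - kbar):ℤ):ℝ)+1/2), g s)
        = ∑' j : ℤ, (π / l * hbar)^2
            * ((j:ℝ)^2 * ∫ s in Set.Ioc ((j:ℝ)-1/2) ((j:ℝ)+1/2), g s) := by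
      apply tsum_congr
      intro j
      simp only [Equiv.coe_addRight, add_sub_cancel_right]
      push_cast
      ring
    rw [h3, tsum_mul_left]
  -- scalar identity
  have hscal : (α * hbar)^2 * (∫ q : ℝ, q^2 * φ q) = (π / l * hbar)^2 * ∫ s : ℝ, s^2 * g s := by
    rw [hint2, hc0def]
    field_simp
  have hgzero : 1 + 2 * g 0 = 1 + 2 / α * (π / l * φ 0) := by
    rw [hgdef]
    simp only
    rw [zero_div, mul_zero]
    ring
  have hK : (0:ℝ) ≤ (π / l * hbar)^2 := sq_nonneg _
  refine ⟨hpb, ?_, ?_⟩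
  · have := mul_le_mul_of_nonneg_left hlo hK
    rw [hDp, hscal]
    rw [hgzero] at this
    calc -(1 / 12) * (π / l * hbar) ^ 2 * (1 + 2 / α * (π / l * φ 0))
        = (π / l * hbar)^2 * (-(1/12) * (1 + 2 / α * (π / l * φ 0))) := by ring
      _ ≤ (π / l * hbar)^2 * ((∑' j : ℤ, (j:ℝ)^2 * ∫ s in Set.Ioc ((j:ℝ)-1/2) ((j:ℝ)+1/2), g s)
            - ∫ s : ℝ, s^2 * g s) := this
      _ = (π / l * hbar)^2 * (∑' j : ℤ, (j:ℝ)^2 * ∫ s in Set.Ioc ((j:ℝ)-1/2) ((j:ℝ)+1/2), g s)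
            - (π / l * hbar)^2 * ∫ s : ℝ, s^2 * g s := by ring
  · have := mul_le_mul_of_nonneg_left hhi hK
    rw [hDp, hscal]
    rw [hgzero] at this
    calc (π / l * hbar)^2 * (∑' j : ℤ, (j:ℝ)^2 * ∫ s in Set.Ioc ((j:ℝ)-1/2) ((j:ℝ)+1/2), g s)
          - (π / l * hbar)^2 * ∫ s : ℝ, s^2 * g s
        = (π / l * hbar)^2 * ((∑' j : ℤ, (j:ℝ)^2 * ∫ s in Set.Ioc ((j:ℝ)-1/2) ((j:ℝ)+1/2), g s)
            - ∫ s : ℝ, s^2 * g s) := by ring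
      _ ≤ (π / l * hbar)^2 * ((1/6) * (1 + 2 / α * (π / l * φ 0))) := this
      _ = 1 / 6 * (π / l * hbar) ^ 2 * (1 + 2 / α * (π / l * φ 0)) := by ring
end

section
/- Let x* ∈ ℝ and let φ be an even probability density on ℝ, attaining its maximum at 0 and nonincreasing in |q|, with zero mean and finite second moment. For l > 0 define ψ_l(x) = (2l)^{−1/2}·Σ_{k∈ℤ} (∫_{(π/l)(k−1/2)}^{(π/l)(k+1/2)} φ(q) dq)^{1/2}·e^{iπk(x−x*)/l}. Then for every x ∈ ℝ, lim_{l→∞} ψ_l(x) = (2π)^{−1/2}·∫_{−∞}^{+∞} √(φ(q))·e^{iq(x−x*)} dq (pointwise convergence). -/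
open Real MeasureTheory Filter Asymptotics Topology

noncomputable def pk (l q : ℝ) : ℤ := round (q * l / π)
noncomputable def pr (l q : ℝ) : ℝ := π / l * ((pk l q : ℤ) : ℝ)
noncomputable def pF (φ : ℝ → ℝ) (c : ℝ) (l q : ℝ) : ℂ :=
  ((Real.sqrt ((π / l)⁻¹ *
      ∫ t in (pr l q - π / (2 * l))..(pr l q + π / (2 * l)), φ t) : ℝ) : ℂ) *
    Complex.exp (Complex.I * ((pr l q : ℝ) : ℂ) * ((c : ℝ) : ℂ))
noncomputable def pg (φ : ℝ → ℝ) (q : ℝ) : ℝ := Real.sqrt (φ (max 0 (|q| - 1)))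

lemma pk_mem {l : ℝ} (hl : 0 < l) (q : ℝ) :
    π / l * (((pk l q : ℤ) : ℝ) - 1/2) ≤ q ∧ q < π / l * (((pk l q : ℤ) : ℝ) + 1/2) := by
  have hπ := Real.pi_pos
  have hpl : 0 < π / l := div_pos hπ hl
  have hq : π / l * (q * l / π) = q := by field_simp
  have h1 : ((pk l q : ℤ) : ℝ) - 1/2 ≤ q * l / π := by
    have h := Int.floor_le (q * l / π + 1/2)
    simp only [pk, round_eq]
    linarith
  have h2 : q * l / π < ((pk l q : ℤ) : ℝ) + 1/2 := by
    have h := Int.lt_floor_add_one (q * l / π + 1/2)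
    simp only [pk, round_eq]
    push_cast
    push_cast at h
    linarith
  constructor
  · calc π / l * (((pk l q : ℤ) : ℝ) - 1/2) ≤ π / l * (q * l / π) :=
        mul_le_mul_of_nonneg_left h1 hpl.le
      _ = q := hq
  · calc q = π / l * (q * l / π) := hq.symm
      _ < π / l * (((pk l q : ℤ) : ℝ) + 1/2) := mul_lt_mul_of_pos_left h2 hpl

lemma pk_eq {l : ℝ} (hl : 0 < l) {k : ℤ} {q : ℝ}
    (h1 : π / l * ((k : ℝ) - 1/2) ≤ q) (h2 : q < π / l * ((k : ℝ) + 1/2)) : pk l q = k := by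
  have hπ := Real.pi_pos
  have hl' : 0 < l / π := div_pos hl hπ
  have e1 : (k : ℝ) - 1/2 ≤ q * l / π := by
    have h := mul_le_mul_of_nonneg_left h1 hl'.le
    have h' : l / π * (π / l * ((k : ℝ) - 1/2)) = (k : ℝ) - 1/2 := by field_simp
    rw [h'] at h
    calc (k : ℝ) - 1/2 ≤ l / π * q := h
      _ = q * l / π := by ring
  have e2 : q * l / π < (k : ℝ) + 1/2 := by
    have h := mul_lt_mul_of_pos_left h2 hl'
    have h' : l / π * (π / l * ((k : ℝ) + 1/2)) = (k : ℝ) + 1/2 := by field_simp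
    rw [h'] at h
    calc q * l / π = l / π * q := by ring
      _ < (k : ℝ) + 1/2 := h
  simp only [pk, round_eq]
  exact Int.floor_eq_iff.mpr ⟨by push_cast; linarith, by push_cast; linarith⟩

lemma phi_meas (φ : ℝ → ℝ) (hφmono : ∀ q q' : ℝ, |q| ≤ |q'| → φ q' ≤ φ q) : Measurable φ := by
  apply measurable_of_Ioi
  intro t
  apply Set.OrdConnected.measurableSet
  constructor
  rintro a ha b hb c hc
  simp only [Set.mem_preimage, Set.mem_Ioi] at ha hb ⊢
  have h1 : |c| ≤ max |a| |b| := by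
    apply abs_le.mpr
    constructor
    · calc -(max |a| |b|) ≤ -|a| := by simp
        _ ≤ a := neg_abs_le a
        _ ≤ c := hc.1
    · calc c ≤ b := hc.2
        _ ≤ |b| := le_abs_self b
        _ ≤ max |a| |b| := le_max_right _ _
  rcases le_max_iff.mp h1 with h | h
  · exact lt_of_lt_of_le ha (hφmono c a h)
  · exact lt_of_lt_of_le hb (hφmono c b h)
variable {φ : ℝ → ℝ}

lemma sqrtphi_int (hφm : Measurable φ) (hφ0 : ∀ q : ℝ, 0 ≤ φ q)
    (hφ2 : Integrable (fun q : ℝ => q ^ 2 * φ q))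
    (hφmax : ∀ q : ℝ, φ q ≤ φ 0) :
    Integrable (fun q : ℝ => Real.sqrt (φ q)) := by
  have hmeas : Measurable fun q : ℝ => Real.sqrt (φ q) :=
    Real.continuous_sqrt.measurable.comp hφm
  have hB : Integrable (fun q : ℝ =>
      q ^ 2 * φ q / 2 + (1 + Real.sqrt (φ 0)) * ((1 + q ^ 2)⁻¹ * 2)) := by
    exact (hφ2.div_const 2).add (((integrable_inv_one_add_sq).mul_const 2).const_mul _)
  refine hB.mono' hmeas.aestronglyMeasurable (Filter.Eventually.of_forall fun q => ?_)
  have h0 : (0:ℝ) ≤ Real.sqrt (φ q) := Real.sqrt_nonneg _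
  rw [Real.norm_eq_abs, abs_of_nonneg h0]
  have hs0 : (0:ℝ) ≤ Real.sqrt (φ 0) := Real.sqrt_nonneg _
  rcases le_total (q^2) 1 with hq | hq
  · -- |q| ≤ 1
    have h1 : Real.sqrt (φ q) ≤ Real.sqrt (φ 0) := Real.sqrt_le_sqrt (hφmax q)
    have h2 : (1:ℝ)/2 ≤ (1 + q^2)⁻¹ := by
      rw [le_inv_comm₀] <;> nlinarith [sq_nonneg q]
    have h3 : (0:ℝ) ≤ q^2 * φ q := mul_nonneg (sq_nonneg q) (hφ0 q)
    nlinarith [mul_le_mul_of_nonneg_left h2 (by linarith : (0:ℝ) ≤ 1 + Real.sqrt (φ 0))]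
  · -- 1 ≤ q²
    have hq0 : q ≠ 0 := by intro h; rw [h] at hq; norm_num at hq
    set a := q^2 * φ q with ha
    set b := (q^2)⁻¹ with hb
    have hA : (0:ℝ) ≤ a := mul_nonneg (sq_nonneg q) (hφ0 q)
    have hBpos : (0:ℝ) < q^2 := by positivity
    have hBn : (0:ℝ) ≤ b := by positivity
    have hφab : φ q = a * b := by rw [ha, hb, mul_comm (q^2) (φ q), mul_assoc, mul_inv_cancel₀ hBpos.ne', mul_one]
    have hAM : Real.sqrt (φ q) ≤ (a + b) / 2 := by
      rw [hφab]
      calc Real.sqrt (a * b) ≤ Real.sqrt (((a+b)/2)^2) :=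
            Real.sqrt_le_sqrt (by nlinarith [sq_nonneg (a - b)])
        _ = (a+b)/2 := Real.sqrt_sq (by positivity)
    have hb2 : b ≤ (1 + q^2)⁻¹ * 2 := by
      rw [hb, show ((1:ℝ)+q^2)⁻¹ * 2 = 2/(1+q^2) by ring, inv_eq_one_div,
        div_le_div_iff₀ hBpos (by positivity)]
      nlinarith
    nlinarith [mul_le_mul_of_nonneg_left hb2 hs0]

lemma pg_int (hφm : Measurable φ) (hφ0 : ∀ q : ℝ, 0 ≤ φ q)
    (hφ2 : Integrable (fun q : ℝ => q ^ 2 * φ q))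
    (hφeven : ∀ q : ℝ, φ (-q) = φ q)
    (hφmax : ∀ q : ℝ, φ q ≤ φ 0) :
    Integrable (fun q : ℝ => Real.sqrt (φ (max 0 (|q| - 1)))) := by
  have Hsq := sqrtphi_int hφm hφ0 hφ2 hφmax
  have hmeas : Measurable fun q : ℝ => Real.sqrt (φ (max 0 (|q| - 1))) := by
    exact Real.continuous_sqrt.measurable.comp
      (hφm.comp ((continuous_const.max (continuous_abs.sub continuous_const)).measurable))
  have h1 : IntegrableOn (fun q : ℝ => Real.sqrt (φ (max 0 (|q| - 1)))) (Set.Icc (-1) 1) := by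
    apply Measure.integrableOn_of_bounded (M := Real.sqrt (φ 0))
    · rw [Real.volume_Icc]; exact ENNReal.ofReal_ne_top
    · exact hmeas.aestronglyMeasurable
    · refine Filter.Eventually.of_forall fun q => ?_
      rw [Real.norm_eq_abs, abs_of_nonneg (Real.sqrt_nonneg _)]
      exact Real.sqrt_le_sqrt (hφmax _)
  have h2 : IntegrableOn (fun q : ℝ => Real.sqrt (φ (max 0 (|q| - 1)))) (Set.Ici 1) := by
    refine ((Hsq.comp_sub_right 1).integrableOn).congr_fun ?_ measurableSet_Ici
    intro q hq
    simp only [Set.mem_Ici] at hq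
    show Real.sqrt (φ (q - 1)) = Real.sqrt (φ (max 0 (|q| - 1)))
    rw [abs_of_nonneg (by linarith : (0:ℝ) ≤ q),
      max_eq_right (by linarith : (0:ℝ) ≤ q - 1)]
  have h3 : IntegrableOn (fun q : ℝ => Real.sqrt (φ (max 0 (|q| - 1)))) (Set.Iic (-1)) := by
    refine ((Hsq.comp_add_right 1).integrableOn).congr_fun ?_ measurableSet_Iic
    intro q hq
    simp only [Set.mem_Iic] at hq
    show Real.sqrt (φ (q + 1)) = Real.sqrt (φ (max 0 (|q| - 1)))
    rw [abs_of_nonpos (by linarith : q ≤ 0),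
      max_eq_right (by linarith : (0:ℝ) ≤ -q - 1),
      show -q - 1 = -(q + 1) by ring, hφeven]
  have hun : IntegrableOn (fun q : ℝ => Real.sqrt (φ (max 0 (|q| - 1))))
      (Set.Iic (-1) ∪ (Set.Icc (-1) 1 ∪ Set.Ici 1)) := h3.union (h1.union h2)
  rw [← integrableOn_univ]
  refine hun.mono_set fun q _ => ?_
  rcases le_total q (-1) with h | h
  · exact Or.inl h
  rcases le_total q 1 with h' | h'
  · exact Or.inr (Or.inl ⟨h, h'⟩)
  · exact Or.inr (Or.inr h')
lemma pk_measurable (l : ℝ) : Measurable fun q : ℝ => pk l q := by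
  simp only [pk, round_eq]
  exact Int.measurable_floor.comp (((measurable_id.mul_const l).div_const π).add_const _)

lemma pF_meas (φ : ℝ → ℝ) (c l : ℝ) : Measurable (pF φ c l) := by
  have : pF φ c l = (fun k : ℤ =>
      ((Real.sqrt ((π / l)⁻¹ *
        ∫ t in (π / l * (k : ℝ) - π / (2 * l))..(π / l * (k : ℝ) + π / (2 * l)), φ t) : ℝ) : ℂ) *
      Complex.exp (Complex.I * ((π / l * (k : ℝ) : ℝ) : ℂ) * ((c : ℝ) : ℂ))) ∘
      (fun q : ℝ => pk l q) := rfl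
  rw [this]
  exact (measurable_of_countable _).comp (pk_measurable l)

lemma pF_bound {φ : ℝ → ℝ} (hφ0 : ∀ q : ℝ, 0 ≤ φ q)
    (hφmono : ∀ q q' : ℝ, |q| ≤ |q'| → φ q' ≤ φ q)
    (hIφ : Integrable φ) (c : ℝ) {l : ℝ} (hl : π ≤ l) (q : ℝ) :
    ‖pF φ c l q‖ ≤ pg φ q := by
  have hπ := Real.pi_pos
  have hl0 : 0 < l := lt_of_lt_of_le hπ hl
  have hΔ0 : 0 < π / l := div_pos hπ hl0
  have hΔ1 : π / l ≤ 1 := (div_le_one hl0).mpr hl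
  set a := pr l q - π / (2 * l) with ha
  set b := pr l q + π / (2 * l) with hb
  have hmem := pk_mem hl0 q
  have hqa : a ≤ q := by
    have : a = π / l * (((pk l q : ℤ) : ℝ) - 1/2) := by rw [ha, pr]; ring
    rw [this]; exact hmem.1
  have hqb : q ≤ b := by
    have : b = π / l * (((pk l q : ℤ) : ℝ) + 1/2) := by rw [hb, pr]; ring
    rw [this]; exact le_of_lt hmem.2
  have hab : a ≤ b := le_trans hqa hqb
  have hba : b - a = π / l := by rw [ha, hb]; ring
  have key : ∀ t ∈ Set.Icc a b, φ t ≤ φ (max 0 (|q| - 1)) := by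
    intro t ht
    rw [Set.mem_Icc] at ht
    obtain ⟨hta, htb⟩ := ht
    apply hφmono
    rw [abs_of_nonneg (le_max_left 0 _)]
    apply max_le (abs_nonneg t)
    have h1 : |q - t| ≤ π / l := by
      have e1 : q - t ≤ b - a := sub_le_sub hqb hta
      have e2 : a - b ≤ q - t := sub_le_sub hqa htb
      rw [hba] at e1
      rw [abs_le]
      refine ⟨?_, e1⟩
      rw [← hba]
      linarith
    have h2 : |q| - |t| ≤ |q - t| := abs_sub_abs_le_abs_sub q t
    linarith
  have hJ0 : 0 ≤ ∫ t in a..b, φ t :=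
    intervalIntegral.integral_nonneg hab fun t _ => hφ0 t
  have hJle : (∫ t in a..b, φ t) ≤ (π / l) * φ (max 0 (|q| - 1)) := by
    calc (∫ t in a..b, φ t) ≤ ∫ _ in a..b, φ (max 0 (|q| - 1)) :=
          intervalIntegral.integral_mono_on hab hIφ.intervalIntegrable
            intervalIntegrable_const key
      _ = (b - a) * φ (max 0 (|q| - 1)) := by
          rw [intervalIntegral.integral_const, smul_eq_mul]
      _ = (π / l) * φ (max 0 (|q| - 1)) := by rw [hba]
  have havg : (π / l)⁻¹ * ∫ t in a..b, φ t ≤ φ (max 0 (|q| - 1)) := by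
    rw [inv_mul_le_iff₀ hΔ0]
    exact hJle
  have hexp : Complex.I * ((pr l q : ℝ) : ℂ) * ((c : ℝ) : ℂ) =
      ((pr l q * c : ℝ) : ℂ) * Complex.I := by push_cast; ring
  rw [pF, norm_mul, ← ha, ← hb, hexp]
  simp only [Complex.norm_exp_ofReal_mul_I, Complex.norm_real, Real.norm_eq_abs, mul_one]
  rw [abs_of_nonneg (Real.sqrt_nonneg _)]
  exact Real.sqrt_le_sqrt havg
lemma half_tendsto : Tendsto (fun l : ℝ => π / (2 * l)) atTop (𝓝 0) :=
  tendsto_const_nhds.div_atTop (tendsto_id.const_mul_atTop two_pos)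

lemma pr_tendsto (q : ℝ) : Tendsto (fun l : ℝ => pr l q) atTop (𝓝 q) := by
  have hg : Tendsto (fun l : ℝ => q - π / (2 * l)) atTop (𝓝 q) := by
    simpa using tendsto_const_nhds.sub half_tendsto
  have hh : Tendsto (fun l : ℝ => q + π / (2 * l)) atTop (𝓝 q) := by
    simpa using tendsto_const_nhds.add half_tendsto
  refine tendsto_of_tendsto_of_tendsto_of_le_of_le' hg hh ?_ ?_
  · filter_upwards [eventually_gt_atTop (0:ℝ)] with l hl
    have h := (pk_mem hl q).2
    have : pr l q + π / (2 * l) = π / l * (((pk l q : ℤ) : ℝ) + 1/2) := by rw [pr]; ring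
    linarith [this ▸ h]
  · filter_upwards [eventually_gt_atTop (0:ℝ)] with l hl
    have h := (pk_mem hl q).1
    have : pr l q - π / (2 * l) = π / l * (((pk l q : ℤ) : ℝ) - 1/2) := by rw [pr]; ring
    linarith [this ▸ h]

lemma pF_tendsto {φ : ℝ → ℝ} (hφ0 : ∀ q : ℝ, 0 ≤ φ q)
    (hφmono : ∀ q q' : ℝ, |q| ≤ |q'| → φ q' ≤ φ q)
    (hIφ : Integrable φ) (c : ℝ) {q : ℝ} (hq : q ≠ 0) (hcont : ContinuousAt φ q) :
    Tendsto (fun l : ℝ => pF φ c l q) atTop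
      (𝓝 (((Real.sqrt (φ q) : ℝ) : ℂ) *
        Complex.exp (Complex.I * ((q : ℝ) : ℂ) * ((c : ℝ) : ℂ)))) := by
  have hπ := Real.pi_pos
  have hr := pr_tendsto q
  have hsub : Tendsto (fun l : ℝ => pr l q - π / (2 * l)) atTop (𝓝 q) := by
    simpa using hr.sub half_tendsto
  have hadd : Tendsto (fun l : ℝ => pr l q + π / (2 * l)) atTop (𝓝 q) := by
    simpa using hr.add half_tendsto
  have hfa : Tendsto (fun l : ℝ => φ (pr l q - π / (2 * l))) atTop (𝓝 (φ q)) :=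
    hcont.tendsto.comp hsub
  have hfb : Tendsto (fun l : ℝ => φ (pr l q + π / (2 * l))) atTop (𝓝 (φ q)) :=
    hcont.tendsto.comp hadd
  have hmin : Tendsto (fun l : ℝ => min (φ (pr l q - π / (2 * l))) (φ (pr l q + π / (2 * l))))
      atTop (𝓝 (φ q)) := by simpa using hfa.min hfb
  have hmax : Tendsto (fun l : ℝ => max (φ (pr l q - π / (2 * l))) (φ (pr l q + π / (2 * l))))
      atTop (𝓝 (φ q)) := by simpa using hfa.max hfb
  have hsign : ∀ᶠ l : ℝ in atTop,
      0 < pr l q - π / (2 * l) ∨ pr l q + π / (2 * l) < 0 := by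
    rcases hq.lt_or_gt with h | h
    · exact (hadd.eventually (eventually_lt_nhds h)).mono fun l hl => Or.inr hl
    · exact (hsub.eventually (eventually_gt_nhds h)).mono fun l hl => Or.inl hl
  have hineq : ∀ᶠ l : ℝ in atTop,
      (min (φ (pr l q - π / (2 * l))) (φ (pr l q + π / (2 * l))) ≤
        (π / l)⁻¹ * ∫ t in (pr l q - π / (2 * l))..(pr l q + π / (2 * l)), φ t) ∧
      ((π / l)⁻¹ * ∫ t in (pr l q - π / (2 * l))..(pr l q + π / (2 * l)), φ t ≤
        max (φ (pr l q - π / (2 * l))) (φ (pr l q + π / (2 * l)))) := by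
    filter_upwards [eventually_gt_atTop (0:ℝ), hsign] with l hl hsgn
    set a := pr l q - π / (2 * l) with ha
    set b := pr l q + π / (2 * l) with hb
    have hΔ0 : 0 < π / l := div_pos hπ hl
    have h2l : 0 < π / (2 * l) := div_pos hπ (by linarith)
    have hab : a ≤ b := by rw [ha, hb]; linarith
    have hba : b - a = π / l := by rw [ha, hb]; ring
    have hkey : ∀ t ∈ Set.Icc a b,
        min (φ a) (φ b) ≤ φ t ∧ φ t ≤ max (φ a) (φ b) := by
      intro t ht
      rw [Set.mem_Icc] at ht
      obtain ⟨hta, htb⟩ := ht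
      rcases hsgn with hpos | hneg
      · have hta' : 0 < t := lt_of_lt_of_le hpos hta
        have h1 : |a| ≤ |t| := by
          rw [abs_of_pos hpos, abs_of_pos hta']; exact hta
        have h2 : |t| ≤ |b| := by
          rw [abs_of_pos hta', abs_of_pos (lt_of_lt_of_le hta' htb)]; exact htb
        exact ⟨le_trans (min_le_right _ _) (hφmono t b h2),
          le_trans (hφmono a t h1) (le_max_left _ _)⟩
      · have htb' : t < 0 := lt_of_le_of_lt htb hneg
        have h1 : |b| ≤ |t| := by
          rw [abs_of_neg hneg, abs_of_neg htb']; linarith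
        have h2 : |t| ≤ |a| := by
          rw [abs_of_neg htb', abs_of_neg (lt_of_le_of_lt hta htb')]; linarith
        exact ⟨le_trans (min_le_left _ _) (hφmono t a h2),
          le_trans (hφmono b t h1) (le_max_right _ _)⟩
    constructor
    · have hlow : (b - a) * min (φ a) (φ b) ≤ ∫ t in a..b, φ t := by
        calc (b - a) * min (φ a) (φ b) = ∫ _ in a..b, min (φ a) (φ b) := by
              rw [intervalIntegral.integral_const, smul_eq_mul]
          _ ≤ ∫ t in a..b, φ t :=
              intervalIntegral.integral_mono_on hab intervalIntegrable_const
                hIφ.intervalIntegrable (fun t ht => (hkey t ht).1)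
      rw [hba] at hlow
      calc min (φ a) (φ b) = (π / l)⁻¹ * ((π / l) * min (φ a) (φ b)) := by
            field_simp
        _ ≤ (π / l)⁻¹ * ∫ t in a..b, φ t :=
            mul_le_mul_of_nonneg_left hlow (inv_nonneg.mpr hΔ0.le)
    · have hup : (∫ t in a..b, φ t) ≤ (b - a) * max (φ a) (φ b) := by
        calc (∫ t in a..b, φ t) ≤ ∫ _ in a..b, max (φ a) (φ b) :=
              intervalIntegral.integral_mono_on hab hIφ.intervalIntegrable
                intervalIntegrable_const (fun t ht => (hkey t ht).2)
          _ = (b - a) * max (φ a) (φ b) := by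
              rw [intervalIntegral.integral_const, smul_eq_mul]
      rw [hba] at hup
      rw [inv_mul_le_iff₀ hΔ0]
      exact hup
  have havg : Tendsto (fun l : ℝ =>
      (π / l)⁻¹ * ∫ t in (pr l q - π / (2 * l))..(pr l q + π / (2 * l)), φ t) atTop
      (𝓝 (φ q)) :=
    tendsto_of_tendsto_of_tendsto_of_le_of_le' hmin hmax
      (hineq.mono fun l h => h.1) (hineq.mono fun l h => h.2)
  have hsqrt : Tendsto (fun l : ℝ => ((Real.sqrt
      ((π / l)⁻¹ * ∫ t in (pr l q - π / (2 * l))..(pr l q + π / (2 * l)), φ t) : ℝ) : ℂ))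
      atTop (𝓝 ((Real.sqrt (φ q) : ℝ) : ℂ)) :=
    (Complex.continuous_ofReal.tendsto _).comp ((Real.continuous_sqrt.tendsto _).comp havg)
  have hexp : Tendsto (fun l : ℝ =>
      Complex.exp (Complex.I * ((pr l q : ℝ) : ℂ) * ((c : ℝ) : ℂ))) atTop
      (𝓝 (Complex.exp (Complex.I * ((q : ℝ) : ℂ) * ((c : ℝ) : ℂ)))) := by
    have hcont2 : Continuous fun t : ℝ =>
        Complex.exp (Complex.I * ((t : ℝ) : ℂ) * ((c : ℝ) : ℂ)) := by
      continuity
    exact (hcont2.tendsto q).comp hr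
  exact hsqrt.mul hexp
lemma phi_ae_good {φ : ℝ → ℝ} (hφeven : ∀ q : ℝ, φ (-q) = φ q)
    (hφmono : ∀ q q' : ℝ, |q| ≤ |q'| → φ q' ≤ φ q) :
    ∀ᵐ q : ℝ, q ≠ 0 ∧ ContinuousAt φ q := by
  have hg : Antitone fun t : ℝ => φ (Real.exp t) := by
    intro s t hst
    apply hφmono
    rw [abs_of_pos (Real.exp_pos s), abs_of_pos (Real.exp_pos t)]
    exact Real.exp_le_exp.mpr hst
  have hC := hg.countable_not_continuousAt
  have hpos : {q : ℝ | 0 < q ∧ ¬ContinuousAt φ q} ⊆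
      Real.exp '' {t : ℝ | ¬ContinuousAt (fun t => φ (Real.exp t)) t} := by
    rintro q ⟨hq, hdq⟩
    refine ⟨Real.log q, ?_, Real.exp_log hq⟩
    intro hcont
    apply hdq
    have h1 : ContinuousAt (fun s : ℝ => φ (Real.exp (Real.log s))) q :=
      hcont.comp (Real.continuousAt_log (ne_of_gt hq))
    apply h1.congr
    filter_upwards [eventually_gt_nhds hq] with s hs
    rw [Real.exp_log hs]
  have hneg : {q : ℝ | q < 0 ∧ ¬ContinuousAt φ q} ⊆
      (fun q : ℝ => -q) '' {q : ℝ | 0 < q ∧ ¬ContinuousAt φ q} := by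
    rintro q ⟨hq, hdq⟩
    refine ⟨-q, ⟨by linarith, ?_⟩, by ring⟩
    intro hcont
    apply hdq
    have h1 : ContinuousAt (fun s : ℝ => φ (-s)) q :=
      hcont.comp continuous_neg.continuousAt
    have h2 : (fun s : ℝ => φ (-s)) = φ := funext fun s => hφeven s
    rwa [h2] at h1
  have hcnt : Set.Countable ({0} ∪ {q : ℝ | ¬ContinuousAt φ q}) := by
    have hsub : {q : ℝ | ¬ContinuousAt φ q} ⊆
        {q : ℝ | 0 < q ∧ ¬ContinuousAt φ q} ∪ ({0} ∪
          {q : ℝ | q < 0 ∧ ¬ContinuousAt φ q}) := by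
      intro q hq
      rcases lt_trichotomy q 0 with h | h | h
      · exact Or.inr (Or.inr ⟨h, hq⟩)
      · exact Or.inr (Or.inl h)
      · exact Or.inl ⟨h, hq⟩
    have hposc : Set.Countable {q : ℝ | 0 < q ∧ ¬ContinuousAt φ q} :=
      (hC.image Real.exp).mono hpos
    have hnegc : Set.Countable {q : ℝ | q < 0 ∧ ¬ContinuousAt φ q} :=
      (hposc.image _).mono hneg
    exact (Set.countable_singleton 0).union
      ((hposc.union ((Set.countable_singleton 0).union hnegc)).mono hsub)
  have hae := hcnt.ae_notMem volume
  filter_upwards [hae] with q hq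
  simp only [Set.mem_union, Set.mem_singleton_iff, Set.mem_setOf_eq, not_or] at hq
  exact ⟨hq.1, not_not.mp hq.2⟩
lemma coef_eq {l : ℝ} (hl0 : 0 < l) {J : ℝ} (hJ : 0 ≤ J) :
    (2 * π) ^ (-(1/2 : ℝ)) * (π / l * Real.sqrt ((π / l)⁻¹ * J)) =
    (2 * l) ^ (-(1/2 : ℝ)) * Real.sqrt J := by
  have hπ := Real.pi_pos
  have hΔ0 : 0 < π / l := div_pos hπ hl0
  rw [Real.sqrt_mul (inv_nonneg.mpr hΔ0.le) J, Real.sqrt_inv]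
  rw [Real.rpow_neg (by positivity), Real.rpow_neg (by positivity),
    ← Real.sqrt_eq_rpow, ← Real.sqrt_eq_rpow]
  rw [show π / l * ((Real.sqrt (π / l))⁻¹ * Real.sqrt J) =
      (π / l * (Real.sqrt (π / l))⁻¹) * Real.sqrt J by ring,
    ← div_eq_mul_inv (π / l), Real.div_sqrt]
  rw [show (Real.sqrt (2 * π))⁻¹ * (Real.sqrt (π / l) * Real.sqrt J) =
      ((Real.sqrt (2 * π))⁻¹ * Real.sqrt (π / l)) * Real.sqrt J by ring]
  rw [← Real.sqrt_inv, ← Real.sqrt_mul (by positivity) (π / l)]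
  rw [show (2 * π)⁻¹ * (π / l) = (2 * l)⁻¹ by field_simp, Real.sqrt_inv]

lemma psi_eq {φ : ℝ → ℝ} (hφ0 : ∀ q : ℝ, 0 ≤ φ q)
    (hφmono : ∀ q q' : ℝ, |q| ≤ |q'| → φ q' ≤ φ q)
    (hIφ : Integrable φ) (hg : Integrable (pg φ)) (x xs : ℝ) {l : ℝ} (hl : π ≤ l) :
    (((2 * π) ^ (-(1/2 : ℝ)) : ℝ) : ℂ) * ∫ q : ℝ, pF φ (x - xs) l q =
    (((2 * l) ^ (-(1/2 : ℝ)) : ℝ) : ℂ) *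
      ∑' k : ℤ, ((Real.sqrt (∫ q in (π / l * ((k : ℝ) - 1/2))..(π / l * ((k : ℝ) + 1/2)), φ q) : ℝ) : ℂ) *
        Complex.exp (Complex.I * (π : ℂ) * (k : ℂ) * ((x : ℂ) - (xs : ℂ)) / (l : ℂ)) := by
  have hπ := Real.pi_pos
  have hl0 : 0 < l := lt_of_lt_of_le hπ hl
  have hΔ0 : 0 < π / l := div_pos hπ hl0
  set c : ℝ := x - xs with hc
  have hIntF : Integrable (pF φ c l) :=
    hg.mono' (pF_meas φ c l).aestronglyMeasurable
      (Filter.Eventually.of_forall (pF_bound hφ0 hφmono hIφ c hl))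
  set S : ℤ → Set ℝ := fun k => Set.Ico (π / l * ((k : ℝ) - 1/2)) (π / l * ((k : ℝ) + 1/2))
    with hS
  have hmeasS : ∀ k, MeasurableSet (S k) := fun k => measurableSet_Ico
  have hdisj : Pairwise (Function.onFun Disjoint S) := by
    intro j k hjk
    rw [Function.onFun, Set.disjoint_left]
    intro q hqj hqk
    rw [hS, Set.mem_Ico] at hqj hqk
    exact hjk ((pk_eq hl0 hqj.1 hqj.2).symm.trans (pk_eq hl0 hqk.1 hqk.2))
  have hcov : (⋃ k : ℤ, S k) = Set.univ := by
    ext q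
    simp only [Set.mem_iUnion, Set.mem_univ, iff_true, hS, Set.mem_Ico]
    exact ⟨pk l q, (pk_mem hl0 q).1, (pk_mem hl0 q).2⟩
  have hsum : ∫ q : ℝ, pF φ c l q = ∑' k : ℤ, ∫ q in S k, pF φ c l q := by
    rw [← setIntegral_univ, ← hcov,
      integral_iUnion hmeasS hdisj (hcov ▸ hIntF.integrableOn)]
  have hpiece : ∀ k : ℤ, ∫ q in S k, pF φ c l q =
      (((π / l : ℝ)) : ℂ) *
        (((Real.sqrt ((π / l)⁻¹ *
            ∫ t in (π / l * ((k : ℝ) - 1/2))..(π / l * ((k : ℝ) + 1/2)), φ t) : ℝ) : ℂ) *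
          Complex.exp (Complex.I * ((π / l * (k : ℝ) : ℝ) : ℂ) * ((c : ℝ) : ℂ))) := by
    intro k
    have hconst : Set.EqOn (pF φ c l) (fun _ =>
        (((Real.sqrt ((π / l)⁻¹ *
            ∫ t in (π / l * ((k : ℝ) - 1/2))..(π / l * ((k : ℝ) + 1/2)), φ t) : ℝ) : ℂ) *
          Complex.exp (Complex.I * ((π / l * (k : ℝ) : ℝ) : ℂ) * ((c : ℝ) : ℂ)))) (S k) := by
      intro q hq
      rw [hS, Set.mem_Ico] at hq
      have hk : pk l q = k := pk_eq hl0 hq.1 hq.2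
      show pF φ c l q = _
      rw [pF, pr, hk]
      have e1 : π / l * ((k : ℝ)) - π / (2 * l) = π / l * ((k : ℝ) - 1/2) := by ring
      have e2 : π / l * ((k : ℝ)) + π / (2 * l) = π / l * ((k : ℝ) + 1/2) := by ring
      rw [e1, e2]
    rw [setIntegral_congr_fun (hmeasS k) hconst, setIntegral_const]
    rw [hS]
    simp only [Real.volume_real_Ico]
    rw [show π / l * ((k : ℝ) + 1/2) - π / l * ((k : ℝ) - 1/2) = π / l by ring,
      max_eq_left hΔ0.le, Complex.real_smul]
  have hterm : ∀ k : ℤ,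
      (((2 * π) ^ (-(1/2 : ℝ)) : ℝ) : ℂ) * ∫ q in S k, pF φ c l q =
      (((2 * l) ^ (-(1/2 : ℝ)) : ℝ) : ℂ) *
        (((Real.sqrt (∫ q in (π / l * ((k : ℝ) - 1/2))..(π / l * ((k : ℝ) + 1/2)), φ q) : ℝ) : ℂ) *
          Complex.exp (Complex.I * (π : ℂ) * (k : ℂ) * ((x : ℂ) - (xs : ℂ)) / (l : ℂ))) := by
    intro k
    rw [hpiece k]
    have hJ0 : 0 ≤ ∫ t in (π / l * ((k : ℝ) - 1/2))..(π / l * ((k : ℝ) + 1/2)), φ t :=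
      intervalIntegral.integral_nonneg
        (mul_le_mul_of_nonneg_left (by linarith) hΔ0.le) (fun t _ => hφ0 t)
    have hcoef := coef_eq hl0 hJ0
    have hexp : Complex.I * ((π / l * (k : ℝ) : ℝ) : ℂ) * ((c : ℝ) : ℂ) =
        Complex.I * (π : ℂ) * (k : ℂ) * ((x : ℂ) - (xs : ℂ)) / (l : ℂ) := by
      rw [hc]; push_cast; ring
    rw [hexp]
    rw [show (((2 * π) ^ (-(1/2 : ℝ)) : ℝ) : ℂ) * ((((π / l : ℝ)) : ℂ) *
        (((Real.sqrt ((π / l)⁻¹ *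
            ∫ t in (π / l * ((k : ℝ) - 1/2))..(π / l * ((k : ℝ) + 1/2)), φ t) : ℝ) : ℂ) *
          Complex.exp (Complex.I * (π : ℂ) * (k : ℂ) * ((x : ℂ) - (xs : ℂ)) / (l : ℂ)))) =
        (((2 * π) ^ (-(1/2 : ℝ)) * (π / l * Real.sqrt ((π / l)⁻¹ *
            ∫ t in (π / l * ((k : ℝ) - 1/2))..(π / l * ((k : ℝ) + 1/2)), φ t)) : ℝ) : ℂ) *
          Complex.exp (Complex.I * (π : ℂ) * (k : ℂ) * ((x : ℂ) - (xs : ℂ)) / (l : ℂ)) by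
        push_cast; ring]
    rw [hcoef]
    push_cast
    ring
  rw [hsum, ← tsum_mul_left, ← tsum_mul_left]
  exact tsum_congr hterm
/-- In the limit of large interval length, the wave packet on `[-l,l]`
obtained by discretizing an even, unimodal momentum density `φ` tends pointwise to the
corresponding wave packet on the line:
`lim_{l→∞} ψ_l(x) = (2π)^{-1/2}·∫ √(φ(q))·e^{iq(x-x*)} dq`. -/
theorem discretized_packet_large_interval_limit
    (xs : ℝ)
    (φ : ℝ → ℝ) (hφ0 : ∀ q : ℝ, 0 ≤ φ q) (hφint : ∫ q : ℝ, φ q = 1)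
    (hφmean : ∫ q : ℝ, q * φ q = 0)
    (hφ2 : MeasureTheory.Integrable (fun q : ℝ => q ^ 2 * φ q))
    (hφeven : ∀ q : ℝ, φ (-q) = φ q)
    (hφmax : ∀ q : ℝ, φ q ≤ φ 0)
    (hφmono : ∀ q q' : ℝ, |q| ≤ |q'| → φ q' ≤ φ q)
    (ψ : ℝ → ℝ → ℂ)
    (hψ : ∀ l : ℝ, 0 < l → ψ l = fun x : ℝ =>
      (((2 * l) ^ (-(1/2 : ℝ)) : ℝ) : ℂ) *
        ∑' k : ℤ, ((Real.sqrt (∫ q in (π / l * ((k : ℝ) - 1/2))..(π / l * ((k : ℝ) + 1/2)), φ q) : ℝ) : ℂ) *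
          Complex.exp (Complex.I * (π : ℂ) * (k : ℂ) * ((x : ℂ) - (xs : ℂ)) / (l : ℂ))) :
    ∀ x : ℝ, Tendsto (fun l : ℝ => ψ l x) atTop
      (𝓝 ((((2 * π) ^ (-(1/2 : ℝ)) : ℝ) : ℂ) *
        ∫ q : ℝ, ((Real.sqrt (φ q) : ℝ) : ℂ) *
          Complex.exp (Complex.I * (q : ℂ) * ((x : ℂ) - (xs : ℂ))))) := by
  intro x
  have hπ := Real.pi_pos
  have hφm : Measurable φ := phi_meas φ hφmono
  have hIφ : Integrable φ := by
    by_contra h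
    rw [integral_undef h] at hφint
    exact one_ne_zero hφint.symm
  have hg : Integrable (pg φ) := pg_int hφm hφ0 hφ2 hφeven hφmax
  set c : ℝ := x - xs with hc
  have hDCT : Tendsto (fun l : ℝ => ∫ q : ℝ, pF φ c l q) atTop
      (𝓝 (∫ q : ℝ, ((Real.sqrt (φ q) : ℝ) : ℂ) *
        Complex.exp (Complex.I * ((q : ℝ) : ℂ) * ((c : ℝ) : ℂ)))) := by
    apply tendsto_integral_filter_of_dominated_convergence (pg φ)
    · exact Filter.Eventually.of_forall fun l => (pF_meas φ c l).aestronglyMeasurable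
    · filter_upwards [eventually_ge_atTop π] with l hl
      exact Filter.Eventually.of_forall fun q => pF_bound hφ0 hφmono hIφ c hl q
    · exact hg
    · filter_upwards [phi_ae_good hφeven hφmono] with q hqc
      exact pF_tendsto hφ0 hφmono hIφ c hqc.1 hqc.2
  have htarget : Tendsto (fun l : ℝ =>
      (((2 * π) ^ (-(1/2 : ℝ)) : ℝ) : ℂ) * ∫ q : ℝ, pF φ c l q) atTop
      (𝓝 ((((2 * π) ^ (-(1/2 : ℝ)) : ℝ) : ℂ) *
        ∫ q : ℝ, ((Real.sqrt (φ q) : ℝ) : ℂ) *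
          Complex.exp (Complex.I * (q : ℂ) * ((x : ℂ) - (xs : ℂ))))) := by
    have heq : (fun q : ℝ => ((Real.sqrt (φ q) : ℝ) : ℂ) *
        Complex.exp (Complex.I * ((q : ℝ) : ℂ) * ((c : ℝ) : ℂ))) =
        fun q : ℝ => ((Real.sqrt (φ q) : ℝ) : ℂ) *
          Complex.exp (Complex.I * (q : ℂ) * ((x : ℂ) - (xs : ℂ))) := by
      funext q
      rw [hc]
      push_cast
      ring_nf
    rw [← heq]
    exact hDCT.const_mul _
  apply htarget.congr'
  filter_upwards [eventually_ge_atTop π] with l hl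
  have hl0 : 0 < l := lt_of_lt_of_le hπ hl
  rw [hψ l hl0]
  exact psi_eq hφ0 hφmono hIφ hg x xs hl
end
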